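/- arXiv:2403.10985 — 4 statements merged into one kernel-verified Lean document; each statement's English description precedes it below -/
import Mathlib

section
/- For every finite simple graph G, the supremum of growth rates over all *regular* distinguishable languages over V(G) equals the Shannon capacity Θ(G) (which is the supremum of growth rates over *all* distinguishable languages over V(G)). -/
open Filter
open scoped Computability

/-- A language `L` over the vertices of `G` is distinguishable if any two distinct
equal-length words differ at some position by two non-adjacent, non-equal symbols. -/
def Distinguishable {V : Type*} (G : SimpleGraph V) (L : Set (List V)) : Prop :=
  ∀ x ∈ L, ∀ y ∈ L, x.length = y.length → x ≠ y →
    ∃ (i : ℕ) (hx : i < x.length) (hy : i < y.length),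
      x.get ⟨i, hx⟩ ≠ y.get ⟨i, hy⟩ ∧ ¬ G.Adj (x.get ⟨i, hx⟩) (y.get ⟨i, hy⟩)

/-- The growth rate of a language: `limsup |L(n)|^(1/n)`. -/
noncomputable def growthRate {V : Type*} (L : Set (List V)) : ℝ :=
  Filter.limsup (fun n : ℕ =>
    ((Set.ncard {w ∈ L | w.length = n} : ℕ) : ℝ) ^ (1 / (n : ℝ))) Filter.atTop

/-- The `n`-fold strong graph product of `G` with itself. -/
def strongPow {V : Type*} (G : SimpleGraph V) (n : ℕ) : SimpleGraph (Fin n → V) where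
  Adj x y := x ≠ y ∧ ∀ i, x i = y i ∨ G.Adj (x i) (y i)
  symm := by
    constructor
    rintro x y ⟨hne, h⟩
    exact ⟨hne.symm, fun i => (h i).imp Eq.symm (fun h' => h'.symm)⟩
  loopless := by constructor; rintro x ⟨hne, _⟩; exact hne rfl

/-- The independence number of a graph. -/
noncomputable def indepNum {V : Type*} (G : SimpleGraph V) : ℕ :=
  sSup {k | ∃ s : Set V, (s.Pairwise fun a b => ¬ G.Adj a b) ∧ s.ncard = k}

/-- The Shannon (zero-error) capacity `Θ(G) = sup_n α(G^{⊠n})^{1/n}`. -/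
noncomputable def shannonCapacity {V : Type*} (G : SimpleGraph V) : ℝ :=
  ⨆ n : ℕ, ((indepNum (strongPow G (n + 1)) : ℝ)) ^ (1 / ((n : ℝ) + 1))

set_option linter.unusedSectionVars false

section Aux

variable {V : Type*} [Fintype V] {G : SimpleGraph V}

section Indep
variable {W : Type*} [Fintype W] (H : SimpleGraph W)

lemma indep_bddAbove :
    BddAbove {k | ∃ s : Set W, (s.Pairwise fun a b => ¬ H.Adj a b) ∧ s.ncard = k} := by
  refine ⟨Fintype.card W, ?_⟩
  rintro k ⟨s, -, rfl⟩
  simpa [Set.ncard_univ, Nat.card_eq_fintype_card] using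
    Set.ncard_le_ncard (Set.subset_univ s) (Set.finite_univ)

lemma ncard_le_indepNum {s : Set W} (hs : s.Pairwise fun a b => ¬ H.Adj a b) :
    s.ncard ≤ indepNum H :=
  le_csSup (indep_bddAbove H) ⟨s, hs, rfl⟩

lemma indepNum_le_card : indepNum H ≤ Fintype.card W := by
  refine csSup_le ⟨0, ∅, by simp⟩ ?_
  rintro k ⟨s, -, rfl⟩
  simpa [Set.ncard_univ, Nat.card_eq_fintype_card] using
    Set.ncard_le_ncard (Set.subset_univ s) (Set.finite_univ)

lemma exists_indep_set :
    ∃ s : Set W, (s.Pairwise fun a b => ¬ H.Adj a b) ∧ s.ncard = indepNum H := by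
  have hne : {k | ∃ s : Set W, (s.Pairwise fun a b => ¬ H.Adj a b) ∧ s.ncard = k}.Nonempty :=
    ⟨0, ∅, by simp⟩
  exact Nat.sSup_mem hne (indep_bddAbove H)

end Indep

lemma words_eq_image (L : Set (List V)) (n : ℕ) :
    {w ∈ L | w.length = n} = List.ofFn '' {v : Fin n → V | List.ofFn v ∈ L} := by
  ext w
  constructor
  · rintro ⟨hw, hl⟩
    subst hl
    exact ⟨w.get, by simpa [List.ofFn_get] using hw, List.ofFn_get w⟩
  · rintro ⟨v, hv, rfl⟩
    exact ⟨hv, by simp⟩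

lemma funs_indep {L : Set (List V)} (hL : Distinguishable G L) (n : ℕ) :
    ({v : Fin n → V | List.ofFn v ∈ L}).Pairwise fun a b => ¬ (strongPow G n).Adj a b := by
  intro a ha b hb hab ⟨_, hadj⟩
  have hlen : (List.ofFn a).length = (List.ofFn b).length := by simp
  obtain ⟨i, hx, hy, hne, hnadj⟩ := hL _ ha _ hb hlen (fun h => hab (List.ofFn_injective h))
  have hi : i < n := by simpa using hx
  have ha' : (List.ofFn a).get ⟨i, hx⟩ = a ⟨i, hi⟩ := by simp
  have hb' : (List.ofFn b).get ⟨i, hy⟩ = b ⟨i, hi⟩ := by simp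
  rw [ha', hb'] at hne hnadj
  rcases hadj ⟨i, hi⟩ with h | h
  · exact hne h
  · exact hnadj h

noncomputable def indepNumR (G : SimpleGraph V) (n : ℕ) : ℝ :=
  ((indepNum (strongPow G (n + 1)) : ℝ)) ^ (1 / ((n : ℝ) + 1))

lemma rpow_pow_inv (x : ℝ) (hx : 0 ≤ x) (n : ℕ) :
    ((x ^ (n+1)) : ℝ) ^ (1 / ((n:ℝ)+1)) = x := by
  rw [← Real.rpow_natCast x (n+1), ← Real.rpow_mul hx]
  push_cast
  rw [mul_one_div, div_self (by positivity), Real.rpow_one]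

lemma indepNumR_le_card (G : SimpleGraph V) (n : ℕ) :
    indepNumR G n ≤ (Fintype.card V : ℝ) := by
  have h1 : (indepNum (strongPow G (n+1)) : ℝ) ≤ ((Fintype.card V : ℝ) ^ (n+1)) := by
    have := indepNum_le_card (strongPow G (n+1))
    rw [Fintype.card_fun, Fintype.card_fin] at this
    exact_mod_cast this
  calc indepNumR G n ≤ ((Fintype.card V : ℝ) ^ (n+1)) ^ (1 / ((n:ℝ)+1)) :=
        Real.rpow_le_rpow (by positivity) h1 (by positivity)
    _ = _ := rpow_pow_inv _ (by positivity) n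

lemma shannon_bddAbove (G : SimpleGraph V) :
    BddAbove (Set.range fun n : ℕ => indepNumR G n) :=
  ⟨(Fintype.card V : ℝ), by rintro r ⟨n, rfl⟩; exact indepNumR_le_card G n⟩

lemma count_le_indepNum {L : Set (List V)} (hL : Distinguishable G L) (n : ℕ) :
    ({w ∈ L | w.length = n}).ncard ≤ indepNum (strongPow G n) := by
  rw [words_eq_image, Set.ncard_image_of_injective _ List.ofFn_injective]
  exact ncard_le_indepNum _ (funs_indep hL n)

lemma growthRate_le_shannon {L : Set (List V)} (hL : Distinguishable G L) :
    growthRate L ≤ shannonCapacity G := by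
  have hcb : IsCoboundedUnder (· ≤ ·) atTop (fun n : ℕ =>
      ((Set.ncard {w ∈ L | w.length = n} : ℕ) : ℝ) ^ (1 / (n : ℝ))) :=
    isCoboundedUnder_le_of_le atTop (x := 0) fun n => Real.rpow_nonneg (by positivity) _
  refine limsup_le_of_le hcb ?_
  filter_upwards [eventually_ge_atTop 1] with m hm
  obtain ⟨p, rfl⟩ : ∃ p, m = p + 1 := ⟨m - 1, by omega⟩
  have h1 : ((Set.ncard {w ∈ L | w.length = p + 1} : ℕ) : ℝ)
      ≤ (indepNum (strongPow G (p + 1)) : ℝ) := by exact_mod_cast count_le_indepNum hL (p + 1)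
  have h2 : ((Set.ncard {w ∈ L | w.length = p + 1} : ℕ) : ℝ) ^ (1 / ((p + 1 : ℕ) : ℝ))
      ≤ indepNumR G p := by
    have := Real.rpow_le_rpow (by positivity) h1
      (z := 1 / ((p + 1 : ℕ) : ℝ)) (by positivity)
    simpa [indepNumR, Nat.cast_add, Nat.cast_one] using this
  refine h2.trans ?_
  exact le_ciSup (shannon_bddAbove G) p

section DFAConstr
open scoped Classical
variable {V : Type*}

/-- DFA accepting the Kleene star of a set of blocks all of length `n+1`. -/
noncomputable def blockDFA (S : Set (List V)) (n : ℕ) :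
    DFA V (Option {w : List V // w.length ≤ n}) where
  step q a := q.bind fun p =>
    if h : p.1.length < n then some ⟨p.1 ++ [a], by simp; omega⟩
    else if p.1 ++ [a] ∈ S then some ⟨[], by simp⟩ else none
  start := some ⟨[], by simp⟩
  accept := {some ⟨[], by simp⟩}

variable (S : Set (List V)) (n : ℕ)

lemma blockDFA_none (x : List V) : (blockDFA S n).evalFrom none x = none := by
  induction x with
  | nil => rfl
  | cons a t ih =>
    show (blockDFA S n).evalFrom ((blockDFA S n).step none a) t = none
    have : (blockDFA S n).step none a = none := rfl
    rw [this]; exact ih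

lemma blockDFA_step (w : List V) (hw : w.length ≤ n) (a : V) :
    (blockDFA S n).step (some ⟨w, hw⟩) a =
      if h : w.length < n then some ⟨w ++ [a], by simp; omega⟩
      else if w ++ [a] ∈ S then some ⟨[], by simp⟩ else none := rfl

lemma blockDFA_block : ∀ (b : List V) (w : List V) (hw : w.length ≤ n),
    (w ++ b).length = n + 1 →
    (blockDFA S n).evalFrom (some ⟨w, hw⟩) b =
      if w ++ b ∈ S then (blockDFA S n).start else none := by
  intro b
  induction b with
  | nil => intro w hw hlen; simp at hlen; omega
  | cons a t ih =>
    intro w hw hlen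
    show (blockDFA S n).evalFrom ((blockDFA S n).step (some ⟨w, hw⟩) a) t = _
    rw [blockDFA_step]
    rcases eq_or_ne t [] with rfl | ht
    · have hwl : w.length = n := by simp at hlen ⊢; omega
      rw [dif_neg (by omega)]
      split_ifs with h1 <;> simp_all [blockDFA] <;> rfl
    · have hwl : w.length < n := by
        have := List.length_pos_iff.2 ht
        simp at hlen; omega
      rw [dif_pos hwl]
      have := ih (w ++ [a]) (by simp; omega) (by simpa using hlen)
      rw [this]
      simp
end DFAConstr

section DFA2
open scoped Classical
variable {V : Type*} (S : Language V) (n : ℕ)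

lemma blockDFA_back : ∀ (x : List V) (w : List V) (hw : w.length ≤ n),
    (blockDFA S n).evalFrom (some ⟨w, hw⟩) x = (blockDFA S n).start →
    (x = [] ∧ w = []) ∨ ∃ b t, x = b ++ t ∧ w ++ b ∈ S ∧
      (blockDFA S n).evalFrom (blockDFA S n).start t = (blockDFA S n).start ∧ t.length < x.length := by
  intro x
  induction x with
  | nil =>
    intro w hw h
    left
    refine ⟨rfl, ?_⟩
    have : (⟨w, hw⟩ : {w : List V // w.length ≤ n}) = ⟨[], by simp⟩ := by
      have h' : some ⟨w, hw⟩ = (blockDFA S n).start := h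
      simpa [blockDFA] using h'
    simpa using congrArg Subtype.val this
  | cons a t ih =>
    intro w hw h
    right
    replace h : (blockDFA S n).evalFrom ((blockDFA S n).step (some ⟨w, hw⟩) a) t
        = (blockDFA S n).start := h
    have h' := blockDFA_step S n w hw a
    rw [h'] at h
    by_cases h1 : w.length < n
    · rw [dif_pos h1] at h
      rcases ih (w ++ [a]) (by simp; omega) h with ⟨ht, habs⟩ | ⟨b, t', rfl, hmem, hrest, hlt⟩
      · simp at habs
      · exact ⟨a :: b, t', by simp, by simpa using hmem, hrest, by simp⟩
    · rw [dif_neg h1] at h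
      by_cases h2 : w ++ [a] ∈ S
      · split_ifs at h with h3
        swap; exact absurd h2 h3
        exact ⟨[a], t, rfl, h2, h, by simp⟩
      · split_ifs at h with h3
        exact absurd h3 h2
        rw [blockDFA_none S n t] at h
        exact absurd h (by simp [blockDFA])

lemma blockDFA_accepts (hS : ∀ w ∈ S, w.length = n + 1) :
    (blockDFA S n).accepts = S∗ := by
  ext x
  rw [DFA.mem_accepts]
  have hacc : ((blockDFA S n).eval x ∈ (blockDFA S n).accept)
      ↔ (blockDFA S n).eval x = (blockDFA S n).start := by
    simp [blockDFA, DFA.eval]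
  rw [hacc]
  constructor
  · -- accepted → in S∗
    have : ∀ m (x : List V), x.length ≤ m →
        (blockDFA S n).evalFrom (blockDFA S n).start x = (blockDFA S n).start →
        x ∈ S∗ := by
      intro m
      induction m with
      | zero =>
        intro x hx _
        have : x = [] := by simpa using List.length_eq_zero_iff.mp (by omega)
        subst this; exact Language.nil_mem_kstar S
      | succ m ih =>
        intro x hx h
        rcases blockDFA_back S n x [] (by simp) h with ⟨rfl, -⟩ | ⟨b, t, rfl, hmem, hrest, hlt⟩
        · exact Language.nil_mem_kstar S
        · have hb : b ∈ S := by simpa using hmem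
          have ht : t ∈ S∗ := ih t (by simp only [List.length_append] at hx hlt ⊢; omega) hrest
          rw [Language.mem_kstar] at ht ⊢
          obtain ⟨L, rfl, hL⟩ := ht
          refine ⟨b :: L, by simp, fun y hy => ?_⟩
          rcases List.mem_cons.mp hy with rfl | hy'
          exacts [hb, hL y hy']
    exact fun h => this x.length x le_rfl h
  · -- in S∗ → accepted
    rw [Language.mem_kstar]
    rintro ⟨L, rfl, hL⟩
    clear hacc
    induction L with
    | nil => rfl
    | cons b L ihL =>
      have hb : b ∈ S := hL b (by simp)
      show (blockDFA S n).evalFrom (blockDFA S n).start (b ++ L.flatten) = _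
      rw [DFA.evalFrom_of_append]
      have hbl : (([] : List V) ++ b).length = n + 1 := by simpa using hS b hb
      have := blockDFA_block S n b [] (by simp) hbl
      rw [show ((blockDFA S n).start = some ⟨[], by simp⟩) from rfl, this]
      split_ifs with h3
      swap; exact absurd (by rw [List.nil_append]; exact hb) h3
      exact ihL (fun y hy => hL y (by simp [hy]))

end DFA2


section Dist
variable {V : Type*} {G : SimpleGraph V}

/-- The two words have a distinguishing position. -/
def DP (G : SimpleGraph V) (x y : List V) : Prop :=
  ∃ (i : ℕ) (hx : i < x.length) (hy : i < y.length),
    x.get ⟨i, hx⟩ ≠ y.get ⟨i, hy⟩ ∧ ¬ G.Adj (x.get ⟨i, hx⟩) (y.get ⟨i, hy⟩)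

lemma DP.append_left {x₁ y₁ : List V} (x₂ y₂ : List V) (h : DP G x₁ y₁) :
    DP G (x₁ ++ x₂) (y₁ ++ y₂) := by
  obtain ⟨i, hx, hy, hne, hnadj⟩ := h
  refine ⟨i, by simp [List.length_append]; omega, by simp [List.length_append]; omega, ?_⟩
  simp only [List.get_eq_getElem] at *
  rw [List.getElem_append_left hx, List.getElem_append_left hy]
  exact ⟨hne, hnadj⟩

lemma DP.append_right {x₁ : List V} {x₂ y₂ : List V} (h : DP G x₂ y₂) :
    DP G (x₁ ++ x₂) (x₁ ++ y₂) := by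
  obtain ⟨i, hx, hy, hne, hnadj⟩ := h
  refine ⟨x₁.length + i, by simp [List.length_append]; omega,
    by simp [List.length_append]; omega, ?_⟩
  simp only [List.get_eq_getElem] at *
  rw [List.getElem_append_right (by omega), List.getElem_append_right (by omega)]
  simpa using ⟨hne, hnadj⟩

lemma blocks_dp {n : ℕ} {s : Set (Fin (n+1) → V)}
    (hs : s.Pairwise fun a b => ¬ (strongPow G (n+1)).Adj a b) :
    ∀ (xs ys : List (List V)), (∀ b ∈ xs, b ∈ List.ofFn '' s) → (∀ b ∈ ys, b ∈ List.ofFn '' s) →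
      xs.length = ys.length → xs.flatten ≠ ys.flatten → DP G xs.flatten ys.flatten := by
  intro xs
  induction xs with
  | nil =>
    intro ys _ _ hlen hne
    obtain rfl : ys = [] := List.length_eq_zero_iff.mp hlen.symm
    simp at hne
  | cons a xs ih =>
    rintro (_ | ⟨b, ys⟩) hx hy hlen hne
    · simp at hlen
    · simp only [List.flatten_cons]
      rcases eq_or_ne a b with rfl | hab
      · have : xs.flatten ≠ ys.flatten := fun h => hne (by simp [h])
        exact DP.append_right (ih ys (fun c hc => hx c (by simp [hc]))
          (fun c hc => hy c (by simp [hc])) (by simpa using hlen) this)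
      · obtain ⟨v, hv, rfl⟩ := hx a (by simp)
        obtain ⟨u, hu, rfl⟩ := hy b (by simp)
        have hvu : v ≠ u := fun h => hab (by rw [h])
        have hnadj := hs hv hu hvu
        simp only [strongPow, ne_eq] at hnadj
        push_neg at hnadj
        obtain ⟨i, hi1, hi2⟩ := hnadj hvu
        refine DP.append_left _ _ ⟨i, by simpa using i.isLt, by simpa using i.isLt, ?_⟩
        simpa only [List.get_eq_getElem, List.getElem_ofFn, Fin.eta] using ⟨hi1, hi2⟩

/-- The block language of an independent set. -/
def ofFnLang {n : ℕ} (s : Set (Fin n → V)) : Language V := List.ofFn '' s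

lemma kstar_distinguishable {n : ℕ} {s : Set (Fin (n+1) → V)}
    (hs : s.Pairwise fun a b => ¬ (strongPow G (n+1)).Adj a b) :
    Distinguishable G (((ofFnLang s)∗ : Language V) : Set (List V)) := by
  intro x hx y hy hlen hne
  change x ∈ ((ofFnLang s)∗ : Language V) at hx
  change y ∈ ((ofFnLang s)∗ : Language V) at hy
  rw [Language.mem_kstar] at hx hy
  simp only [ofFnLang] at hx hy
  obtain ⟨xs, rfl, hxs⟩ := hx
  obtain ⟨ys, rfl, hys⟩ := hy
  have hlx : ∀ zs : List (List V), (∀ b ∈ zs, b ∈ List.ofFn '' s) →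
      zs.flatten.length = (n+1) * zs.length := by
    intro zs hzs
    induction zs with
    | nil => simp
    | cons c zs ihz =>
      have hc : c.length = n + 1 := by
        obtain ⟨v, _, rfl⟩ := hzs c (by simp); simp
      simp only [List.flatten_cons, List.length_append, List.length_cons,
        ihz (fun b hb => hzs b (by simp [hb])), hc]
      ring
  have hlen' : xs.length = ys.length := by
    have h1 := hlx xs hxs
    have h2 := hlx ys hys
    rw [h1, h2] at hlen
    exact Nat.eq_of_mul_eq_mul_left (by omega) hlen
  exact blocks_dp hs xs ys hxs hys hlen' hne

end Dist

section Count
variable {V : Type*} [Fintype V] {G : SimpleGraph V}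

lemma flatten_inj {n : ℕ} : ∀ (l₁ l₂ : List (List V)),
    (∀ b ∈ l₁, b.length = n+1) → (∀ b ∈ l₂, b.length = n+1) →
    l₁.length = l₂.length → l₁.flatten = l₂.flatten → l₁ = l₂ := by
  intro l₁
  induction l₁ with
  | nil =>
    intro l₂ _ _ hlen _
    exact (List.length_eq_zero_iff.mp hlen.symm).symm
  | cons a l₁ ih =>
    rintro (_ | ⟨b, l₂⟩) h1 h2 hlen hfl
    · simp at hlen
    · simp only [List.flatten_cons] at hfl
      have hab : a = b ∧ l₁.flatten = l₂.flatten :=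
        List.append_inj hfl (by rw [h1 a (by simp), h2 b (by simp)])
      obtain ⟨rfl, h⟩ := hab
      rw [ih l₂ (fun c hc => h1 c (by simp [hc])) (fun c hc => h2 c (by simp [hc]))
        (by simpa using hlen) h]

lemma count_kstar_ge {n : ℕ} (s : Set (Fin (n+1) → V)) (k : ℕ) :
    s.ncard ^ k ≤ ({w ∈ (((ofFnLang s)∗ : Language V) : Set (List V)) |
      w.length = k * (n+1)}).ncard := by
  classical
  set g : (Fin k → ↥s) → List V :=
    fun f => (List.ofFn fun j => List.ofFn ((f j) : Fin (n+1) → V)).flatten with hg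
  have hginj : Function.Injective g := by
    intro f f' hff
    have hl := flatten_inj (n := n) (List.ofFn fun j => List.ofFn ((f j) : Fin (n+1) → V))
      (List.ofFn fun j => List.ofFn ((f' j) : Fin (n+1) → V))
      (by intro b hb; simp only [List.mem_ofFn] at hb; obtain ⟨j, rfl⟩ := hb; simp)
      (by intro b hb; simp only [List.mem_ofFn] at hb; obtain ⟨j, rfl⟩ := hb; simp)
      (by simp) hff
    funext j
    have := congrFun (List.ofFn_injective hl) j
    exact Subtype.ext (List.ofFn_injective this)
  have himg : Set.range g ⊆ {w ∈ (((ofFnLang s)∗ : Language V) : Set (List V)) |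
      w.length = k * (n+1)} := by
    rintro _ ⟨f, rfl⟩
    constructor
    · refine Language.join_mem_kstar ?_
      intro y hy
      simp only [List.mem_ofFn] at hy
      obtain ⟨j, rfl⟩ := hy
      exact ⟨(f j), (f j).2, rfl⟩
    · simp [g, List.length_flatten, List.map_ofFn, Function.comp_def, Finset.sum_const,
        mul_comm]
  calc s.ncard ^ k = Nat.card (Fin k → ↥s) := by
        rw [Nat.card_pi, Finset.prod_const, Finset.card_univ, Fintype.card_fin,
          Nat.card_coe_set_eq]
    _ = (Set.range g).ncard := by
        rw [← Set.ncard_univ, ← Set.image_univ, Set.ncard_image_of_injective _ hginj]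
    _ ≤ _ := Set.ncard_le_ncard himg ((List.finite_length_eq V (k * (n+1))).subset (by
        rintro w ⟨-, hw⟩; exact hw))

end Count

section Growth
variable {V : Type*} [Fintype V] {G : SimpleGraph V}

lemma rpow_pow_block (x : ℝ) (hx : 0 ≤ x) (n k : ℕ) (hk : 0 < k) :
    ((x ^ k) : ℝ) ^ (1 / ((k * (n+1) : ℕ) : ℝ)) = x ^ (1 / ((n:ℝ)+1)) := by
  rw [← Real.rpow_natCast x k, ← Real.rpow_mul hx]
  congr 1
  have : ((k:ℝ)) ≠ 0 := by positivity
  push_cast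
  field_simp

lemma count_le_pow (L : Set (List V)) (m : ℕ) :
    ({w ∈ L | w.length = m}).ncard ≤ Fintype.card V ^ m := by
  have hsub : {w ∈ L | w.length = m} ⊆ {l : List V | l.length = m} := fun w hw => hw.2
  have h2 : ({l : List V | l.length = m}).ncard = Fintype.card V ^ m := by
    have := words_eq_image (Set.univ : Set (List V)) m
    have heq : {l : List V | l.length = m} = {w ∈ (Set.univ : Set (List V)) | w.length = m} := by
      ext w; simp
    rw [heq, this, Set.ncard_image_of_injective _ List.ofFn_injective]
    have : {v : Fin m → V | List.ofFn v ∈ (Set.univ : Set (List V))} = Set.univ := by ext; simp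
    rw [this, Set.ncard_univ]
    simp [Nat.card_eq_fintype_card]
  rw [← h2]
  exact Set.ncard_le_ncard hsub (List.finite_length_eq V m)

lemma seq_bounded (L : Set (List V)) (m : ℕ) :
    ((Set.ncard {w ∈ L | w.length = m} : ℕ) : ℝ) ^ (1 / (m : ℝ))
      ≤ max 1 (Fintype.card V : ℝ) := by
  rcases Nat.eq_zero_or_pos m with rfl | hm
  · simp
  · obtain ⟨p, rfl⟩ : ∃ p, m = p + 1 := ⟨m - 1, by omega⟩
    have h1 : ((Set.ncard {w ∈ L | w.length = p+1} : ℕ) : ℝ)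
        ≤ ((Fintype.card V : ℝ) ^ (p+1)) := by exact_mod_cast count_le_pow L (p+1)
    refine le_trans ?_ (le_max_right _ _)
    calc ((Set.ncard {w ∈ L | w.length = p+1} : ℕ) : ℝ) ^ (1 / ((p+1 : ℕ) : ℝ))
        ≤ ((Fintype.card V : ℝ) ^ (p+1)) ^ (1 / ((p+1 : ℕ) : ℝ)) :=
          Real.rpow_le_rpow (by positivity) h1 (by positivity)
      _ = (Fintype.card V : ℝ) := by
          rw [show ((p+1:ℕ):ℝ) = (p:ℝ)+1 by push_cast; ring]
          exact rpow_pow_inv _ (by positivity) p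
  
lemma growthRate_kstar_ge {n : ℕ} (s : Set (Fin (n+1) → V)) :
    ((s.ncard : ℝ)) ^ (1 / ((n:ℝ)+1))
      ≤ growthRate (((ofFnLang s)∗ : Language V) : Set (List V)) := by
  set L : Set (List V) := (((ofFnLang s)∗ : Language V) : Set (List V)) with hL
  refine le_limsup_of_frequently_le ?_ ⟨max 1 (Fintype.card V : ℝ), by
    rw [eventually_map]; exact Eventually.of_forall fun m => seq_bounded L m⟩
  rw [frequently_atTop]
  intro N
  refine ⟨(N+1) * (n+1), le_trans (Nat.le_succ N) (Nat.le_mul_of_pos_right _ (by omega)), ?_⟩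
  have hcount := count_kstar_ge s (N+1)
  have h1 : ((s.ncard ^ (N+1) : ℕ) : ℝ)
      ≤ ((Set.ncard {w ∈ L | w.length = (N+1)*(n+1)} : ℕ) : ℝ) := by
    exact_mod_cast hcount
  calc ((s.ncard : ℝ)) ^ (1 / ((n:ℝ)+1))
      = ((s.ncard : ℝ) ^ (N+1)) ^ (1 / (((N+1) * (n+1) : ℕ) : ℝ)) :=
        (rpow_pow_block _ (by positivity) n (N+1) (by omega)).symm
    _ ≤ _ := by
        refine Real.rpow_le_rpow (by positivity) ?_ (by positivity)
        push_cast at h1 ⊢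
        exact h1

end Growth


end Aux

section Witness
variable {V : Type*} [Fintype V]

lemma exists_witness (G : SimpleGraph V) (n : ℕ) :
    ∃ L : Language V, L.IsRegular ∧ Distinguishable G L ∧
      indepNumR G n ≤ growthRate (L : Set (List V)) := by
  obtain ⟨s, hs, hcard⟩ := exists_indep_set (strongPow G (n+1))
  refine ⟨(ofFnLang s)∗, ?_, kstar_distinguishable hs, ?_⟩
  · have hSlen : ∀ w ∈ (ofFnLang s : Language V), w.length = n+1 := by
      rintro w ⟨v, -, rfl⟩; simp
    haveI : Finite {w : List V // w.length ≤ n} := (List.finite_length_le V n).to_subtype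
    letI : Fintype {w : List V // w.length ≤ n} := Fintype.ofFinite _
    letI : Fintype (Option {w : List V // w.length ≤ n}) := instFintypeOption
    refine ⟨Fin (Fintype.card (Option {w : List V // w.length ≤ n})), inferInstance,
      DFA.reindex (Fintype.equivFin _) (blockDFA (ofFnLang s) n), ?_⟩
    rw [DFA.accepts_reindex]
    exact blockDFA_accepts (ofFnLang s) n hSlen
  · have h := growthRate_kstar_ge s
    rw [hcard] at h
    exact h

end Witness

/-- the supremum of growth rates of regular distinguishable languages equals
the Shannon capacity, which is also the supremum of growth rates over all
distinguishable languages. -/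
theorem regular_distinguishable_sup_growthRate_eq_shannonCapacity
    {V : Type*} [Fintype V] (G : SimpleGraph V) :
    sSup {r : ℝ | ∃ L : Language V, L.IsRegular ∧ Distinguishable G L ∧ growthRate L = r}
      = shannonCapacity G ∧
    sSup {r : ℝ | ∃ L : Set (List V), Distinguishable G L ∧ growthRate L = r}
      = shannonCapacity G := by
  set A := {r : ℝ | ∃ L : Language V, L.IsRegular ∧ Distinguishable G L ∧ growthRate L = r}
  set B := {r : ℝ | ∃ L : Set (List V), Distinguishable G L ∧ growthRate L = r}
  have hBle : ∀ r ∈ B, r ≤ shannonCapacity G := by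
    rintro r ⟨L, hd, rfl⟩
    exact growthRate_le_shannon hd
  have hAB : A ⊆ B := by
    rintro r ⟨L, -, hd, hr⟩
    exact ⟨L, hd, hr⟩
  have hAle : ∀ r ∈ A, r ≤ shannonCapacity G := fun r hr => hBle r (hAB hr)
  have hW : ∀ n : ℕ, ∃ r ∈ A, indepNumR G n ≤ r := by
    intro n
    obtain ⟨L, hreg, hd, hge⟩ := exists_witness G n
    exact ⟨growthRate (L : Set (List V)), ⟨L, hreg, hd, rfl⟩, hge⟩
  have hAne : A.Nonempty := by
    obtain ⟨r, hr, -⟩ := hW 0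
    exact ⟨r, hr⟩
  have hBne : B.Nonempty := ⟨_, hAB hAne.choose_spec⟩
  have hcap : shannonCapacity G = ⨆ n : ℕ, indepNumR G n := rfl
  have hgeA : shannonCapacity G ≤ sSup A := by
    rw [hcap]
    refine ciSup_le fun n => ?_
    obtain ⟨r, hrA, hge⟩ := hW n
    exact hge.trans (le_csSup ⟨shannonCapacity G, hAle⟩ hrA)
  have hgeB : shannonCapacity G ≤ sSup B := by
    rw [hcap]
    refine ciSup_le fun n => ?_
    obtain ⟨r, hrA, hge⟩ := hW n
    exact hge.trans (le_csSup ⟨shannonCapacity G, hBle⟩ (hAB hrA))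
  exact ⟨le_antisymm (csSup_le hAne hAle) hgeA, le_antisymm (csSup_le hBne hBle) hgeB⟩
end

section
/- Let D be a DFA over alphabet V(G) with d states, all reachable from the initial state, with exactly one absorbing state s_abs which is rejecting, and whose remaining d−1 states form a single strongly connected component containing at least one accepting state. Let R be the (d−1)×(d−1) nonnegative integer matrix indexed by the non-absorbing states with R_{s,s'} = #{ x ∈ V(G) : T(s,x) = s' }. Then the growth rate of the language recognized by D equals the spectral radius of R (its largest real eigenvalue). -/
open Filter

/-- A state of a DFA is absorbing if no input symbol ever leaves it. -/
def IsAbsorbing {α σ : Type*} (M : DFA α σ) (s : σ) : Prop := ∀ a, M.step s a = s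

/-- State `t` is reachable from state `s` in the DFA `M`. -/
def Reaches {α σ : Type*} (M : DFA α σ) (s t : σ) : Prop :=
  Relation.ReflTransGen (fun p q => ∃ a, M.step p a = q) s t


set_option linter.unusedSectionVars false
set_option linter.unnecessarySeqFocus false
set_option maxHeartbeats 1000000
open Matrix Filter
open scoped NNReal ENNReal Topology

section Counting
variable {V σ : Type*} [Fintype V] [Fintype σ] [DecidableEq σ] (M : DFA V σ)

/-- number of words of length `n` carrying state `s` to state `t`. -/
noncomputable def cnt (n : ℕ) (s t : σ) : ℕ :=
  Nat.card {w : Fin n → V // M.evalFrom s (List.ofFn w) = t}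

theorem cnt_zero (s t : σ) : cnt M 0 s t = if s = t then 1 else 0 := by
  classical
  rw [cnt]
  split_ifs with h
  · subst h
    rw [Nat.card_eq_one_iff_unique]
    constructor
    · constructor
      rintro ⟨w, hw⟩ ⟨w', hw'⟩
      ext i
      exact absurd i.2 (Nat.not_lt_zero _)
    · exact ⟨⟨finZeroElim, rfl⟩⟩
  · have : IsEmpty {w : Fin 0 → V // M.evalFrom s (List.ofFn w) = t} := by
      constructor; rintro ⟨w, hw⟩; simp [List.ofFn_zero] at hw; exact h hw
    exact Nat.card_of_isEmpty

/-- splitting off the first letter -/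
noncomputable def cntEquiv (n : ℕ) (s t : σ) :
    {w : Fin (n + 1) → V // M.evalFrom s (List.ofFn w) = t} ≃
      Σ u : σ, {x : V // M.step s x = u} × {w : Fin n → V // M.evalFrom u (List.ofFn w) = t} where
  toFun w := ⟨M.step s (w.1 0), ⟨w.1 0, rfl⟩, ⟨Fin.tail w.1, by
    have := w.2
    rw [List.ofFn_succ] at this
    exact this⟩⟩
  invFun p := ⟨Fin.cons p.2.1.1 p.2.2.1, by
    rw [List.ofFn_succ]
    simp only [Fin.cons_zero, Fin.tail_cons, Fin.cons_succ]
    have h1 : M.step s p.2.1.1 = p.1 := p.2.1.2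
    have h2 := p.2.2.2
    show M.evalFrom (M.step s p.2.1.1) (List.ofFn fun i => p.2.2.1 i) = t
    rw [h1]; exact h2⟩
  left_inv w := Subtype.ext (Fin.cons_self_tail w.1)
  right_inv := by
    rintro ⟨u, ⟨x, hx⟩, ⟨w, hw⟩⟩
    subst hx
    simp only [Fin.cons_zero, Fin.tail_cons]
    rfl

theorem cnt_succ (n : ℕ) (s t : σ) :
    cnt M (n + 1) s t = ∑ u : σ, (Nat.card {x : V // M.step s x = u}) * cnt M n u t := by
  classical
  rw [cnt, Nat.card_congr (cntEquiv M n s t), Nat.card_eq_fintype_card, Fintype.card_sigma]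
  congr 1
  ext u
  rw [Fintype.card_prod, cnt, Nat.card_eq_fintype_card, Nat.card_eq_fintype_card]


theorem evalFrom_absorb {s : σ} (hs : ∀ a, M.step s a = s) :
    ∀ w : List V, M.evalFrom s w = s := by
  intro w
  induction w with
  | nil => rfl
  | cons a w ih =>
      show M.evalFrom (M.step s a) w = s
      rw [hs a]; exact ih

theorem cnt_absorb {sabs : σ} (hs : ∀ a, M.step sabs a = sabs) {t : σ} (ht : t ≠ sabs) (n : ℕ) :
    cnt M n sabs t = 0 := by
  have : IsEmpty {w : Fin n → V // M.evalFrom sabs (List.ofFn w) = t} := by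
    constructor; rintro ⟨w, hw⟩
    rw [evalFrom_absorb M hs] at hw
    exact ht hw.symm
  exact Nat.card_of_isEmpty

/-- the reduced (natural-number) transition-count matrix on non-absorbing states -/
noncomputable def redMat (sabs : σ) : Matrix {s : σ // s ≠ sabs} {s : σ // s ≠ sabs} ℕ :=
  fun s t => Nat.card {x : V // M.step s.1 x = t.1}


theorem cnt_eq_pow (sabs : σ) (habs : ∀ a, M.step sabs a = sabs) :
    ∀ (n : ℕ) (s t : {s : σ // s ≠ sabs}), cnt M n s.1 t.1 = (redMat M sabs ^ n) s t := by
  intro n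
  induction n with
  | zero =>
      intro s t
      rw [cnt_zero M, pow_zero, Matrix.one_apply]
      simp [Subtype.ext_iff]
  | succ n ih =>
      intro s t
      rw [cnt_succ M, pow_succ', Matrix.mul_apply]
      have hsplit := Finset.sum_erase_add Finset.univ
        (fun u : σ => (Nat.card {x : V // M.step s.1 x = u}) * cnt M n u t.1)
        (Finset.mem_univ sabs)
      rw [← hsplit]
      beta_reduce
      rw [cnt_absorb M habs t.2, mul_zero, add_zero]
      rw [Finset.sum_subtype (p := fun u : σ => u ≠ sabs) (Finset.univ.erase sabs)
        (fun u => by simp [Finset.mem_erase]) 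
        (fun u : σ => (Nat.card {x : V // M.step s.1 x = u}) * cnt M n u t.1)]
      refine Finset.sum_congr rfl fun u _ => ?_
      rw [ih u t]
      rfl


theorem cnt_pos {s t : σ} {w : List V} (h : M.evalFrom s w = t) :
    1 ≤ cnt M (w.length) s t := by
  have : Nonempty {u : Fin w.length → V // M.evalFrom s (List.ofFn u) = t} :=
    ⟨⟨w.get, by rw [List.ofFn_get]; exact h⟩⟩
  exact Nat.card_pos

theorem reaches_word {s t : σ} (h : Relation.ReflTransGen (fun p q => ∃ a, M.step p a = q) s t) :
    ∃ w : List V, M.evalFrom s w = t := by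
  induction h with
  | refl => exact ⟨[], rfl⟩
  | tail _ hst ih =>
      obtain ⟨w, hw⟩ := ih
      obtain ⟨a, ha⟩ := hst
      exact ⟨w ++ [a], by rw [M.evalFrom_append_singleton, hw, ha]⟩

theorem cnt_le (n : ℕ) (s t : σ) : cnt M n s t ≤ Fintype.card V ^ n := by
  classical
  calc cnt M n s t ≤ Nat.card (Fin n → V) := by
        rw [cnt, Nat.card_eq_fintype_card, Nat.card_eq_fintype_card]
        exact Fintype.card_subtype_le _
    _ = Fintype.card V ^ n := by
        rw [Nat.card_eq_fintype_card, Fintype.card_fun, Fintype.card_fin]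

theorem ncard_accepts [DecidablePred (· ∈ M.accept)] (n : ℕ) :
    {w ∈ M.accepts | w.length = n}.ncard
      = ∑ t : {t : σ // t ∈ M.accept}, cnt M n M.start t.1 := by
  classical
  rw [← Nat.card_coe_set_eq]
  have e1 : ↥{w ∈ M.accepts | w.length = n}
      ≃ {w : Fin n → V // M.evalFrom M.start (List.ofFn w) ∈ M.accept} := by
    refine Equiv.trans (Equiv.subtypeEquiv (Equiv.refl (List V)) ?_)
      (Equiv.trans ((Equiv.subtypeSubtypeEquivSubtypeInter (fun l : List V => l.length = n)
        (fun l => M.evalFrom M.start l ∈ M.accept)).symm) ?_)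
    · intro l
      show l ∈ M.accepts ∧ l.length = n ↔ _
      exact and_comm
    · refine Equiv.subtypeEquiv (Equiv.vectorEquivFin V n) fun v => ?_
      have hv : List.ofFn ((Equiv.vectorEquivFin V n) v) = v.1 := by
        show List.ofFn (List.Vector.get v) = _
        have h2 := congrArg Subtype.val (List.Vector.ofFn_get v)
        rwa [show (List.Vector.ofFn (List.Vector.get v)).1
          = List.ofFn (List.Vector.get v) from List.Vector.toList_ofFn _] at h2
      exact Iff.of_eq (congrArg (· ∈ M.accept) (congrArg (M.evalFrom M.start) hv)).symm
  have e2 : {w : Fin n → V // M.evalFrom M.start (List.ofFn w) ∈ M.accept}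
      ≃ Σ t : {t : σ // t ∈ M.accept},
          {w : Fin n → V // M.evalFrom M.start (List.ofFn w) = t.1} := by
    refine Equiv.trans (Equiv.sigmaFiberEquiv
      (fun w : {w : Fin n → V // M.evalFrom M.start (List.ofFn w) ∈ M.accept} =>
        (⟨M.evalFrom M.start (List.ofFn w.1), w.2⟩ : {t : σ // t ∈ M.accept}))).symm
      (Equiv.sigmaCongrRight fun t => ?_)
    exact {
      toFun := fun x => ⟨x.1.1, congrArg Subtype.val x.2⟩
      invFun := fun w => ⟨⟨w.1, by rw [w.2]; exact t.2⟩, Subtype.ext w.2⟩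
      left_inv := fun x => by ext : 2 <;> rfl
      right_inv := fun w => rfl }
  rw [Nat.card_congr (e1.trans e2), Nat.card_eq_fintype_card, Fintype.card_sigma]
  refine Finset.sum_congr rfl fun t _ => ?_
  rw [cnt, Nat.card_eq_fintype_card]


end Counting
set_option linter.unusedSectionVars false
open Matrix Filter
open scoped NNReal ENNReal Topology

section Perron
variable {ι : Type*} [Fintype ι] [DecidableEq ι] [Nonempty ι]

attribute [local instance] Matrix.linftyOpNormedAddCommGroup Matrix.linftyOpNormedRing
  Matrix.linftyOpNormedAlgebra

noncomputable instance : CompleteSpace (Matrix ι ι ℂ) :=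
  inferInstance

/-- complexification of a real matrix -/
noncomputable def cm (B : Matrix ι ι ℝ) : Matrix ι ι ℂ :=
  Complex.ofRealHom.mapMatrix B

theorem cm_pow (B : Matrix ι ι ℝ) (n : ℕ) : cm (B ^ n) = (cm B) ^ n := by
  simp [cm, map_pow]

theorem entry_le_norm_cm {B : Matrix ι ι ℝ} (hB : ∀ i j, 0 ≤ B i j) (i j : ι) :
    B i j ≤ ‖cm B‖ := by
  rw [Matrix.linfty_opNorm_def]
  have h1 : (‖(cm B) i j‖₊ : ℝ≥0) ≤ ∑ k, ‖(cm B) i k‖₊ :=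
    Finset.single_le_sum (f := fun k => ‖(cm B) i k‖₊) (fun k _ => by positivity) (Finset.mem_univ j)
  have h2 : (∑ k, ‖(cm B) i k‖₊ : ℝ≥0) ≤ Finset.univ.sup fun i => ∑ j, ‖(cm B) i j‖₊ :=
    Finset.le_sup (f := fun i => ∑ j, ‖(cm B) i j‖₊) (Finset.mem_univ i)
  have h3 : ‖(cm B) i j‖ = B i j := by
    show ‖(B i j : ℂ)‖ = B i j
    rw [Complex.norm_real]; exact Real.norm_of_nonneg (hB i j)
  calc B i j = ‖(cm B) i j‖ := h3.symm
    _ = ((‖(cm B) i j‖₊ : ℝ≥0) : ℝ) := rfl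
    _ ≤ _ := by exact_mod_cast h1.trans h2

theorem norm_cm_le_sum {B : Matrix ι ι ℝ} (hB : ∀ i j, 0 ≤ B i j) :
    ‖cm B‖ ≤ ∑ i, ∑ j, B i j := by
  rw [Matrix.linfty_opNorm_def]
  have key : (Finset.univ.sup fun i => ∑ j, ‖(cm B) i j‖₊ : ℝ≥0)
      ≤ ∑ i, ∑ j, ‖(cm B) i j‖₊ := by
    refine Finset.sup_le fun i _ => Finset.single_le_sum
      (f := fun i => ∑ j, ‖(cm B) i j‖₊) (fun k _ => by positivity) (Finset.mem_univ i)
  have h3 : ∀ i j, ‖(cm B) i j‖ = B i j := by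
    intro i j
    show ‖(B i j : ℂ)‖ = B i j
    rw [Complex.norm_real]; exact Real.norm_of_nonneg (hB i j)
  calc ((Finset.univ.sup fun i => ∑ j, ‖(cm B) i j‖₊ : ℝ≥0) : ℝ)
      ≤ ((∑ i, ∑ j, ‖(cm B) i j‖₊ : ℝ≥0) : ℝ) := by exact_mod_cast key
    _ = ∑ i, ∑ j, B i j := by
      rw [NNReal.coe_sum]
      refine Finset.sum_congr rfl fun i _ => ?_
      rw [NNReal.coe_sum]
      exact Finset.sum_congr rfl fun j _ => (coe_nnnorm _).trans (h3 i j)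

end Perron

section Perron2
variable {ι : Type*} [Fintype ι] [DecidableEq ι] [Nonempty ι]

attribute [local instance] Matrix.linftyOpNormedAddCommGroup Matrix.linftyOpNormedRing
  Matrix.linftyOpNormedAlgebra

theorem tendsto_rpow_one_div_natCast {c : ℝ} (hc : 0 < c) :
    Tendsto (fun n : ℕ => c ^ (1 / (n : ℝ))) atTop (𝓝 1) := by
  have h0 : Tendsto (fun n : ℕ => Real.log c * (1 / (n : ℝ))) atTop (𝓝 (Real.log c * 0)) :=
    (tendsto_one_div_atTop_nhds_zero_nat).const_mul _
  have := (Real.continuous_exp.tendsto _).comp h0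
  rw [mul_zero, Real.exp_zero] at this
  refine this.congr fun n => ?_
  rw [Function.comp_apply, ← Real.rpow_def_of_pos hc]

theorem pow_entry_nonneg {B : Matrix ι ι ℝ} (hB : ∀ i j, 0 ≤ B i j) (n : ℕ) :
    ∀ i j, 0 ≤ (B ^ n) i j := by
  induction n with
  | zero => intro i j; rw [pow_zero, Matrix.one_apply]; positivity
  | succ n ih =>
      intro i j
      rw [pow_succ, Matrix.mul_apply]
      exact Finset.sum_nonneg fun k _ => mul_nonneg (ih i k) (hB k j)

theorem tendsto_sum_pow_rpow {B : Matrix ι ι ℝ} (hB : ∀ i j, 0 ≤ B i j) :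
    Tendsto (fun n : ℕ => (∑ i, ∑ j, (B ^ n) i j) ^ (1 / (n : ℝ))) atTop
      (𝓝 (spectralRadius ℂ (cm B)).toReal) := by
  set ρ := (spectralRadius ℂ (cm B)).toReal with hρ
  have hfin : spectralRadius ℂ (cm B) ≠ ⊤ :=
    ((spectrum.spectralRadius_le_nnnorm (𝕜 := ℂ) (cm B)).trans_lt ENNReal.coe_lt_top).ne
  have hG := spectrum.pow_norm_pow_one_div_tendsto_nhds_spectralRadius (cm B)
  have hGr : Tendsto (fun n : ℕ => ‖(cm B) ^ n‖ ^ (1 / (n : ℝ))) atTop (𝓝 ρ) := by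
    have h2 := (ENNReal.tendsto_toReal hfin).comp hG
    refine h2.congr fun n => ?_
    rw [Function.comp_apply, ENNReal.toReal_ofReal (Real.rpow_nonneg (norm_nonneg _) _)]
  set c2 : ℝ := (Fintype.card ι : ℝ) * Fintype.card ι with hc2
  have hc2pos : 0 < c2 := by
    have := Fintype.card_pos (α := ι); positivity
  have hupper : ∀ n : ℕ, (∑ i, ∑ j, (B ^ n) i j) ≤ c2 * ‖(cm B) ^ n‖ := by
    intro n
    have hent : ∀ i j : ι, (B ^ n) i j ≤ ‖(cm B) ^ n‖ := by
      intro i j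
      rw [← cm_pow]
      exact entry_le_norm_cm (pow_entry_nonneg hB n) i j
    calc (∑ i, ∑ j, (B ^ n) i j) ≤ ∑ _i : ι, ∑ _j : ι, ‖(cm B) ^ n‖ := by
          exact Finset.sum_le_sum fun i _ => Finset.sum_le_sum fun j _ => hent i j
      _ = c2 * ‖(cm B) ^ n‖ := by
          rw [Finset.sum_const, Finset.sum_const]
          simp [hc2, mul_assoc, nsmul_eq_mul]
  have hlower : ∀ n : ℕ, ‖(cm B) ^ n‖ ≤ ∑ i, ∑ j, (B ^ n) i j := by
    intro n
    rw [← cm_pow]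
    exact norm_cm_le_sum (pow_entry_nonneg hB n)
  have hsum_nonneg : ∀ n : ℕ, 0 ≤ ∑ i, ∑ j, (B ^ n) i j := fun n =>
    Finset.sum_nonneg fun i _ => Finset.sum_nonneg fun j _ => pow_entry_nonneg hB n i j
  have hub : Tendsto (fun n : ℕ => c2 ^ (1 / (n : ℝ)) * ‖(cm B) ^ n‖ ^ (1 / (n : ℝ)))
      atTop (𝓝 ρ) := by
    have := (tendsto_rpow_one_div_natCast hc2pos).mul hGr
    rwa [one_mul] at this
  refine tendsto_of_tendsto_of_tendsto_of_le_of_le hGr hub ?_ ?_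
  · intro n
    exact Real.rpow_le_rpow (norm_nonneg _) (hlower n) (by positivity)
  · intro n
    calc (∑ i, ∑ j, (B ^ n) i j) ^ (1 / (n : ℝ)) ≤ (c2 * ‖(cm B) ^ n‖) ^ (1 / (n : ℝ)) :=
          Real.rpow_le_rpow (hsum_nonneg n) (hupper n) (by positivity)
      _ = c2 ^ (1 / (n : ℝ)) * ‖(cm B) ^ n‖ ^ (1 / (n : ℝ)) :=
          Real.mul_rpow hc2pos.le (norm_nonneg _)

end Perron2

section Perron3
variable {ι : Type*} [Fintype ι] [DecidableEq ι] [Nonempty ι]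

attribute [local instance] Matrix.linftyOpNormedAddCommGroup Matrix.linftyOpNormedRing
  Matrix.linftyOpNormedAlgebra

theorem cm_smul_one_sub (B : Matrix ι ι ℝ) (r : ℝ) :
    cm (r • (1 : Matrix ι ι ℝ) - B) = (r : ℂ) • (1 : Matrix ι ι ℂ) - cm B := by
  ext i j
  simp [cm, Matrix.one_apply, apply_ite]

theorem eigen_iff_mem_spectrum (B : Matrix ι ι ℝ) (r : ℝ) :
    (∃ w : ι → ℝ, w ≠ 0 ∧ B.mulVec w = r • w) ↔ (r : ℂ) ∈ spectrum ℂ (cm B) := by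
  have hdet : ∀ {z : ℂ}, z ∈ spectrum ℂ (cm B)
      ↔ (z • (1 : Matrix ι ι ℂ) - cm B).det = 0 := by
    intro z
    rw [spectrum.mem_iff, Algebra.algebraMap_eq_smul_one]
    constructor
    · intro h
      by_contra hne
      exact h ((Matrix.isUnit_iff_isUnit_det _).mpr (isUnit_iff_ne_zero.mpr hne))
    · intro h hu
      rw [Matrix.isUnit_iff_isUnit_det, h] at hu
      exact hu.ne_zero rfl
  have hsub : ∀ (A : Matrix ι ι ℝ) (c : ℝ) (v : ι → ℝ),
      (c • (1 : Matrix ι ι ℝ) - A).mulVec v = c • v - A.mulVec v := by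
    intro A c v
    rw [Matrix.sub_mulVec, Matrix.smul_mulVec, Matrix.one_mulVec]
  constructor
  · rintro ⟨w, hw, heig⟩
    rw [hdet]
    rw [← cm_smul_one_sub, cm, ← RingHom.map_det]
    have hdet0 : (r • (1 : Matrix ι ι ℝ) - B).det = 0 := by
      rw [← Matrix.exists_mulVec_eq_zero_iff]
      refine ⟨w, hw, ?_⟩
      rw [hsub, heig, sub_self]
    rw [hdet0, map_zero]
  · intro h
    rw [hdet, ← cm_smul_one_sub, cm, ← RingHom.map_det] at h
    have hdet0 : (r • (1 : Matrix ι ι ℝ) - B).det = 0 :=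
      Complex.ofReal_injective (by simpa using h)
    obtain ⟨v, hv, hveq⟩ := (Matrix.exists_mulVec_eq_zero_iff).mpr hdet0
    refine ⟨v, hv, ?_⟩
    rw [hsub] at hveq
    linear_combination (norm := module) -hveq

end Perron3

section Perron4
variable {ι : Type*} [Fintype ι] [DecidableEq ι] [Nonempty ι]

attribute [local instance] Matrix.linftyOpNormedAddCommGroup Matrix.linftyOpNormedRing
  Matrix.linftyOpNormedAlgebra

theorem spectrum_iff_eigen_c (A : Matrix ι ι ℂ) (z : ℂ) :
    z ∈ spectrum ℂ A ↔ ∃ v : ι → ℂ, v ≠ 0 ∧ A.mulVec v = z • v := by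
  rw [spectrum.mem_iff, Algebra.algebraMap_eq_smul_one]
  have hiu : ¬IsUnit (z • (1 : Matrix ι ι ℂ) - A) ↔ (z • (1 : Matrix ι ι ℂ) - A).det = 0 := by
    constructor
    · intro h
      by_contra hne
      exact h ((Matrix.isUnit_iff_isUnit_det _).mpr (isUnit_iff_ne_zero.mpr hne))
    · intro h hu
      rw [Matrix.isUnit_iff_isUnit_det, h] at hu
      exact hu.ne_zero rfl
  rw [hiu, ← Matrix.exists_mulVec_eq_zero_iff]
  constructor
  · rintro ⟨v, hv, hveq⟩
    refine ⟨v, hv, ?_⟩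
    rw [Matrix.sub_mulVec, Matrix.smul_mulVec, Matrix.one_mulVec] at hveq
    linear_combination (norm := module) -hveq
  · rintro ⟨v, hv, hveq⟩
    refine ⟨v, hv, ?_⟩
    rw [Matrix.sub_mulVec, Matrix.smul_mulVec, Matrix.one_mulVec, hveq, sub_self]

theorem perron_main {B : Matrix ι ι ℝ} (hB : ∀ i j, 0 ≤ B i j)
    (hirr : ∀ i j, ∃ n : ℕ, 0 < (B ^ n) i j) :
    ∃ ρ : ℝ, 0 ≤ ρ ∧ (∃ x : ι → ℝ, x ≠ 0 ∧ B.mulVec x = ρ • x)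
      ∧ (∀ r : ℝ, (∃ w : ι → ℝ, w ≠ 0 ∧ B.mulVec w = r • w) → r ≤ ρ)
      ∧ Tendsto (fun n : ℕ => (∑ i, ∑ j, (B ^ n) i j) ^ (1 / (n : ℝ))) atTop (𝓝 ρ) := by
  classical
  have hnontriv : Nontrivial (Matrix ι ι ℂ) := inferInstance
  set ρ := (spectralRadius ℂ (cm B)).toReal with hρdef
  have hfin : spectralRadius ℂ (cm B) ≠ ⊤ :=
    ((spectrum.spectralRadius_le_nnnorm (𝕜 := ℂ) (cm B)).trans_lt ENNReal.coe_lt_top).ne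
  have hρ0 : 0 ≤ ρ := ENNReal.toReal_nonneg
  have htend := tendsto_sum_pow_rpow hB
  -- upper bound on real eigenvalues
  have hub : ∀ r : ℝ, (∃ w : ι → ℝ, w ≠ 0 ∧ B.mulVec w = r • w) → r ≤ ρ := by
    intro r hr
    have hmem : (r : ℂ) ∈ spectrum ℂ (cm B) := (eigen_iff_mem_spectrum B r).mp hr
    have : (‖(r : ℂ)‖₊ : ℝ≥0∞) ≤ spectralRadius ℂ (cm B) :=
      le_iSup₂ (f := fun k (_ : k ∈ spectrum ℂ (cm B)) => (‖k‖₊ : ℝ≥0∞)) (r : ℂ) hmem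
    have h2 : ‖(r : ℂ)‖ ≤ ρ := by
      have := ENNReal.toReal_mono hfin this
      simpa using this
    calc r ≤ |r| := le_abs_self r
      _ = ‖(r : ℂ)‖ := by rw [Complex.norm_real, Real.norm_eq_abs]
      _ ≤ ρ := h2
  -- existence of a real eigenvector with eigenvalue ρ
  obtain ⟨z0, hz0mem, hz0⟩ := spectrum.exists_nnnorm_eq_spectralRadius (a := cm B)
  have hz0norm : ‖z0‖ = ρ := by
    rw [hρdef, ← hz0]
    simp
  obtain ⟨v, hv, hveq⟩ := (spectrum_iff_eigen_c (cm B) z0).mp hz0mem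
  set x : ι → ℝ := fun i => ‖v i‖ with hxdef
  have hx0 : ∀ i, 0 ≤ x i := fun i => norm_nonneg _
  have hxne : x ≠ 0 := by
    obtain ⟨i, hi⟩ := Function.ne_iff.mp hv
    exact Function.ne_iff.mpr ⟨i, by simpa [hxdef] using norm_ne_zero_iff.mpr hi⟩
  have hkey : ∀ i, ρ * x i ≤ (B.mulVec x) i := by
    intro i
    have h1 : ρ * x i = ‖((cm B).mulVec v) i‖ := by
      rw [hveq]
      simp only [Pi.smul_apply, smul_eq_mul, norm_mul, hz0norm, hxdef]
    rw [h1]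
    calc ‖((cm B).mulVec v) i‖ = ‖∑ j, (cm B) i j * v j‖ := rfl
      _ ≤ ∑ j, ‖(cm B) i j * v j‖ := norm_sum_le _ _
      _ = ∑ j, B i j * x j := by
          refine Finset.sum_congr rfl fun j _ => ?_
          rw [norm_mul, hxdef]
          congr 1
          show ‖(B i j : ℂ)‖ = B i j
          rw [Complex.norm_real]
          exact Real.norm_of_nonneg (hB i j)
      _ = (B.mulVec x) i := rfl
  set y : ι → ℝ := B.mulVec x - ρ • x with hydef
  have hy0 : ∀ i, 0 ≤ y i := fun i => by
    simp only [hydef, Pi.sub_apply, Pi.smul_apply, smul_eq_mul, sub_nonneg]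
    exact hkey i
  by_cases hyz : y = 0
  · refine ⟨ρ, hρ0, ⟨x, hxne, ?_⟩, hub, htend⟩
    have := sub_eq_zero.mp hyz
    exact this
  · -- contradiction branch
    exfalso
    set K : ℕ := Finset.univ.sup (fun p : ι × ι => (hirr p.1 p.2).choose) with hKdef
    set Bs : Matrix ι ι ℝ := ∑ n ∈ Finset.range (K + 1), B ^ n with hBsdef
    have hBs_nonneg : ∀ i j, 0 ≤ Bs i j := by
      intro i j
      rw [hBsdef, Matrix.sum_apply]
      exact Finset.sum_nonneg fun n _ => pow_entry_nonneg hB n i j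
    have hBs_pos : ∀ i j, 0 < Bs i j := by
      intro i j
      rw [hBsdef, Matrix.sum_apply]
      refine Finset.sum_pos' (fun n _ => pow_entry_nonneg hB n i j) ?_
      refine ⟨(hirr i j).choose, ?_, (hirr i j).choose_spec⟩
      rw [Finset.mem_range, Nat.lt_succ_iff, hKdef]
      exact Finset.le_sup (f := fun p : ι × ι => (hirr p.1 p.2).choose) (Finset.mem_univ (i, j))
    have hposvec : ∀ u : ι → ℝ, (∀ i, 0 ≤ u i) → u ≠ 0 → ∀ i, 0 < (Bs.mulVec u) i := by
      intro u hu hune i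
      obtain ⟨j0, hj0⟩ := Function.ne_iff.mp hune
      have hj0' : 0 < u j0 := lt_of_le_of_ne (hu j0) (Ne.symm (by simpa using hj0))
      refine Finset.sum_pos' (fun j _ => mul_nonneg (hBs_nonneg i j) (hu j)) ?_
      exact ⟨j0, Finset.mem_univ j0, mul_pos (hBs_pos i j0) hj0'⟩
    set z : ι → ℝ := Bs.mulVec x with hzdef
    set w' : ι → ℝ := Bs.mulVec y with hw'def
    have hz_pos : ∀ i, 0 < z i := hposvec x hx0 hxne
    have hw'_pos : ∀ i, 0 < w' i := hposvec y hy0 hyz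
    have hcomm : B * Bs = Bs * B := by
      rw [hBsdef, Finset.sum_mul, Finset.mul_sum]
      refine Finset.sum_congr rfl fun n _ => ?_
      exact (((Commute.refl B).pow_left n).eq).symm
    have hBx : B.mulVec x = ρ • x + y := by
      rw [hydef]; abel
    have hkey2 : B.mulVec z = ρ • z + w' := by
      rw [hzdef, Matrix.mulVec_mulVec, hcomm, ← Matrix.mulVec_mulVec, hBx,
        Matrix.mulVec_add, Matrix.mulVec_smul, hw'def]
    have hne : (Finset.univ : Finset ι).Nonempty := Finset.univ_nonempty
    set ε : ℝ := Finset.univ.inf' hne (fun i => w' i / z i) with hεdef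
    have hε_pos : 0 < ε := by
      rw [hεdef]
      rw [Finset.lt_inf'_iff]
      exact fun i _ => div_pos (hw'_pos i) (hz_pos i)
    have hge : ∀ i, (ρ + ε) * z i ≤ (B.mulVec z) i := by
      intro i
      have h1 : ε ≤ w' i / z i := Finset.inf'_le _ (Finset.mem_univ i)
      have h2 : ε * z i ≤ w' i := by
        rw [← le_div_iff₀ (hz_pos i)]
        exact h1
      have := congrFun hkey2 i
      simp only [Pi.add_apply, Pi.smul_apply, smul_eq_mul] at this
      rw [this]
      nlinarith [hz_pos i]
    have hmono : ∀ u v : ι → ℝ, (∀ i, u i ≤ v i) → ∀ i, (B.mulVec u) i ≤ (B.mulVec v) i := by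
      intro u v huv i
      exact Finset.sum_le_sum fun j _ => mul_le_mul_of_nonneg_left (huv j) (hB i j)
    have hρε : 0 < ρ + ε := by linarith
    have hiter : ∀ n : ℕ, ∀ i, (ρ + ε) ^ n * z i ≤ ((B ^ n).mulVec z) i := by
      intro n
      induction n with
      | zero => intro i; simp [Matrix.one_mulVec]
      | succ n ih =>
          intro i
          have h1 : ∀ j, ((ρ + ε) ^ n • z) j ≤ ((B ^ n).mulVec z) j := fun j => ih j
          have h2 := hmono _ _ h1 i
          have h3 : (B.mulVec ((ρ + ε) ^ n • z)) i = (ρ + ε) ^ n * (B.mulVec z) i := by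
            rw [Matrix.mulVec_smul]
            rfl
          have h4 : (ρ + ε) ^ n * ((ρ + ε) * z i) ≤ (ρ + ε) ^ n * (B.mulVec z) i :=
            mul_le_mul_of_nonneg_left (hge i) (le_of_lt (pow_pos hρε n))
          calc (ρ + ε) ^ (n + 1) * z i = (ρ + ε) ^ n * ((ρ + ε) * z i) := by ring
            _ ≤ (ρ + ε) ^ n * (B.mulVec z) i := h4
            _ = (B.mulVec ((ρ + ε) ^ n • z)) i := h3.symm
            _ ≤ (B.mulVec ((B ^ n).mulVec z)) i := h2
            _ = ((B ^ (n + 1)).mulVec z) i := by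
                rw [Matrix.mulVec_mulVec, ← pow_succ']
    -- now bound total sums from below
    obtain ⟨i0⟩ := (inferInstance : Nonempty ι)
    set zmax : ℝ := Finset.univ.sup' hne z with hzmaxdef
    have hzmax_pos : 0 < zmax := lt_of_lt_of_le (hz_pos i0) (Finset.le_sup' z (Finset.mem_univ i0))
    set c : ℝ := z i0 / zmax with hcdef
    have hc_pos : 0 < c := div_pos (hz_pos i0) hzmax_pos
    have hlb : ∀ n : ℕ, c * (ρ + ε) ^ n ≤ ∑ i, ∑ j, (B ^ n) i j := by
      intro n
      have h1 : (ρ + ε) ^ n * z i0 ≤ ((B ^ n).mulVec z) i0 := hiter n i0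
      have h2 : ((B ^ n).mulVec z) i0 ≤ zmax * ∑ j, (B ^ n) i0 j := by
        calc ((B ^ n).mulVec z) i0 = ∑ j, (B ^ n) i0 j * z j := rfl
          _ ≤ ∑ j, (B ^ n) i0 j * zmax := by
              refine Finset.sum_le_sum fun j _ => ?_
              exact mul_le_mul_of_nonneg_left (Finset.le_sup' z (Finset.mem_univ j))
                (pow_entry_nonneg hB n i0 j)
          _ = zmax * ∑ j, (B ^ n) i0 j := by rw [← Finset.sum_mul]; ring
      have h3 : ∑ j, (B ^ n) i0 j ≤ ∑ i, ∑ j, (B ^ n) i j :=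
        Finset.single_le_sum (f := fun i => ∑ j, (B ^ n) i j)
          (fun i _ => Finset.sum_nonneg fun j _ => pow_entry_nonneg hB n i j)
          (Finset.mem_univ i0)
      have h4 : (ρ + ε) ^ n * z i0 ≤ zmax * ∑ i, ∑ j, (B ^ n) i j := by
        refine h1.trans (h2.trans ?_)
        exact mul_le_mul_of_nonneg_left h3 hzmax_pos.le
      rw [hcdef, div_mul_eq_mul_div, div_le_iff₀ hzmax_pos]
      nlinarith
    -- contradiction with gelfand limit
    have hlim2 : Tendsto (fun n : ℕ => (c * (ρ + ε) ^ n) ^ (1 / (n : ℝ))) atTop (𝓝 (ρ + ε)) := by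
      have h1 : Tendsto (fun n : ℕ => c ^ (1 / (n : ℝ)) * (ρ + ε)) atTop (𝓝 (ρ + ε)) := by
        have := (tendsto_rpow_one_div_natCast hc_pos).mul_const (ρ + ε)
        rwa [one_mul] at this
      refine h1.congr' ?_
      filter_upwards [eventually_ge_atTop 1] with n hn
      have hn0 : (n : ℝ) ≠ 0 := by positivity
      rw [Real.mul_rpow hc_pos.le (pow_nonneg hρε.le n),
        ← Real.rpow_natCast (ρ + ε) n, ← Real.rpow_mul hρε.le,
        mul_one_div_cancel hn0, Real.rpow_one]
    have hle : ρ + ε ≤ ρ := by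
      refine le_of_tendsto_of_tendsto' hlim2 htend fun n => ?_
      refine Real.rpow_le_rpow (by positivity) (hlb n) (by positivity)
    linarith

end Perron4
/-- for a DFA all of whose states are reachable, with a unique absorbing
rejecting state `sabs` and remaining states a single strongly connected component
containing an accepting state, the growth rate of the accepted language equals the
largest real eigenvalue (spectral radius) of the reduced matrix `R` on the
non-absorbing states, where `R s s'` counts the symbols carrying `s` to `s'`. -/
theorem growthRate_eq_spectralRadius_reducedMatrix
    {V : Type*} [Fintype V]
    (σ : Type) [Fintype σ] [DecidableEq σ] (M : DFA V σ) (sabs : σ)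
    (hreach : ∀ s : σ, Reaches M M.start s)
    (habs : ∀ s : σ, IsAbsorbing M s ↔ s = sabs)
    (hrej : sabs ∉ M.accept)
    (hconn : ∀ s t : σ, s ≠ sabs → t ≠ sabs → Reaches M s t)
    (hacc : ∃ s ∈ M.accept, s ≠ sabs)
    (R : Matrix {s : σ // s ≠ sabs} {s : σ // s ≠ sabs} ℝ)
    (hR : ∀ s s' : {s : σ // s ≠ sabs},
      R s s' = (Set.ncard {x : V | M.step s.1 x = s'.1} : ℝ)) :
    growthRate M.accepts
      = sSup {r : ℝ | ∃ w : {s : σ // s ≠ sabs} → ℝ, w ≠ 0 ∧ R.mulVec w = r • w} := by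
  classical
  haveI : Nonempty σ := ⟨sabs⟩
  have habs_sabs : ∀ a, M.step sabs a = sabs := (habs sabs).mpr rfl
  have hsabs_reach : ∀ s : σ, Reaches M sabs s → s = sabs := by
    intro s h
    obtain ⟨w, hw⟩ := reaches_word M h
    rw [evalFrom_absorb M habs_sabs] at hw
    exact hw.symm
  have hstart : M.start ≠ sabs := by
    obtain ⟨sa, _, hsane⟩ := hacc
    intro h
    exact hsane (hsabs_reach sa (by rw [← h]; exact hreach sa))
  haveI hτne : Nonempty {s : σ // s ≠ sabs} := ⟨⟨M.start, hstart⟩⟩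
  set N := redMat M sabs with hN
  have hRN : R = (Nat.castRingHom ℝ).mapMatrix N := by
    ext s t
    rw [hR s t, RingHom.mapMatrix_apply, Matrix.map_apply]
    rw [← Nat.card_coe_set_eq]
    rfl
  have hpow : ∀ n : ℕ, R ^ n = ((N ^ n).map (Nat.cast : ℕ → ℝ)) := by
    intro n
    rw [hRN, ← map_pow, RingHom.mapMatrix_apply]
    rfl
  have hRentry : ∀ (n : ℕ) (s t : {s : σ // s ≠ sabs}), (R ^ n) s t = ((N ^ n) s t : ℝ) := by
    intro n s t; rw [hpow n]; rfl
  have hRnn : ∀ s t : {s : σ // s ≠ sabs}, 0 ≤ R s t := by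
    intro s t; rw [hR]; positivity
  have hcnt : ∀ (n : ℕ) (s t : {s : σ // s ≠ sabs}),
      ((cnt M n s.1 t.1 : ℕ) : ℝ) = (R ^ n) s t := by
    intro n s t
    rw [cnt_eq_pow M sabs habs_sabs n s t, hRentry]
  have hword_ge : ∀ (s t : {s : σ // s ≠ sabs}) (w : List V),
      M.evalFrom s.1 w = t.1 → 1 ≤ (R ^ w.length) s t := by
    intro s t w hw
    rw [← hcnt]
    exact_mod_cast cnt_pos M hw
  have hirr : ∀ s t : {s : σ // s ≠ sabs}, ∃ n : ℕ, 0 < (R ^ n) s t := by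
    intro s t
    obtain ⟨w, hw⟩ := reaches_word M (hconn s.1 t.1 s.2 t.2)
    exact ⟨w.length, lt_of_lt_of_le one_pos (hword_ge s t w hw)⟩
  obtain ⟨ρ, hρ0, hex, hub, htend⟩ := perron_main hRnn hirr
  have hsup : sSup {r : ℝ | ∃ w : {s : σ // s ≠ sabs} → ℝ, w ≠ 0 ∧ R.mulVec w = r • w} = ρ := by
    refine IsGreatest.csSup_eq ⟨hex, ?_⟩
    intro r hr
    exact hub r hr
  rw [hsup]
  set s0 : {s : σ // s ≠ sabs} := ⟨M.start, hstart⟩ with hs0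
  have hane : ∀ t : {t : σ // t ∈ M.accept}, t.1 ≠ sabs := fun t h => hrej (h ▸ t.2)
  set e : {t : σ // t ∈ M.accept} → {s : σ // s ≠ sabs} := fun t => ⟨t.1, hane t⟩ with he
  have he_inj : Function.Injective e := by
    intro a b h
    have h2 : (e a).1 = (e b).1 := congrArg Subtype.val h
    exact Subtype.ext h2
  set a : ℕ → ℕ := fun n => ∑ t : {t : σ // t ∈ M.accept}, cnt M n M.start t.1 with ha
  set f : ℕ → ℝ := fun n => ((a n : ℕ) : ℝ) ^ (1 / (n : ℝ)) with hf
  have hgrowth : growthRate M.accepts = limsup f atTop := by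
    unfold growthRate
    congr 1
    funext n
    exact congrArg (fun k : ℕ => (k : ℝ) ^ (1 / (n : ℝ))) (ncard_accepts M n)
  have ha_eq : ∀ n : ℕ, ((a n : ℕ) : ℝ)
      = ∑ t : {t : σ // t ∈ M.accept}, (R ^ n) s0 (e t) := by
    intro n
    rw [ha]
    push_cast
    refine Finset.sum_congr rfl fun t _ => ?_
    exact hcnt n s0 (e t)
  set T : ℕ → ℝ := fun n => ∑ s, ∑ t, (R ^ n) s t with hT
  have hRpow_nn : ∀ (n : ℕ) (s t : {s : σ // s ≠ sabs}), 0 ≤ (R ^ n) s t :=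
    fun n s t => pow_entry_nonneg hRnn n s t
  have hT_nn : ∀ n, 0 ≤ T n := fun n =>
    Finset.sum_nonneg fun s _ => Finset.sum_nonneg fun t _ => hRpow_nn n s t
  have haT : ∀ n, ((a n : ℕ) : ℝ) ≤ T n := by
    intro n
    rw [ha_eq]
    calc ∑ t : {t : σ // t ∈ M.accept}, (R ^ n) s0 (e t)
        = ∑ u ∈ Finset.univ.image e, (R ^ n) s0 u := by
          rw [Finset.sum_image (fun x _ y _ h => he_inj h)]
      _ ≤ ∑ u, (R ^ n) s0 u := Finset.sum_le_sum_of_subset_of_nonneg (Finset.subset_univ _)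
          (fun u _ _ => hRpow_nn n s0 u)
      _ ≤ T n := Finset.single_le_sum (f := fun s => ∑ t, (R ^ n) s t)
          (fun s _ => Finset.sum_nonneg fun t _ => hRpow_nn n s t) (Finset.mem_univ s0)
  have hf_nn : ∀ n, 0 ≤ f n := fun n => Real.rpow_nonneg (by positivity) _
  have hbdd : IsBoundedUnder (· ≤ ·) atTop f := by
    have hCa1 : (1 : ℝ) ≤ (Fintype.card σ : ℝ) := by
      exact_mod_cast Nat.one_le_iff_ne_zero.mpr Fintype.card_ne_zero
    have hcV0 : (0:ℝ) ≤ (Fintype.card V : ℝ) := by positivity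
    refine isBoundedUnder_of_eventually_le
      (a := (Fintype.card σ : ℝ) * (Fintype.card V : ℝ)) ?_
    filter_upwards [eventually_ge_atTop 1] with n hn
    have h1 : a n ≤ Fintype.card σ * Fintype.card V ^ n := by
      rw [ha]
      calc ∑ t : {t : σ // t ∈ M.accept}, cnt M n M.start t.1
          ≤ ∑ _t : {t : σ // t ∈ M.accept}, Fintype.card V ^ n :=
            Finset.sum_le_sum fun t _ => cnt_le M n M.start t.1
        _ = Fintype.card {t : σ // t ∈ M.accept} * Fintype.card V ^ n := by
            rw [Finset.sum_const, smul_eq_mul, Finset.card_univ]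
        _ ≤ Fintype.card σ * Fintype.card V ^ n :=
            Nat.mul_le_mul_right _ (Fintype.card_subtype_le _)
    have hT1 : ((a n : ℕ) : ℝ) ≤ (Fintype.card σ : ℝ) * (Fintype.card V : ℝ) ^ n := by
      calc ((a n : ℕ) : ℝ) ≤ ((Fintype.card σ * Fintype.card V ^ n : ℕ) : ℝ) := by
            exact_mod_cast h1
        _ = (Fintype.card σ : ℝ) * (Fintype.card V : ℝ) ^ n := by push_cast; ring
    have hn0 : (n : ℝ) ≠ 0 := by
      have : (0:ℝ) < (n:ℝ) := by exact_mod_cast hn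
      exact this.ne'
    calc f n ≤ ((Fintype.card σ : ℝ) * (Fintype.card V : ℝ) ^ n) ^ (1 / (n:ℝ)) :=
          Real.rpow_le_rpow (by positivity) hT1 (by positivity)
      _ = (Fintype.card σ : ℝ) ^ (1/(n:ℝ)) * (Fintype.card V : ℝ) := by
          rw [Real.mul_rpow (by positivity) (by positivity),
            ← Real.rpow_natCast ((Fintype.card V : ℝ)) n, ← Real.rpow_mul hcV0,
            mul_one_div_cancel hn0, Real.rpow_one]
      _ ≤ (Fintype.card σ : ℝ) * (Fintype.card V : ℝ) := by
          refine mul_le_mul_of_nonneg_right ?_ hcV0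
          calc (Fintype.card σ : ℝ) ^ (1/(n:ℝ)) ≤ (Fintype.card σ : ℝ) ^ (1:ℝ) := by
                refine Real.rpow_le_rpow_of_exponent_le hCa1 ?_
                rw [div_le_one (by positivity)]
                exact_mod_cast hn
            _ = (Fintype.card σ : ℝ) := Real.rpow_one _
  have hupper : limsup f atTop ≤ ρ := by
    have hTlim : limsup (fun n => T n ^ (1/(n:ℝ))) atTop = ρ := htend.limsup_eq
    rw [← hTlim]
    refine limsup_le_limsup (Filter.Eventually.of_forall fun n => ?_) ?_ ?_
    · exact Real.rpow_le_rpow (by positivity) (haT n) (by positivity)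
    · exact Filter.IsCoboundedUnder.of_frequently_ge
        (Filter.Frequently.of_forall fun n => hf_nn n)
    · exact htend.isBoundedUnder_le
  obtain ⟨sa, hsa_acc, hsane⟩ := hacc
  set t0 : {t : σ // t ∈ M.accept} := ⟨sa, hsa_acc⟩ with ht0
  have hsingle : ∀ m : ℕ, (R ^ m) s0 (e t0) ≤ ((a m : ℕ) : ℝ) := by
    intro m
    rw [ha_eq]
    exact Finset.single_le_sum (f := fun t => (R ^ m) s0 (e t))
      (fun t _ => hRpow_nn m s0 (e t)) (Finset.mem_univ t0)
  have hsplit : ∀ (p q : ℕ) (u v w : {s : σ // s ≠ sabs}),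
      (R ^ p) u v * (R ^ q) v w ≤ (R ^ (p + q)) u w := by
    intro p q u v w
    rw [pow_add, Matrix.mul_apply]
    exact Finset.single_le_sum (f := fun k => (R ^ p) u k * (R ^ q) k w)
      (fun k _ => mul_nonneg (hRpow_nn p u k) (hRpow_nn q k w)) (Finset.mem_univ v)
  have hfrom : ∀ j : {s : σ // s ≠ sabs}, ∃ p : ℕ, 1 ≤ (R ^ p) s0 j := by
    intro j
    obtain ⟨w, hw⟩ := reaches_word M (hreach j.1)
    exact ⟨w.length, hword_ge s0 j w hw⟩
  have hto : ∀ k : {s : σ // s ≠ sabs}, ∃ q : ℕ, 1 ≤ (R ^ q) k (e t0) := by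
    intro k
    obtain ⟨w, hw⟩ := reaches_word M (hconn k.1 sa k.2 hsane)
    exact ⟨w.length, hword_ge k (e t0) w hw⟩
  choose P hP using hfrom
  choose Q hQ using hto
  set K : ℕ := Finset.univ.sup P + Finset.univ.sup Q with hK
  set d2 : ℝ := (Fintype.card {s : σ // s ≠ sabs} : ℝ) * (Fintype.card {s : σ // s ≠ sabs} : ℝ)
    with hd2
  have hd2pos : 0 < d2 := by
    have h := Fintype.card_pos (α := {s : σ // s ≠ sabs})
    have : (0:ℝ) < (Fintype.card {s : σ // s ≠ sabs} : ℝ) := by exact_mod_cast h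
    rw [hd2]; positivity
  have hkey : ∀ n : ℕ, ∃ m : ℕ, n ≤ m ∧ m ≤ n + K ∧ T n ≤ d2 * ((a m : ℕ) : ℝ) := by
    intro n
    obtain ⟨⟨j, k⟩, _, hmax⟩ := Finset.exists_max_image
      (Finset.univ : Finset ({s : σ // s ≠ sabs} × {s : σ // s ≠ sabs}))
      (fun p => (R ^ n) p.1 p.2) ⟨(s0, s0), Finset.mem_univ _⟩
    refine ⟨P j + n + Q k, by omega, ?_, ?_⟩
    · have h1 : P j ≤ Finset.univ.sup P := Finset.le_sup (Finset.mem_univ j)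
      have h2 : Q k ≤ Finset.univ.sup Q := Finset.le_sup (Finset.mem_univ k)
      omega
    · have hTn : T n ≤ d2 * (R ^ n) j k := by
        rw [hT]
        calc ∑ s, ∑ t, (R ^ n) s t
            ≤ ∑ _s : {s : σ // s ≠ sabs}, ∑ _t : {s : σ // s ≠ sabs}, (R ^ n) j k :=
              Finset.sum_le_sum fun s _ => Finset.sum_le_sum fun t _ =>
                hmax (s, t) (Finset.mem_univ _)
          _ = d2 * (R ^ n) j k := by
              rw [Finset.sum_const, Finset.sum_const, Finset.card_univ, smul_smul,
                nsmul_eq_mul, hd2]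
              push_cast
              ring
      have hchain : (R ^ n) j k ≤ (R ^ (P j + n + Q k)) s0 (e t0) := by
        have c1 : (R ^ (P j)) s0 j * (R ^ n) j k ≤ (R ^ (P j + n)) s0 k := hsplit _ _ _ _ _
        have c2 : (R ^ (P j + n)) s0 k * (R ^ (Q k)) k (e t0)
            ≤ (R ^ (P j + n + Q k)) s0 (e t0) := hsplit _ _ _ _ _
        have e1 : (R ^ n) j k ≤ (R ^ (P j)) s0 j * (R ^ n) j k :=
          le_mul_of_one_le_left (hRpow_nn n j k) (hP j)
        have e2 : (R ^ (P j + n)) s0 k ≤ (R ^ (P j + n)) s0 k * (R ^ (Q k)) k (e t0) :=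
          le_mul_of_one_le_right (hRpow_nn _ _ _) (hQ k)
        exact e1.trans (c1.trans (e2.trans c2))
      calc T n ≤ d2 * (R ^ n) j k := hTn
        _ ≤ d2 * (R ^ (P j + n + Q k)) s0 (e t0) :=
            mul_le_mul_of_nonneg_left hchain hd2pos.le
        _ ≤ d2 * ((a (P j + n + Q k) : ℕ) : ℝ) :=
            mul_le_mul_of_nonneg_left (hsingle _) hd2pos.le
  have hlower : ρ ≤ limsup f atTop := by
    refine le_of_forall_sub_le fun ε hε => ?_
    rcases le_or_gt ρ ε with hρε | hρε
    · have h0 : (0:ℝ) ≤ limsup f atTop :=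
        le_limsup_of_frequently_le (Filter.Frequently.of_forall fun n => hf_nn n) hbdd
      linarith
    · set β : ℝ := ρ - ε / 2 with hβ
      have hβpos : 0 < β := by rw [hβ]; linarith
      have hβlt : β < ρ := by rw [hβ]; linarith
      have hmin_pos : 0 < min 1 β⁻¹ := lt_min one_pos (by positivity)
      set C : ℝ := (min 1 β⁻¹) ^ K / d2 with hC
      have hC_pos : 0 < C := by rw [hC]; positivity
      have hev : ∀ᶠ n : ℕ in atTop, β ≤ T n ^ (1 / (n:ℝ)) :=
        htend.eventually_const_le hβlt
      have hfreq : ∃ᶠ m : ℕ in atTop, 1 ≤ m ∧ C * β ^ m ≤ ((a m : ℕ) : ℝ) := by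
        rw [Filter.frequently_atTop]
        intro n₀
        obtain ⟨n₁, hn₁⟩ := Filter.eventually_atTop.mp hev
        obtain ⟨m, hnm, hmK, hTm⟩ := hkey (max (max n₀ n₁) 1)
        have hn1 : 1 ≤ max (max n₀ n₁) 1 := le_max_right _ 1
        refine ⟨m, le_trans (le_trans (le_max_left n₀ n₁) (le_max_left _ 1)) hnm,
          le_trans hn1 hnm, ?_⟩
        set n := max (max n₀ n₁) 1 with hn
        have hβn : β ^ n ≤ T n := by
          have h1 : β ≤ T n ^ (1/(n:ℝ)) :=
            hn₁ n (le_trans (le_max_right n₀ n₁) (le_max_left _ 1))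
          have hn0 : (n:ℝ) ≠ 0 := by
            have : 0 < n := hn1
            exact_mod_cast this.ne'
          have h2 : β ^ n ≤ (T n ^ (1/(n:ℝ))) ^ n := pow_le_pow_left₀ hβpos.le h1 n
          calc β ^ n ≤ (T n ^ (1/(n:ℝ))) ^ n := h2
            _ = T n := by
                rw [← Real.rpow_natCast (T n ^ (1/(n:ℝ))) n, ← Real.rpow_mul (hT_nn n),
                  one_div_mul_cancel hn0, Real.rpow_one]
        set sft : ℕ := m - n with hsft
        have hms : m = n + sft := by omega
        have hsK : sft ≤ K := by omega
        have hone : (min 1 β⁻¹) ^ K * β ^ sft ≤ 1 := by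
          have hA : (min 1 β⁻¹) ^ K ≤ (min 1 β⁻¹) ^ sft :=
            pow_le_pow_of_le_one hmin_pos.le (min_le_left _ _) hsK
          have hB : (min 1 β⁻¹) ^ sft ≤ (β⁻¹) ^ sft :=
            pow_le_pow_left₀ hmin_pos.le (min_le_right _ _) sft
          calc (min 1 β⁻¹) ^ K * β ^ sft ≤ (β⁻¹) ^ sft * β ^ sft :=
                mul_le_mul_of_nonneg_right (hA.trans hB) (pow_nonneg hβpos.le sft)
            _ = 1 := by rw [← mul_pow, inv_mul_cancel₀ hβpos.ne', one_pow]
        have hCm : C * β ^ m = (β ^ n / d2) * ((min 1 β⁻¹) ^ K * β ^ sft) := by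
          rw [hms, pow_add, hC]; ring
        have hfinal : C * β ^ m ≤ T n / d2 := by
          rw [hCm]
          calc (β ^ n / d2) * ((min 1 β⁻¹) ^ K * β ^ sft) ≤ (β ^ n / d2) * 1 :=
                mul_le_mul_of_nonneg_left hone (by positivity)
            _ = β ^ n / d2 := mul_one _
            _ ≤ T n / d2 := by gcongr
        refine hfinal.trans ?_
        rw [div_le_iff₀ hd2pos]
        calc T n ≤ d2 * ((a m : ℕ) : ℝ) := hTm
          _ = ((a m : ℕ) : ℝ) * d2 := mul_comm _ _
      have hCβ : Filter.Tendsto (fun m : ℕ => C ^ (1/(m:ℝ)) * β) atTop (𝓝 β) := by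
        have h := (tendsto_rpow_one_div_natCast hC_pos).mul_const β
        rwa [one_mul] at h
      have hev2 : ∀ᶠ m : ℕ in atTop, ρ - ε ≤ C ^ (1/(m:ℝ)) * β :=
        hCβ.eventually_const_le (by rw [hβ]; linarith)
      refine le_limsup_of_frequently_le ?_ hbdd
      refine (hfreq.and_eventually hev2).mono ?_
      rintro m ⟨⟨hm1, hm2⟩, hm3⟩
      have hm0 : (m:ℝ) ≠ 0 := by
        have : 0 < m := hm1
        exact_mod_cast this.ne'
      have hrw : C ^ (1/(m:ℝ)) * β = (C * β ^ m) ^ (1/(m:ℝ)) := by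
        rw [Real.mul_rpow hC_pos.le (pow_nonneg hβpos.le m), ← Real.rpow_natCast β m,
          ← Real.rpow_mul hβpos.le, mul_one_div_cancel hm0, Real.rpow_one]
      refine hm3.trans ?_
      rw [hrw]
      exact Real.rpow_le_rpow (by positivity) hm2 (by positivity)
  rw [hgrowth]
  exact le_antisymm hupper hlower
end

section
/- For finite simple graphs G and H, the reversible capacity is supermultiplicative under the strong graph product: Θ_REV(G ⊠ H) ≥ Θ_REV(G) · Θ_REV(H). -/
open Filter

/-- A reversible partial DFA: each symbol's partial transition function is injective
on its domain. -/
structure RevPartialDFA (α : Type*) where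
  /-- the (finite) state space -/
  σ : Type
  /-- the state space is finite -/
  fintype : Fintype σ
  /-- partial transition function -/
  step : σ → α → Option σ
  /-- initial state -/
  start : σ
  /-- accepting states -/
  accept : Set σ
  /-- reversibility: transitions by a fixed symbol are injective where defined -/
  reversible : ∀ (a : α) (x y q : σ), step x a = some q → step y a = some q → x = y

/-- The partial evaluation of a reversible partial DFA on a word (`none` if any
transition along the word is undefined). -/
def RevPartialDFA.eval {α : Type*} (M : RevPartialDFA α) (w : List α) : Option M.σ :=
  w.foldl (fun os a => os.bind fun s => M.step s a) (some M.start)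

/-- The language accepted by a reversible partial DFA: all transitions defined and the
final state accepting. -/
def RevPartialDFA.accepts {α : Type*} (M : RevPartialDFA α) : Set (List α) :=
  {w | ∃ s ∈ M.accept, M.eval w = some s}

/-- The reversible capacity `Θ_REV(G)`: the supremum of growth rates over reversible
partial DFAs whose accepted language is distinguishable for `G`. -/
noncomputable def revCapacity {V : Type*} (G : SimpleGraph V) : ℝ :=
  sSup {r : ℝ |
    ∃ M : RevPartialDFA V, Distinguishable G M.accepts ∧ growthRate M.accepts = r}

/-- The strong product of two simple graphs. -/
def strongProd {V W : Type*} (G : SimpleGraph V) (H : SimpleGraph W) :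
    SimpleGraph (V × W) where
  Adj x y := x ≠ y ∧ (x.1 = y.1 ∨ G.Adj x.1 y.1) ∧ (x.2 = y.2 ∨ H.Adj x.2 y.2)
  symm := by
    constructor
    rintro x y ⟨h1, h2, h3⟩
    exact ⟨h1.symm, h2.imp Eq.symm (fun h => h.symm), h3.imp Eq.symm (fun h => h.symm)⟩
  loopless := by constructor; rintro x ⟨h1, -⟩; exact h1 rfl


namespace RevCap
variable {V : Type*}

lemma finite_of_length_eq [Finite V] (S : Set (List V)) (m : ℕ)
    (h : ∀ w ∈ S, w.length = m) : S.Finite := by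
  rw [← Set.finite_coe_iff]
  refine Finite.of_injective
    (fun w : S => (fun i : Fin m => (w : List V).get ⟨(i : ℕ), by rw [h _ w.2]; exact i.isLt⟩)) ?_
  intro w₁ w₂ he
  apply Subtype.ext
  apply List.ext_get (by rw [h _ w₁.2, h _ w₂.2])
  intro i h₁ h₂
  have := congrFun he ⟨i, by rw [← h _ w₁.2]; exact h₁⟩
  simpa using this

lemma ncard_le_pow [Fintype V] (L : Set (List V)) (n : ℕ) :
    Set.ncard {w ∈ L | w.length = n} ≤ Fintype.card V ^ n := by
  have h1 : Nat.card ({w ∈ L | w.length = n} : Set (List V)) ≤ Nat.card (Fin n → V) := by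
    apply Nat.card_le_card_of_injective
      (fun w : ({w ∈ L | w.length = n} : Set (List V)) =>
        (fun i : Fin n => (w : List V).get ⟨(i : ℕ), by rw [w.2.2]; exact i.isLt⟩))
    intro w₁ w₂ he
    apply Subtype.ext
    apply List.ext_get (by rw [w₁.2.2, w₂.2.2])
    intro i h₁ h₂
    have := congrFun he ⟨i, by rw [← w₁.2.2]; exact h₁⟩
    simpa using this
  rwa [Nat.card_coe_set_eq, Nat.card_fun, Nat.card_eq_fintype_card,
    Nat.card_eq_fintype_card, Fintype.card_fin] at h1

lemma flatten_inj {m : ℕ} : ∀ (bs cs : List (List V)), bs.length = cs.length →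
    (∀ u ∈ bs, u.length = m) → (∀ u ∈ cs, u.length = m) →
    bs.flatten = cs.flatten → bs = cs := by
  intro bs
  induction bs with
  | nil => intro cs hl _ _ _; exact (List.length_eq_zero_iff.mp hl.symm).symm
  | cons b bs ih =>
    intro cs hl hb hc hf
    cases cs with
    | nil => simp at hl
    | cons c cs =>
      have hbm : b.length = m := hb b (by simp)
      have hcm : c.length = m := hc c (by simp)
      have hbc : b = c := by
        have h1 : (b ++ bs.flatten).take m = b := by rw [← hbm]; exact List.take_left
        have h2 : (c ++ cs.flatten).take m = c := by rw [← hcm]; exact List.take_left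
        rw [← h1, ← h2]
        simp only [List.flatten_cons] at hf
        rw [hf]
      have htail : bs.flatten = cs.flatten := by
        have h1 : (b ++ bs.flatten).drop m = bs.flatten := by
          rw [← hbm]; exact List.drop_left
        have h2 : (c ++ cs.flatten).drop m = cs.flatten := by
          rw [← hcm]; exact List.drop_left
        rw [← h1, ← h2]
        simp only [List.flatten_cons] at hf
        rw [hf]
      rw [hbc, ih cs (by simpa using hl) (fun u hu => hb u (by simp [hu]))
        (fun u hu => hc u (by simp [hu])) htail]

lemma length_flatten_of_blocks {m : ℕ} (bs : List (List V))
    (h : ∀ u ∈ bs, u.length = m) : bs.flatten.length = bs.length * m := by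
  induction bs with
  | nil => simp
  | cons b bs ih =>
    simp only [List.flatten_cons, List.length_append, List.length_cons]
    rw [h b (by simp), ih (fun u hu => h u (by simp [hu]))]
    ring

/-- Distinguishability of joins of equal-length blocks from a distinguishable language. -/
lemma flatten_distinguishable {G : SimpleGraph V} {L : Set (List V)}
    (hL : Distinguishable G L) {m : ℕ} (hm : 0 < m) :
    ∀ (bs cs : List (List V)), (∀ u ∈ bs, u ∈ L ∧ u.length = m) →
    (∀ u ∈ cs, u ∈ L ∧ u.length = m) →
    bs.flatten.length = cs.flatten.length → bs.flatten ≠ cs.flatten →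
    ∃ (i : ℕ) (hx : i < bs.flatten.length) (hy : i < cs.flatten.length),
      bs.flatten[i] ≠ cs.flatten[i] ∧ ¬ G.Adj bs.flatten[i] cs.flatten[i] := by
  intro bs
  induction bs with
  | nil =>
    intro cs _ _ hlen hne
    have h0 : cs.flatten.length = 0 := hlen.symm
    exact ((hne (List.length_eq_zero_iff.mp h0).symm)).elim
  | cons b bs ih =>
    intro cs hb hc hlen hne
    cases cs with
    | nil =>
      have h0 : (b :: bs).flatten.length = 0 := hlen
      exact (hne (List.length_eq_zero_iff.mp h0)).elim
    | cons c cs =>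
      have hbm := hb b (by simp)
      have hcm := hc c (by simp)
      simp only [List.flatten_cons] at hlen hne ⊢
      by_cases hbc : b = c
      · subst hbc
        have hlen' : bs.flatten.length = cs.flatten.length := by
          simp only [List.length_append] at hlen; omega
        have hne' : bs.flatten ≠ cs.flatten := by
          intro h; exact hne (by rw [h])
        obtain ⟨i, hx, hy, hgne, hgadj⟩ := ih cs (fun u hu => hb u (by simp [hu]))
          (fun u hu => hc u (by simp [hu])) hlen' hne'
        refine ⟨b.length + i, ?_, ?_, ?_, ?_⟩
        · simp only [List.length_append]; omega
        · simp only [List.length_append]; omega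
        · rw [List.getElem_append_right (by omega), List.getElem_append_right (by omega)]
          simpa [Nat.add_sub_cancel_left] using hgne
        · rw [List.getElem_append_right (by omega), List.getElem_append_right (by omega)]
          simpa [Nat.add_sub_cancel_left] using hgadj
      · obtain ⟨i, hx, hy, hgne, hgadj⟩ := hL b hbm.1 c hcm.1 (by rw [hbm.2, hcm.2]) hbc
        refine ⟨i, ?_, ?_, ?_, ?_⟩
        · simp only [List.length_append]; omega
        · simp only [List.length_append]; omega
        · rw [List.getElem_append_left hx, List.getElem_append_left hy]
          simpa [List.get_eq_getElem] using hgne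
        · rw [List.getElem_append_left hx, List.getElem_append_left hy]
          simpa [List.get_eq_getElem] using hgadj



noncomputable def gr (L : Set (List V)) (n : ℕ) : ℝ :=
  ((Set.ncard {w ∈ L | w.length = n} : ℕ) : ℝ) ^ (1 / (n : ℝ))

lemma growthRate_eq (L : Set (List V)) : growthRate L = Filter.limsup (gr L) Filter.atTop := rfl

lemma gr_nonneg (L : Set (List V)) (n : ℕ) : 0 ≤ gr L n :=
  Real.rpow_nonneg (Nat.cast_nonneg _) _

lemma gr_le_bound [Fintype V] (L : Set (List V)) (n : ℕ) :
    gr L n ≤ ((max (Fintype.card V) 1 : ℕ) : ℝ) := by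
  set C : ℝ := ((max (Fintype.card V) 1 : ℕ) : ℝ) with hC
  have hC1 : (1 : ℝ) ≤ C := by
    rw [hC]; exact_mod_cast Nat.le_max_right _ _
  rcases Nat.eq_zero_or_pos n with rfl | hn
  · simp only [gr, Nat.cast_zero, div_zero, Real.rpow_zero]
    exact hC1
  · have h1 : ((Set.ncard {w ∈ L | w.length = n} : ℕ) : ℝ) ≤ C ^ (n : ℝ) := by
      calc ((Set.ncard {w ∈ L | w.length = n} : ℕ) : ℝ)
          ≤ (((max (Fintype.card V) 1 : ℕ) ^ n : ℕ) : ℝ) := by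
            exact_mod_cast le_trans (ncard_le_pow L n)
              (Nat.pow_le_pow_left (Nat.le_max_left _ _) n)
        _ = C ^ (n : ℕ) := by rw [Nat.cast_pow]
        _ = C ^ (n : ℝ) := by rw [← Real.rpow_natCast]
    have := Real.rpow_le_rpow (Nat.cast_nonneg _) h1 (by positivity : (0:ℝ) ≤ 1 / (n:ℝ))
    calc gr L n ≤ (C ^ (n : ℝ)) ^ (1 / (n : ℝ)) := this
      _ = C := by
          rw [← Real.rpow_mul (le_trans zero_le_one hC1)]
          rw [mul_one_div, div_self (by exact_mod_cast hn.ne' : (n:ℝ) ≠ 0), Real.rpow_one]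

lemma gr_boundedUnder [Fintype V] (L : Set (List V)) :
    IsBoundedUnder (· ≤ ·) atTop (gr L) :=
  Filter.isBoundedUnder_of ⟨((max (Fintype.card V) 1 : ℕ) : ℝ), gr_le_bound L⟩

lemma gr_coboundedUnder (L : Set (List V)) :
    IsCoboundedUnder (· ≤ ·) atTop (gr L) :=
  IsBoundedUnder.isCoboundedUnder_le (Filter.isBoundedUnder_of ⟨0, fun n => gr_nonneg L n⟩)

lemma growthRate_nonneg [Fintype V] (L : Set (List V)) : 0 ≤ growthRate L := by
  rw [growthRate_eq]
  exact le_limsup_of_frequently_le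
    (Filter.Frequently.of_forall (gr_nonneg L)) (gr_boundedUnder L)

lemma growthRate_le_bound [Fintype V] (L : Set (List V)) :
    growthRate L ≤ ((max (Fintype.card V) 1 : ℕ) : ℝ) := by
  rw [growthRate_eq]
  exact limsup_le_of_le (gr_coboundedUnder L) (Filter.Eventually.of_forall (gr_le_bound L))

/-- The trivial automaton accepting nothing. -/
def emptyDFA (α : Type*) : RevPartialDFA α where
  σ := PUnit
  fintype := inferInstance
  step := fun _ _ => none
  start := PUnit.unit
  accept := ∅
  reversible := fun _ _ _ _ h _ => by cases h

lemma emptyDFA_accepts (α : Type*) : (emptyDFA α).accepts = ∅ := by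
  ext w
  simp [RevPartialDFA.accepts, emptyDFA]
  exact fun x hx _ => hx

lemma growthRate_empty : growthRate (∅ : Set (List V)) = 0 := by
  rw [growthRate_eq]
  have hev : ∀ᶠ n in atTop, gr (∅ : Set (List V)) n = 0 := by
    filter_upwards [Filter.eventually_gt_atTop 0] with n hn
    have : {w ∈ (∅ : Set (List V)) | w.length = n} = ∅ := by simp
    simp only [gr, this, Set.ncard_empty, Nat.cast_zero]
    exact Real.zero_rpow (by positivity)
  apply le_antisymm
  · apply limsup_le_of_le (gr_coboundedUnder _)
    filter_upwards [hev] with n hn; rw [hn]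
  · apply le_limsup_of_frequently_le
    · exact Filter.Frequently.of_forall (gr_nonneg _)
    · refine Filter.isBoundedUnder_of ⟨1, fun n => ?_⟩
      have : {w ∈ (∅ : Set (List V)) | w.length = n} = ∅ := by simp
      simp only [gr, this, Set.ncard_empty, Nat.cast_zero]
      rcases Nat.eq_zero_or_pos n with rfl | hn
      · simp
      · rw [Real.zero_rpow (by positivity)]; exact zero_le_one

def capSet {V : Type*} (G : SimpleGraph V) : Set ℝ :=
  {r : ℝ | ∃ M : RevPartialDFA V, Distinguishable G M.accepts ∧ growthRate M.accepts = r}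

lemma revCapacity_eq (G : SimpleGraph V) : revCapacity G = sSup (capSet G) := rfl

lemma capSet_nonempty (G : SimpleGraph V) : (capSet G).Nonempty :=
  ⟨growthRate (∅ : Set (List V)), emptyDFA V, by
    rw [emptyDFA_accepts]
    exact ⟨fun x hx => absurd hx (by simp), rfl⟩⟩

lemma capSet_bddAbove [Fintype V] (G : SimpleGraph V) : BddAbove (capSet G) := by
  refine ⟨((max (Fintype.card V) 1 : ℕ) : ℝ), ?_⟩
  rintro r ⟨M, -, rfl⟩
  exact growthRate_le_bound _

lemma revCapacity_nonneg [Fintype V] (G : SimpleGraph V) : 0 ≤ revCapacity G := by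
  rw [revCapacity_eq]
  have h0 : (0 : ℝ) ∈ capSet G := by
    have := capSet_nonempty G
    obtain ⟨r, M, hd, hr⟩ := this
    exact ⟨emptyDFA V, by
      rw [emptyDFA_accepts]
      exact ⟨fun x hx => absurd hx (by simp), growthRate_empty⟩⟩
  exact le_csSup (capSet_bddAbove G) h0

/-- KEY1: extraction of a large single-state fixed-length block set. -/
lemma exists_block_set [Fintype V] (M : RevPartialDFA V) (u : ℝ) (hu0 : 0 < u)
    (hu : u < growthRate M.accepts) :
    ∃ (m : ℕ) (_ : 0 < m) (s0 : M.σ), s0 ∈ M.accept ∧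
      u < ((Set.ncard {w : List V | w.length = m ∧ M.eval w = some s0} : ℕ) : ℝ) ^ (1/(m:ℝ)) := by
  classical
  haveI := M.fintype
  set L := M.accepts
  set r := growthRate L with hr
  set u' : ℝ := (u + r) / 2 with hu'
  have huu' : u < u' := by rw [hu']; linarith
  have hu'r : u' < r := by rw [hu']; linarith
  have hu'0 : 0 < u' := by linarith
  set K : ℕ := Fintype.card M.σ with hK
  have hK0 : 0 < K := Fintype.card_pos_iff.mpr ⟨M.start⟩
  have hdiv : (1 : ℝ) < u' / u := (one_lt_div hu0).mpr huu'
  -- frequently u' < gr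
  have hfreq : ∃ᶠ n in atTop, u' < gr L n := by
    apply frequently_lt_of_lt_limsup (gr_coboundedUnder L)
    rw [← growthRate_eq]; exact hu'r
  -- eventually K^(1/n) < u'/u
  have htend : Tendsto (fun n : ℕ => ((K : ℝ)) ^ (1 / (n : ℝ))) atTop (nhds 1) := by
    have : Tendsto (fun n : ℕ => ((K : ℝ)) ^ (1 / (n : ℝ))) atTop
        (nhds ((K : ℝ) ^ (0 : ℝ))) := by
      apply Filter.Tendsto.rpow tendsto_const_nhds tendsto_one_div_atTop_nhds_zero_nat
      left; exact_mod_cast hK0.ne'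
    simpa [Real.rpow_zero] using this
  have hev : ∀ᶠ n : ℕ in atTop, ((K : ℝ)) ^ (1 / (n : ℝ)) < u' / u :=
    htend.eventually_lt_const hdiv
  obtain ⟨m, hm1, hmu, hmK⟩ : ∃ m ≥ 1, u' < gr L m ∧ ((K : ℝ)) ^ (1 / (m : ℝ)) < u' / u := by
    have := (hfreq.and_eventually hev)
    obtain ⟨m, hm, h1, h2⟩ := Filter.frequently_atTop.mp this 1
    exact ⟨m, hm, h1, h2⟩
  have hm0 : 0 < m := hm1
  -- pigeonhole
  set T : Set (List V) := {w ∈ L | w.length = m} with hT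
  have hTfin : T.Finite := finite_of_length_eq T m (fun w hw => hw.2)
  set am : ℕ := Set.ncard T with ham'
  have haK : am ≠ 0 := by
    intro h0
    have : gr L m = 0 := by
      simp only [gr, ← hT, ← ham', h0, Nat.cast_zero]
      exact Real.zero_rpow (by positivity)
    rw [this] at hmu; linarith
  have ham : 1 ≤ am := Nat.one_le_iff_ne_zero.mpr haK
  set t : Finset (List V) := hTfin.toFinset with ht
  have htc : t.card = am := by rw [ht, ham', Set.ncard_eq_toFinset_card T hTfin]
  set evalSt : List V → M.σ := fun w => (M.eval w).getD M.start with hevalSt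
  have hsum : t.card = ∑ s : M.σ, (t.filter fun w => evalSt w = s).card :=
    Finset.card_eq_sum_card_fiberwise (fun x _ => Finset.mem_univ _)
  obtain ⟨s0, -, hs0le⟩ : ∃ s ∈ (Finset.univ : Finset M.σ),
      t.card ≤ K * (t.filter fun w => evalSt w = s).card := by
    apply Finset.exists_le_of_sum_le ⟨M.start, Finset.mem_univ _⟩
    refine le_of_eq ?_
    calc ∑ _s : M.σ, t.card = K * t.card := by
          rw [Finset.sum_const, Finset.card_univ, smul_eq_mul]
      _ = K * ∑ s : M.σ, (t.filter fun w => evalSt w = s).card := by rw [← hsum]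
      _ = ∑ s : M.σ, K * (t.filter fun w => evalSt w = s).card := by
          rw [Finset.mul_sum]
  -- the fiber is inside the block set
  set A : Set (List V) := {w : List V | w.length = m ∧ M.eval w = some s0} with hA
  have hAfin : A.Finite := finite_of_length_eq A m (fun w hw => hw.1)
  have hmemT : ∀ w ∈ t, w ∈ L ∧ w.length = m := by
    intro w hw
    have : w ∈ T := (Set.Finite.mem_toFinset hTfin).mp hw
    exact this
  have hfibA : ∀ w ∈ t.filter fun w => evalSt w = s0, w ∈ A := by
    intro w hw
    rw [Finset.mem_filter] at hw
    obtain ⟨hwT, hwev⟩ := hw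
    obtain ⟨⟨s, hs, he⟩, hlen⟩ := hmemT w hwT
    have hse : evalSt w = s := by rw [hevalSt]; simp [he]
    rw [hwev] at hse
    exact ⟨hlen, by rw [he, hse]⟩
  -- s0 is accepting
  have hfib1 : 1 ≤ (t.filter fun w => evalSt w = s0).card := by
    rcases Nat.eq_zero_or_pos (t.filter fun w => evalSt w = s0).card with h0 | h
    · rw [h0, Nat.mul_zero] at hs0le; omega
    · exact h
  have hs0acc : s0 ∈ M.accept := by
    obtain ⟨w, hw⟩ := Finset.card_pos.mp hfib1
    rw [Finset.mem_filter] at hw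
    obtain ⟨⟨s, hs, he⟩, -⟩ := hmemT w hw.1
    have hse : evalSt w = s := by rw [hevalSt]; simp [he]
    rw [hw.2] at hse
    rwa [hse]
  -- counting
  have hcard : am ≤ K * A.ncard := by
    calc am = t.card := htc.symm
      _ ≤ K * (t.filter fun w => evalSt w = s0).card := hs0le
      _ ≤ K * A.ncard := by
          apply Nat.mul_le_mul_left
          rw [← Set.ncard_coe_finset]
          exact Set.ncard_le_ncard (fun w hw => hfibA w (by exact_mod_cast hw)) hAfin
  refine ⟨m, hm0, s0, hs0acc, ?_⟩
  -- real arithmetic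
  have hgr : gr L m = ((am : ℕ) : ℝ) ^ (1 / (m : ℝ)) := rfl
  have hKpos : (0 : ℝ) < ((K : ℝ)) ^ (1 / (m : ℝ)) :=
    Real.rpow_pos_of_pos (by exact_mod_cast hK0) _
  have h2 : ((am : ℕ) : ℝ) ^ (1 / (m : ℝ)) ≤
      ((K : ℝ)) ^ (1 / (m : ℝ)) * ((A.ncard : ℕ) : ℝ) ^ (1 / (m : ℝ)) := by
    have hle : ((am : ℕ) : ℝ) ≤ (K : ℝ) * ((A.ncard : ℕ) : ℝ) := by exact_mod_cast hcard
    calc ((am : ℕ) : ℝ) ^ (1 / (m : ℝ))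
        ≤ ((K : ℝ) * ((A.ncard : ℕ) : ℝ)) ^ (1 / (m : ℝ)) :=
          Real.rpow_le_rpow (Nat.cast_nonneg _) hle (by positivity)
      _ = ((K : ℝ)) ^ (1 / (m : ℝ)) * ((A.ncard : ℕ) : ℝ) ^ (1 / (m : ℝ)) :=
          Real.mul_rpow (Nat.cast_nonneg _) (Nat.cast_nonneg _)
  have h3 : u * ((K : ℝ)) ^ (1 / (m : ℝ)) < u' := by
    have h := (lt_div_iff₀ hu0).mp hmK
    calc u * ((K : ℝ)) ^ (1 / (m : ℝ)) = ((K : ℝ)) ^ (1 / (m : ℝ)) * u := mul_comm _ _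
      _ < u' := h
  have h4 : u * ((K : ℝ)) ^ (1 / (m : ℝ)) <
      ((A.ncard : ℕ) : ℝ) ^ (1 / (m : ℝ)) * ((K : ℝ)) ^ (1 / (m : ℝ)) := by
    rw [mul_comm (((A.ncard : ℕ) : ℝ) ^ (1 / (m : ℝ)))]
    calc u * ((K : ℝ)) ^ (1 / (m : ℝ)) < u' := h3
      _ < gr L m := hmu
      _ = ((am : ℕ) : ℝ) ^ (1 / (m : ℝ)) := hgr
      _ ≤ _ := h2
  exact (mul_lt_mul_iff_of_pos_right hKpos).mp h4



variable {α β : Type*}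

def oEval (M : RevPartialDFA α) (os : Option M.σ) (w : List α) : Option M.σ :=
  w.foldl (fun os a => os.bind fun s => M.step s a) os

lemma oEval_nil (M : RevPartialDFA α) (os : Option M.σ) : oEval M os [] = os := rfl

lemma oEval_cons (M : RevPartialDFA α) (os : Option M.σ) (a : α) (w : List α) :
    oEval M os (a :: w) = oEval M (os.bind fun s => M.step s a) w := rfl

lemma oEval_append (M : RevPartialDFA α) (os : Option M.σ) (u v : List α) :
    oEval M os (u ++ v) = oEval M (oEval M os u) v := List.foldl_append

lemma oEval_none (M : RevPartialDFA α) (w : List α) : oEval M none w = none := by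
  induction w with
  | nil => rfl
  | cons a w ih => simpa [oEval_cons] using ih

lemma eval_def (M : RevPartialDFA α) (w : List α) : M.eval w = oEval M (some M.start) w := rfl

lemma eval_append_single (M : RevPartialDFA α) (os : Option M.σ) (u : List α) (a : α) :
    oEval M os (u ++ [a]) = (oEval M os u).bind fun s => M.step s a := by
  rw [oEval_append]; rfl

open Classical in
/-- The loop automaton: accepts concatenations of blocks of length `m` that each
take `M` from its start to the fixed state `s0`. -/
noncomputable def Loop (M : RevPartialDFA α) (s0 : M.σ) (m : ℕ) (hm : 0 < m) : RevPartialDFA α where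
  σ := M.σ × Fin m
  fintype := by have := M.fintype; exact instFintypeProd _ _
  step := fun p a =>
    if h : (p.2 : ℕ) + 1 < m then
      (M.step p.1 a).map (fun q' => (q', ⟨(p.2 : ℕ) + 1, h⟩))
    else
      if M.step p.1 a = some s0 then some (M.start, ⟨0, hm⟩) else none
  start := (M.start, ⟨0, hm⟩)
  accept := {(M.start, ⟨0, hm⟩)}
  reversible := by
    intro a x y q hx hy
    have inv : ∀ z : M.σ × Fin m,
        (if h : (z.2 : ℕ) + 1 < m then
          (M.step z.1 a).map (fun q' => (q', ⟨(z.2 : ℕ) + 1, h⟩))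
        else
          if M.step z.1 a = some s0 then some (M.start, ⟨0, hm⟩) else none) = some q →
        ((q.2 : ℕ) = (z.2 : ℕ) + 1 ∧ M.step z.1 a = some q.1) ∨
        ((q.2 : ℕ) = 0 ∧ ¬ ((z.2 : ℕ) + 1 < m) ∧ M.step z.1 a = some s0
          ∧ q.1 = M.start) := by
      intro z hz
      split_ifs at hz with h1 h2
      · left
        obtain ⟨q', hq', he⟩ := Option.map_eq_some_iff.mp hz
        refine ⟨?_, ?_⟩
        · have := congrArg (fun w => ((Prod.snd w : Fin m) : ℕ)) he
          simpa using this.symm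
        · rw [hq']; exact congrArg some (congrArg Prod.fst he)
      · right
        have he := Option.some_inj.mp hz
        refine ⟨?_, h1, h2, ?_⟩
        · have := congrArg (fun w => ((Prod.snd w : Fin m) : ℕ)) he
          simpa using this.symm
        · exact (congrArg Prod.fst he).symm
    rcases inv x hx with ⟨hx2, hx1⟩ | ⟨hx2, hx3, hx1, hx4⟩ <;>
      rcases inv y hy with ⟨hy2, hy1⟩ | ⟨hy2, hy3, hy1, hy4⟩
    · exact Prod.ext (M.reversible a x.1 y.1 q.1 hx1 hy1) (Fin.ext (by omega))
    · omega
    · omega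
    · refine Prod.ext (M.reversible a x.1 y.1 s0 hx1 hy1) (Fin.ext ?_)
      have := x.2.isLt; have := y.2.isLt; omega

/-- Membership in the block set. -/
def IsBlock (M : RevPartialDFA α) (s0 : M.σ) (m : ℕ) (u : List α) : Prop :=
  u.length = m ∧ M.eval u = some s0

lemma loop_eval_inv (M : RevPartialDFA α) (s0 : M.σ) (m : ℕ) (hm : 0 < m) (w : List α)
    (q : M.σ) (j : Fin m)
    (h : (Loop M s0 m hm).eval w = some (q, j)) :
    ∃ (bs : List (List α)) (u : List α), (∀ v ∈ bs, IsBlock M s0 m v) ∧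
      w = bs.flatten ++ u ∧ u.length = (j : ℕ) ∧ oEval M (some M.start) u = some q := by
  induction w using List.reverseRecOn generalizing q j with
  | nil =>
    refine ⟨[], [], by simp, by simp, ?_, ?_⟩
    · have : ((M.start, ⟨0, hm⟩) : (Loop M s0 m hm).σ) = (q, j) := Option.some_inj.mp h
      have := congrArg (fun z => ((Prod.snd z : Fin m) : ℕ)) this
      simpa using this
    · have : ((M.start, ⟨0, hm⟩) : (Loop M s0 m hm).σ) = (q, j) := Option.some_inj.mp h
      rw [oEval_nil]
      exact congrArg (some ∘ Prod.fst) this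
  | append_singleton w a ih =>
    rw [eval_def, eval_append_single] at h
    obtain ⟨p, hp, hstep⟩ := Option.bind_eq_some_iff.mp h
    obtain ⟨p1, i⟩ := p
    obtain ⟨bs, u, hbs, hw, hu, hev⟩ := ih p1 i hp
    by_cases hlt : (i : ℕ) + 1 < m
    · simp only [Loop, dif_pos hlt, Option.map_eq_some_iff] at hstep
      obtain ⟨q', hq', heq⟩ := hstep
      have hq1 : q' = q := congrArg Prod.fst heq
      have hj : (i : ℕ) + 1 = (j : ℕ) := congrArg (fun z => ((Prod.snd z : Fin m) : ℕ)) heq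
      refine ⟨bs, u ++ [a], hbs, by rw [hw, List.append_assoc], by simp [hu, hj.symm], ?_⟩
      rw [eval_append_single, hev]
      simpa [hq1] using hq'
    · simp only [Loop, dif_neg hlt] at hstep
      split_ifs at hstep with hs
      · have heq : ((M.start, ⟨0, hm⟩) : M.σ × Fin m) = (q, j) := Option.some_inj.mp hstep
        have hq : M.start = q := congrArg Prod.fst heq
        have hj : (0 : ℕ) = (j : ℕ) := congrArg (fun z => ((Prod.snd z : Fin m) : ℕ)) heq
        refine ⟨bs ++ [u ++ [a]], [], ?_, ?_, by simp [hj.symm], by rw [oEval_nil, hq]⟩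
        · intro v hv
          rcases List.mem_append.mp hv with h' | h'
          · exact hbs v h'
          · have : v = u ++ [a] := by simpa using h'
            subst this
            constructor
            · have := i.isLt; simp [hu]; omega
            · rw [eval_def, eval_append_single, ← eval_def]
              rw [eval_def, hev]; simpa using hs
        · rw [hw]; simp [List.append_assoc]

lemma block_oEval (M : RevPartialDFA α) (s0 : M.σ) (m : ℕ) (hm : 0 < m) :
    ∀ (u : List α) (p : M.σ) (i : Fin m), (i : ℕ) + u.length = m →
      oEval M (some p) u = some s0 →
      oEval (Loop M s0 m hm) (some (p, i)) u = some (M.start, ⟨0, hm⟩) := by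
  intro u
  induction u with
  | nil => intro p i hlen; exact absurd hlen (by have := i.isLt; simp; omega)
  | cons a u ih =>
    intro p i hlen hev
    rw [oEval_cons] at hev
    have hcons : oEval M (M.step p a) u = some s0 := hev
    obtain ⟨p', hp'⟩ : ∃ p', M.step p a = some p' := by
      cases hstep : M.step p a with
      | none => rw [hstep, oEval_none] at hcons; exact absurd hcons (by simp)
      | some p' => exact ⟨p', rfl⟩
    rw [oEval_cons]
    by_cases hlt : (i : ℕ) + 1 < m
    · have hstep' : (Loop M s0 m hm).step (p, i) a = some (p', ⟨(i:ℕ)+1, hlt⟩) := by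
        simp only [Loop, dif_pos hlt, hp', Option.map_some]
      show oEval (Loop M s0 m hm) ((Loop M s0 m hm).step (p, i) a) u = _
      rw [hstep']
      exact ih p' ⟨(i:ℕ)+1, hlt⟩ (by simp at hlen ⊢; omega) (by rw [← hcons, hp'])
    · -- last symbol: u must be []
      have hu : u = [] := by
        have : u.length = 0 := by have := i.isLt; simp at hlen; omega
        exact List.length_eq_zero_iff.mp this
      subst hu
      have hs : M.step p a = some s0 := by rw [hp']; rw [hp', oEval_nil] at hcons; exact hcons
      have hstep' : (Loop M s0 m hm).step (p, i) a = some (M.start, ⟨0, hm⟩) := by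
        simp only [Loop, dif_neg hlt, if_pos hs]
      show oEval (Loop M s0 m hm) ((Loop M s0 m hm).step (p, i) a) [] = _
      rw [hstep']
      rfl

lemma loop_eval_flatten (M : RevPartialDFA α) (s0 : M.σ) (m : ℕ) (hm : 0 < m)
    (bs : List (List α)) (hbs : ∀ v ∈ bs, IsBlock M s0 m v) :
    oEval (Loop M s0 m hm) (some (M.start, ⟨0, hm⟩)) bs.flatten
      = some (M.start, ⟨0, hm⟩) := by
  induction bs with
  | nil => rfl
  | cons b bs ih =>
    have hb := hbs b (by simp)
    rw [List.flatten_cons, oEval_append]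
    have h1 : oEval (Loop M s0 m hm) (some (M.start, ⟨0, hm⟩)) b
        = some ((M.start : M.σ), (⟨0, hm⟩ : Fin m)) :=
      block_oEval M s0 m hm b M.start ⟨0, hm⟩ (by simp [hb.1]) hb.2
    rw [h1]
    exact ih (fun v hv => hbs v (by simp [hv]))

lemma loop_accepts (M : RevPartialDFA α) (s0 : M.σ) (m : ℕ) (hm : 0 < m) (w : List α) :
    w ∈ (Loop M s0 m hm).accepts ↔
      ∃ bs : List (List α), (∀ v ∈ bs, IsBlock M s0 m v) ∧ w = bs.flatten := by
  constructor
  · rintro ⟨s, hs, hev⟩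
    have hss : s = (M.start, ⟨0, hm⟩) := hs
    subst hss
    obtain ⟨bs, u, hbs, hw, hu, -⟩ := loop_eval_inv M s0 m hm w M.start ⟨0, hm⟩ hev
    have : u = [] := List.length_eq_zero_iff.mp (by simpa using hu)
    exact ⟨bs, hbs, by simpa [this] using hw⟩
  · rintro ⟨bs, hbs, rfl⟩
    exact ⟨(M.start, ⟨0, hm⟩), rfl, loop_eval_flatten M s0 m hm bs hbs⟩



/-- The product (pairing) automaton. -/
def Pair (M : RevPartialDFA α) (N : RevPartialDFA β) : RevPartialDFA (α × β) where
  σ := M.σ × N.σ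
  fintype := by have := M.fintype; have := N.fintype; exact instFintypeProd _ _
  step := fun p ab => (M.step p.1 ab.1).bind fun p' => (N.step p.2 ab.2).map fun q' => (p', q')
  start := (M.start, N.start)
  accept := {pq | pq.1 ∈ M.accept ∧ pq.2 ∈ N.accept}
  reversible := by
    intro ab x y q hx hy
    obtain ⟨px, hpx, hmx⟩ := Option.bind_eq_some_iff.mp hx
    obtain ⟨qx, hqx, hex⟩ := Option.map_eq_some_iff.mp hmx
    obtain ⟨py, hpy, hmy⟩ := Option.bind_eq_some_iff.mp hy
    obtain ⟨qy, hqy, hey⟩ := Option.map_eq_some_iff.mp hmy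
    have h1 : px = q.1 := congrArg Prod.fst hex
    have h2 : qx = q.2 := congrArg Prod.snd hex
    have h3 : py = q.1 := congrArg Prod.fst hey
    have h4 : qy = q.2 := congrArg Prod.snd hey
    exact Prod.ext
      (M.reversible ab.1 x.1 y.1 q.1 (h1 ▸ hpx) (h3 ▸ hpy))
      (N.reversible ab.2 x.2 y.2 q.2 (h2 ▸ hqx) (h4 ▸ hqy))

lemma pair_oEval (M : RevPartialDFA α) (N : RevPartialDFA β) :
    ∀ (w : List (α × β)) (p : M.σ) (q : N.σ),
      oEval (Pair M N) (some (p, q)) w =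
        (oEval M (some p) (w.map Prod.fst)).bind fun p' =>
          (oEval N (some q) (w.map Prod.snd)).map fun q' => (p', q') := by
  intro w
  induction w with
  | nil => intro p q; rfl
  | cons ab w ih =>
    intro p q
    rw [List.map_cons, List.map_cons, oEval_cons, oEval_cons, oEval_cons]
    simp only [Option.bind_some]
    show oEval (Pair M N) ((Pair M N).step (p, q) ab) w = _
    cases hma : M.step p ab.1 with
    | none =>
      rw [show (Pair M N).step (p, q) ab = none by
        simp only [Pair, hma, Option.bind_none]]
      rw [oEval_none, oEval_none]
      rfl
    | some p' =>
      cases hnb : N.step q ab.2 with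
      | none =>
        rw [show (Pair M N).step (p, q) ab = none by
          simp only [Pair, hma, hnb, Option.bind_some, Option.map_none]]
        rw [oEval_none, oEval_none]
        cases oEval M (some p') (w.map Prod.fst) <;> rfl
      | some q' =>
        rw [show (Pair M N).step (p, q) ab = some (p', q') by
          simp only [Pair, hma, hnb, Option.bind_some, Option.map_some]]
        exact ih p' q'

lemma pair_accepts (M : RevPartialDFA α) (N : RevPartialDFA β) (w : List (α × β)) :
    w ∈ (Pair M N).accepts ↔
      w.map Prod.fst ∈ M.accepts ∧ w.map Prod.snd ∈ N.accepts := by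
  constructor
  · rintro ⟨s, hs, hev⟩
    rw [eval_def] at hev
    rw [show ((Pair M N).start : (Pair M N).σ) = ((M.start, N.start) : M.σ × N.σ) from rfl] at hev
    rw [pair_oEval] at hev
    obtain ⟨p', hp', hmap⟩ := Option.bind_eq_some_iff.mp hev
    obtain ⟨q', hq', he⟩ := Option.map_eq_some_iff.mp hmap
    have hs1 : p' = s.1 := congrArg Prod.fst he
    have hs2 : q' = s.2 := congrArg Prod.snd he
    exact ⟨⟨s.1, hs.1, by rw [eval_def, ← hs1]; exact hp'⟩,
           ⟨s.2, hs.2, by rw [eval_def, ← hs2]; exact hq'⟩⟩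
  · rintro ⟨⟨p, hp, hep⟩, ⟨q, hq, heq⟩⟩
    refine ⟨(p, q), ⟨hp, hq⟩, ?_⟩
    rw [eval_def]
    rw [show ((Pair M N).start : (Pair M N).σ) = ((M.start, N.start) : M.σ × N.σ) from rfl]
    rw [pair_oEval, ← eval_def, ← eval_def, hep, heq]
    rfl

lemma proj_eq {w₁ w₂ : List (α × β)} (h1 : w₁.map Prod.fst = w₂.map Prod.fst)
    (h2 : w₁.map Prod.snd = w₂.map Prod.snd) : w₁ = w₂ := by
  induction w₁ generalizing w₂ with
  | nil => cases w₂ <;> simp_all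
  | cons a w ih =>
    cases w₂ with
    | nil => simp_all
    | cons b w₂ =>
      simp only [List.map_cons, List.cons.injEq] at h1 h2
      exact by rw [ih h1.2 h2.2, Prod.ext h1.1 h2.1]




/-- KEY2: lower bound on the number of accepted words of the paired loop automata. -/
lemma count_ge {V W : Type*} [Fintype V] [Fintype W]
    (M : RevPartialDFA V) (N : RevPartialDFA W) (s0 : M.σ) (t0 : N.σ)
    (m n : ℕ) (hm : 0 < m) (hn : 0 < n) (k : ℕ) :
    Set.ncard {w : List V | w.length = m ∧ M.eval w = some s0} ^ (n * k) *
      Set.ncard {w : List W | w.length = n ∧ N.eval w = some t0} ^ (m * k) ≤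
    Set.ncard {w ∈ (Pair (Loop M s0 m hm) (Loop N t0 n hn)).accepts |
      w.length = k * (m * n)} := by
  classical
  set A : Set (List V) := {w : List V | w.length = m ∧ M.eval w = some s0} with hA
  set B : Set (List W) := {w : List W | w.length = n ∧ N.eval w = some t0} with hB
  set P := Pair (Loop M s0 m hm) (Loop N t0 n hn) with hP
  set U : Set (List (V × W)) := {w ∈ P.accepts | w.length = k * (m * n)} with hU
  have hAfin : A.Finite := finite_of_length_eq A m (fun w hw => hw.1)
  have hBfin : B.Finite := finite_of_length_eq B n (fun w hw => hw.1)
  have hUfin : U.Finite := finite_of_length_eq U (k * (m * n)) (fun w hw => hw.2)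
  haveI : Finite ↥A := Set.finite_coe_iff.mpr hAfin
  haveI : Finite ↥B := Set.finite_coe_iff.mpr hBfin
  haveI : Finite ↥U := Set.finite_coe_iff.mpr hUfin
  -- the injection
  set F : ((Fin (n * k) → ↥A) × (Fin (m * k) → ↥B)) → List (V × W) := fun gh =>
    (List.ofFn (fun i => ((gh.1 i : List V)))).flatten.zip
      ((List.ofFn (fun i => ((gh.2 i : List W)))).flatten) with hF
  have hlen1 : ∀ gh : ((Fin (n * k) → ↥A) × (Fin (m * k) → ↥B)),
      (List.ofFn (fun i => ((gh.1 i : List V)))).flatten.length = k * (m * n) := by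
    intro gh
    rw [length_flatten_of_blocks (m := m) _ (fun u hu => ?_), List.length_ofFn]
    · ring
    · obtain ⟨i, rfl⟩ := (List.mem_ofFn).mp hu
      exact (gh.1 i).2.1
  have hlen2 : ∀ gh : ((Fin (n * k) → ↥A) × (Fin (m * k) → ↥B)),
      (List.ofFn (fun i => ((gh.2 i : List W)))).flatten.length = k * (m * n) := by
    intro gh
    rw [length_flatten_of_blocks (m := n) _ (fun u hu => ?_), List.length_ofFn]
    · ring
    · obtain ⟨i, rfl⟩ := (List.mem_ofFn).mp hu
      exact (gh.2 i).2.1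
  have hmemU : ∀ gh, F gh ∈ U := by
    intro gh
    constructor
    · rw [pair_accepts]
      constructor
      · rw [List.map_fst_zip (by rw [hlen1, hlen2])]
        rw [loop_accepts]
        refine ⟨_, fun v hv => ?_, rfl⟩
        obtain ⟨i, rfl⟩ := (List.mem_ofFn).mp hv
        exact (gh.1 i).2
      · rw [List.map_snd_zip (by rw [hlen1, hlen2])]
        rw [loop_accepts]
        refine ⟨_, fun v hv => ?_, rfl⟩
        obtain ⟨i, rfl⟩ := (List.mem_ofFn).mp hv
        exact (gh.2 i).2
    · show (F gh).length = k * (m * n)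
      rw [hF]
      simp only [List.length_zip]
      rw [hlen1, hlen2, min_self]
  have hinj : Function.Injective F := by
    intro gh gh' he
    have h1 : (List.ofFn (fun i => ((gh.1 i : List V)))).flatten =
        (List.ofFn (fun i => ((gh'.1 i : List V)))).flatten := by
      have e1 := congrArg (List.map Prod.fst) he
      rwa [hF, List.map_fst_zip (by rw [hlen1, hlen2]),
        List.map_fst_zip (by rw [hlen1, hlen2])] at e1
    have h2 : (List.ofFn (fun i => ((gh.2 i : List W)))).flatten =
        (List.ofFn (fun i => ((gh'.2 i : List W)))).flatten := by
      have e2 := congrArg (List.map Prod.snd) he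
      rwa [hF, List.map_snd_zip (by rw [hlen1, hlen2]),
        List.map_snd_zip (by rw [hlen1, hlen2])] at e2
    have g1 : (fun i => ((gh.1 i : List V))) = (fun i => ((gh'.1 i : List V))) := by
      apply List.ofFn_inj.mp
      apply flatten_inj (m := m) _ _ (by simp) ?_ ?_ h1
      · intro u hu; obtain ⟨i, rfl⟩ := (List.mem_ofFn).mp hu; exact (gh.1 i).2.1
      · intro u hu; obtain ⟨i, rfl⟩ := (List.mem_ofFn).mp hu; exact (gh'.1 i).2.1
    have g2 : (fun i => ((gh.2 i : List W))) = (fun i => ((gh'.2 i : List W))) := by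
      apply List.ofFn_inj.mp
      apply flatten_inj (m := n) _ _ (by simp) ?_ ?_ h2
      · intro u hu; obtain ⟨i, rfl⟩ := (List.mem_ofFn).mp hu; exact (gh.2 i).2.1
      · intro u hu; obtain ⟨i, rfl⟩ := (List.mem_ofFn).mp hu; exact (gh'.2 i).2.1
    apply Prod.ext
    · funext i
      exact Subtype.ext (congrFun g1 i)
    · funext i
      exact Subtype.ext (congrFun g2 i)
  have hcard := Nat.card_le_card_of_injective
    (fun gh : ((Fin (n * k) → ↥A) × (Fin (m * k) → ↥B)) => (⟨F gh, hmemU gh⟩ : ↥U))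
    (fun gh gh' he => hinj (congrArg Subtype.val he))
  rw [Nat.card_prod, Nat.card_fun, Nat.card_fun, Nat.card_eq_fintype_card (α := Fin (n * k)),
    Nat.card_eq_fintype_card (α := Fin (m * k)), Fintype.card_fin, Fintype.card_fin,
    Nat.card_coe_set_eq, Nat.card_coe_set_eq, Nat.card_coe_set_eq] at hcard
  exact hcard


/-- KEY3: the language of the paired loop automata is distinguishable for the strong
product. -/
lemma pair_loop_distinguishable {V W : Type*} (G : SimpleGraph V) (H : SimpleGraph W)
    (M : RevPartialDFA V) (N : RevPartialDFA W)
    (hG : Distinguishable G M.accepts) (hH : Distinguishable H N.accepts)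
    (s0 : M.σ) (t0 : N.σ) (hs0 : s0 ∈ M.accept) (ht0 : t0 ∈ N.accept)
    (m n : ℕ) (hm : 0 < m) (hn : 0 < n) :
    Distinguishable (strongProd G H) (Pair (Loop M s0 m hm) (Loop N t0 n hn)).accepts := by
  intro x hx y hy hlen hne
  rw [pair_accepts] at hx hy
  obtain ⟨hx1, hx2⟩ := hx
  obtain ⟨hy1, hy2⟩ := hy
  rw [loop_accepts] at hx1 hx2 hy1 hy2
  obtain ⟨bs, hbs, hbsx⟩ := hx1
  obtain ⟨cs, hcs, hcsy⟩ := hy1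
  obtain ⟨ds, hds, hdsx⟩ := hx2
  obtain ⟨es, hes, hesy⟩ := hy2
  by_cases hfst : x.map Prod.fst = y.map Prod.fst
  · -- second coordinates must differ
    have hsnd : x.map Prod.snd ≠ y.map Prod.snd := by
      intro h; exact hne (proj_eq hfst h)
    have hlen2 : (x.map Prod.snd).length = (y.map Prod.snd).length := by
      simp [hlen]
    obtain ⟨i, hix, hiy, hgne, hgadj⟩ := flatten_distinguishable hH hn ds es
      (fun u hu => ⟨⟨t0, ht0, (hds u hu).2⟩, (hds u hu).1⟩)
      (fun u hu => ⟨⟨t0, ht0, (hes u hu).2⟩, (hes u hu).1⟩)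
      (by rw [← hdsx, ← hesy]; exact hlen2) (by rw [← hdsx, ← hesy]; exact hsnd)
    simp only [← hdsx] at hix hgne hgadj
    simp only [← hesy] at hiy hgne hgadj
    have hix' : i < x.length := by simpa using hix
    have hiy' : i < y.length := by simpa using hiy
    have hxv : (x.map Prod.snd)[i]'hix = x[i].2 := by
      simp [List.getElem_map]
    have hyv : (y.map Prod.snd)[i]'hiy = y[i].2 := by
      simp [List.getElem_map]
    rw [hxv, hyv] at hgne hgadj
    refine ⟨i, hix', hiy', ?_, ?_⟩
    · simp only [List.get_eq_getElem]
      intro h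
      exact hgne (congrArg Prod.snd h)
    · simp only [List.get_eq_getElem]
      rintro ⟨hne2, h1, h2⟩
      rcases h2 with h2 | h2
      · exact hgne h2
      · exact hgadj h2
  · have hlen1 : (x.map Prod.fst).length = (y.map Prod.fst).length := by
      simp [hlen]
    obtain ⟨i, hix, hiy, hgne, hgadj⟩ := flatten_distinguishable hG hm bs cs
      (fun u hu => ⟨⟨s0, hs0, (hbs u hu).2⟩, (hbs u hu).1⟩)
      (fun u hu => ⟨⟨s0, hs0, (hcs u hu).2⟩, (hcs u hu).1⟩)
      (by rw [← hbsx, ← hcsy]; exact hlen1) (by rw [← hbsx, ← hcsy]; exact hfst)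
    simp only [← hbsx] at hix hgne hgadj
    simp only [← hcsy] at hiy hgne hgadj
    have hix' : i < x.length := by simpa using hix
    have hiy' : i < y.length := by simpa using hiy
    have hxv : (x.map Prod.fst)[i]'hix = x[i].1 := by
      simp [List.getElem_map]
    have hyv : (y.map Prod.fst)[i]'hiy = y[i].1 := by
      simp [List.getElem_map]
    rw [hxv, hyv] at hgne hgadj
    refine ⟨i, hix', hiy', ?_, ?_⟩
    · simp only [List.get_eq_getElem]
      intro h
      exact hgne (congrArg Prod.fst h)
    · simp only [List.get_eq_getElem]
      rintro ⟨hne2, h1, h2⟩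
      rcases h1 with h1 | h1
      · exact hgne h1
      · exact hgadj h1


/-- Core estimate: any product of positive reals below the two capacities is at most
the capacity of the strong product. -/
lemma core_le {V W : Type*} [Fintype V] [Fintype W] (G : SimpleGraph V) (H : SimpleGraph W)
    (u v : ℝ) (hu0 : 0 < u) (hv0 : 0 < v)
    (hu : u < revCapacity G) (hv : v < revCapacity H) :
    u * v ≤ revCapacity (strongProd G H) := by
  classical
  rw [revCapacity_eq] at hu hv
  obtain ⟨r, ⟨M, hMd, hMr⟩, hur⟩ := exists_lt_of_lt_csSup (capSet_nonempty G) hu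
  obtain ⟨s, ⟨N, hNd, hNr⟩, hvs⟩ := exists_lt_of_lt_csSup (capSet_nonempty H) hv
  obtain ⟨m, hm, s0, hs0, hA⟩ := exists_block_set M u hu0 (by rw [hMr]; exact hur)
  obtain ⟨n, hn, t0, ht0, hB⟩ := exists_block_set N v hv0 (by rw [hNr]; exact hvs)
  set A : Set (List V) := {w : List V | w.length = m ∧ M.eval w = some s0} with hAdef
  set B : Set (List W) := {w : List W | w.length = n ∧ N.eval w = some t0} with hBdef
  set P := Pair (Loop M s0 m hm) (Loop N t0 n hn) with hPdef
  set a : ℝ := ((A.ncard : ℕ) : ℝ) ^ (1 / (m : ℝ)) with hadef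
  set b : ℝ := ((B.ncard : ℕ) : ℝ) ^ (1 / (n : ℝ)) with hbdef
  have ha0 : 0 ≤ a := Real.rpow_nonneg (Nat.cast_nonneg _) _
  have hb0 : 0 ≤ b := Real.rpow_nonneg (Nat.cast_nonneg _) _
  -- growth rate of P is at least a * b
  have hfreq : ∃ᶠ l in atTop, a * b ≤ gr P.accepts l := by
    rw [Filter.frequently_atTop]
    intro N0
    refine ⟨(max N0 1) * (m * n), ?_, ?_⟩
    · calc N0 = N0 * 1 := (mul_one _).symm
        _ ≤ (max N0 1) * (m * n) := by
            apply Nat.mul_le_mul (Nat.le_max_left _ _)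
            exact Nat.one_le_iff_ne_zero.mpr (by positivity)
    · set k := max N0 1 with hkdef
      have hk : 0 < k := lt_of_lt_of_le Nat.one_pos (Nat.le_max_right _ _)
      set l := k * (m * n) with hldef
      have hl : 0 < l := by positivity
      have hcount := count_ge M N s0 t0 m n hm hn k
      have hcast : ((A.ncard ^ (n * k) * B.ncard ^ (m * k) : ℕ) : ℝ) ≤
          ((Set.ncard {w ∈ P.accepts | w.length = l} : ℕ) : ℝ) := by
        exact_mod_cast hcount
      have h1 : gr P.accepts l ≥
          (((A.ncard ^ (n * k) * B.ncard ^ (m * k) : ℕ) : ℝ)) ^ (1 / (l : ℝ)) :=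
        Real.rpow_le_rpow (Nat.cast_nonneg _) hcast (by positivity)
      refine le_trans (le_of_eq ?_) h1
      -- a * b = (ncA^(nk) * ncB^(mk))^(1/l)
      have hm' : (m : ℝ) ≠ 0 := by exact_mod_cast hm.ne'
      have hn' : (n : ℝ) ≠ 0 := by exact_mod_cast hn.ne'
      have hk' : (k : ℝ) ≠ 0 := by exact_mod_cast hk.ne'
      have hl' : (l : ℝ) ≠ 0 := by exact_mod_cast hl.ne'
      push_cast
      rw [Real.mul_rpow (by positivity) (by positivity)]
      rw [← Real.rpow_natCast ((A.ncard : ℝ)) (n * k), ← Real.rpow_natCast ((B.ncard : ℝ)) (m * k)]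
      rw [← Real.rpow_mul (Nat.cast_nonneg _), ← Real.rpow_mul (Nat.cast_nonneg _)]
      rw [hadef, hbdef]
      congr 1
      · congr 1
        push_cast
        field_simp
        simp only [hldef]
        push_cast
        ring
      · congr 1
        push_cast
        field_simp
        simp only [hldef]
        push_cast
        ring
  have hgrowth : a * b ≤ growthRate P.accepts := by
    rw [growthRate_eq]
    exact le_limsup_of_frequently_le hfreq (gr_boundedUnder _)
  have hmem : growthRate P.accepts ∈ capSet (strongProd G H) :=
    ⟨P, pair_loop_distinguishable G H M N hMd hNd s0 t0 hs0 ht0 m n hm hn, rfl⟩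
  calc u * v ≤ a * b := mul_le_mul hA.le hB.le hv0.le ha0
    _ ≤ growthRate P.accepts := hgrowth
    _ ≤ revCapacity (strongProd G H) := by
        rw [revCapacity_eq]
        exact le_csSup (capSet_bddAbove _) hmem

end RevCap

/-- the reversible capacity is supermultiplicative under the strong
graph product. -/
theorem revCapacity_strongProd_ge {V W : Type*} [Fintype V] [Fintype W]
    (G : SimpleGraph V) (H : SimpleGraph W) :
    revCapacity (strongProd G H) ≥ revCapacity G * revCapacity H := by
  classical
  rw [ge_iff_le]
  have hRG0 : 0 ≤ revCapacity G := RevCap.revCapacity_nonneg G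
  have hRH0 : 0 ≤ revCapacity H := RevCap.revCapacity_nonneg H
  have hRP0 : 0 ≤ revCapacity (strongProd G H) := RevCap.revCapacity_nonneg _
  rcases eq_or_lt_of_le hRG0 with h | hRG
  · rw [← h, zero_mul]; exact hRP0
  rcases eq_or_lt_of_le hRH0 with h | hRH
  · rw [← h, mul_zero]; exact hRP0
  by_contra hcon
  push_neg at hcon
  set RP := revCapacity (strongProd G H) with hRP
  set RG := revCapacity G with hRGd
  set RH := revCapacity H with hRHd
  have hprodpos : 0 < RG * RH := mul_pos hRG hRH
  set θ : ℝ := RP / (RG * RH) with hθ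
  have hθ0 : 0 ≤ θ := div_nonneg hRP0 hprodpos.le
  have hθ1 : θ < 1 := (div_lt_one hprodpos).mpr hcon
  set lam : ℝ := Real.sqrt ((θ + 1) / 2) with hlam
  have hmid0 : 0 < (θ + 1) / 2 := by linarith
  have hmid1 : (θ + 1) / 2 < 1 := by linarith
  have hlam0 : 0 < lam := Real.sqrt_pos.mpr hmid0
  have hlamsq : lam ^ 2 = (θ + 1) / 2 := Real.sq_sqrt hmid0.le
  have hlam1 : lam < 1 := by nlinarith [hlamsq, hlam0]
  have hu : lam * RG < RG := by nlinarith
  have hv : lam * RH < RH := by nlinarith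
  have hcore := RevCap.core_le G H (lam * RG) (lam * RH)
    (mul_pos hlam0 hRG) (mul_pos hlam0 hRH) hu hv
  have hgt : RP < (lam * RG) * (lam * RH) := by
    have : (lam * RG) * (lam * RH) = lam ^ 2 * (RG * RH) := by ring
    rw [this, hlamsq]
    have hRPeq : RP = θ * (RG * RH) := by
      rw [hθ, div_mul_cancel₀]
      exact hprodpos.ne'
    rw [hRPeq]
    apply mul_lt_mul_of_pos_right _ hprodpos
    linarith
  linarith
end

section
/- Let G be a finite simple graph with |V(G)| ≥ 2 and Shannon capacity Θ(G) > 1. Then the reversible capacity satisfies log Θ_REV(G) ≥ (log|V(G)| · log Θ(G)) / (log|V(G)| + log Θ(G)); equivalently Θ_REV(G) ≥ Θ(G)^{log|V(G)| / (log|V(G)| + log Θ(G))}. -/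
open Filter

namespace RevCapProof
variable {V : Type*}
abbrev St (V : Type*) (D : ℕ) := {l : List V // l.length ≤ D}
abbrev TT (V : Type*) (D : ℕ) := St V D ⊕ St V D
def root (D : ℕ) : TT V D := Sum.inl ⟨[], by simp⟩

instance stFinite (D : ℕ) [Finite V] : Finite (St V D) := by
  unfold St
  have : Finite {l : List V | l.length ≤ D} := (List.finite_length_le V D).to_subtype
  exact this

noncomputable instance stFintype (D : ℕ) [Fintype V] : Fintype (St V D) :=
  Fintype.ofFinite _

noncomputable instance ttFintype (D : ℕ) [Fintype V] : Fintype (TT V D) := by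
  unfold TT; infer_instance


lemma inl_inj {D : ℕ} {l₁ l₂ : List V} {h₁ h₂} :
    (Sum.inl ⟨l₁, h₁⟩ : TT V D) = Sum.inl ⟨l₂, h₂⟩ ↔ l₁ = l₂ := by
  constructor
  · intro h
    have := Sum.inl.inj h
    exact congrArg Subtype.val this
  · rintro rfl; rfl

lemma inr_inj {D : ℕ} {l₁ l₂ : List V} {h₁ h₂} :
    (Sum.inr ⟨l₁, h₁⟩ : TT V D) = Sum.inr ⟨l₂, h₂⟩ ↔ l₁ = l₂ := by
  constructor
  · intro h
    have := Sum.inr.inj h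
    exact congrArg Subtype.val this
  · rintro rfl; rfl

lemma inl_ne_inr {D : ℕ} {s t : St V D} : (Sum.inl s : TT V D) ≠ Sum.inr t :=
  fun h => by cases h

lemma root_ne_inr {D : ℕ} {t : St V D} : root D ≠ Sum.inr t := inl_ne_inr

lemma inl_eq_root_iff {D : ℕ} {l : List V} {h} :
    (Sum.inl ⟨l, h⟩ : TT V D) = root D ↔ l = [] := by
  unfold root; exact inl_inj

section Machine
variable (K M : ℕ) (P : Finset (List V)) (e : ↥P ↪ (Fin M → V))
def codeL (w : ↥P) : List V := List.ofFn (e w)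
lemma codeL_injective : Function.Injective (codeL M P e) :=
  fun a b h => e.injective (List.ofFn_injective h)
lemma codeL_length (w : ↥P) : (codeL M P e w).length = M := by simp [codeL]
open scoped Classical in
noncomputable def dec (c : List V) : Option ↥P :=
  if h : ∃ w : ↥P, codeL M P e w = c then some h.choose else none
lemma dec_eq_some {c : List V} {w : ↥P} :
    dec M P e c = some w ↔ codeL M P e w = c := by
  classical
  unfold dec
  split_ifs with h
  · constructor
    · rintro hs
      have := h.choose_spec
      have hw : h.choose = w := by simpa using hs
      rw [← hw]; exact this
    · intro hc
      have := h.choose_spec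
      have : h.choose = w := codeL_injective M P e (by rw [this, hc])
      simp [this]
  · simp only [reduceCtorEq, false_iff]
    intro hc
    exact h ⟨w, hc⟩
open scoped Classical in
noncomputable def tstep : TT V (K + M) → V → Option (TT V (K + M))
  | Sum.inl p, a =>
      if _h : (p.1 ++ [a]).length < M ∧ ∃ w : ↥P, (p.1 ++ [a]) <+: codeL M P e w then
        some (Sum.inl ⟨p.1 ++ [a], by omega⟩)
      else
        (dec M P e (p.1 ++ [a])).bind fun w =>
          if hw : (w : List V).length ≤ K + M then some (Sum.inr ⟨w, hw⟩) else none
  | Sum.inr ⟨[], _⟩, _ => none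
  | Sum.inr ⟨b :: u', h⟩, a =>
      if b = a ∧ ∃ w : ↥P, (b :: u') <:+ (w : List V) then
        some (if u' = [] then root (K + M) else Sum.inr ⟨u', by
          simp only [List.length_cons] at h; omega⟩)
      else none

/-- Inversion for successful transitions. -/
lemma tstep_some_cases {a : V} {x q : TT V (K + M)}
    (hs : tstep K M P e x a = some q) :
    (∃ (p : List V) (hp : p.length ≤ K + M) (hp' : (p ++ [a]).length ≤ K + M),
        x = Sum.inl ⟨p, hp⟩ ∧ q = Sum.inl ⟨p ++ [a], hp'⟩) ∨
    (∃ (p : List V) (hp : p.length ≤ K + M) (w : ↥P) (hw : (w : List V).length ≤ K + M),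
        x = Sum.inl ⟨p, hp⟩ ∧ q = Sum.inr ⟨w, hw⟩ ∧ p ++ [a] = codeL M P e w) ∨
    (∃ (u' : List V) (h : (a :: u').length ≤ K + M),
        x = Sum.inr ⟨a :: u', h⟩ ∧ (∃ w : ↥P, (a :: u') <:+ (w : List V)) ∧
        ((u' = [] ∧ q = root (K + M)) ∨
         (u' ≠ [] ∧ ∃ hu' : u'.length ≤ K + M, q = Sum.inr ⟨u', hu'⟩))) := by
  classical
  match x with
  | Sum.inl p =>
    rw [tstep] at hs
    split_ifs at hs with h
    · left
      exact ⟨p.1, p.2, by omega, rfl, by simpa using hs.symm⟩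
    · right; left
      rcases Option.bind_eq_some_iff.mp hs with ⟨w, hdec, hw⟩
      by_cases hlen : (w : List V).length ≤ K + M
      · rw [dif_pos hlen] at hw
        exact ⟨p.1, p.2, w, hlen, rfl, (Option.some_inj.mp hw).symm,
          ((dec_eq_some M P e).mp hdec).symm⟩
      · rw [dif_neg hlen] at hw
        exact absurd hw (by simp)
  | Sum.inr ⟨[], _⟩ => rw [tstep] at hs; simp at hs
  | Sum.inr ⟨b :: u', h⟩ =>
    rw [tstep] at hs
    by_cases hcond : b = a ∧ ∃ w : ↥P, (b :: u') <:+ (w : List V)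
    swap
    · rw [if_neg hcond] at hs; exact absurd hs (by simp)
    · rw [if_pos hcond] at hs
      obtain ⟨rfl, hsuf⟩ := hcond
      have hq := Option.some_inj.mp hs
      right; right
      refine ⟨u', h, rfl, hsuf, ?_⟩
      by_cases hu : u' = []
      · left; rw [if_pos hu] at hq; exact ⟨hu, hq.symm⟩
      · right; rw [if_neg hu] at hq
        exact ⟨hu, by simp only [List.length_cons] at h; omega, hq.symm⟩

lemma tstep_rev (hP : ∀ w ∈ P, w.length = K)
    (a : V) (x y q : TT V (K + M)) (hx : tstep K M P e x a = some q)
    (hy : tstep K M P e y a = some q) : x = y := by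
  rcases tstep_some_cases K M P e hx with
    ⟨p₁, hp₁, hp₁', rfl, hq₁⟩ | ⟨p₁, hp₁, w₁, hw₁, rfl, hq₁, hc₁⟩ |
    ⟨u₁, h₁, rfl, hsuf₁, hq₁⟩ <;>
  rcases tstep_some_cases K M P e hy with
    ⟨p₂, hp₂, hp₂', rfl, hq₂⟩ | ⟨p₂, hp₂, w₂, hw₂, rfl, hq₂, hc₂⟩ |
    ⟨u₂, h₂, rfl, hsuf₂, hq₂⟩
  · -- grow / grow
    have sh := hq₁.symm.trans hq₂
    have : p₁ = p₂ := by simpa using inl_inj.mp sh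
    subst this; rfl
  · exact absurd (hq₁.symm.trans hq₂) inl_ne_inr
  · rcases hq₂ with ⟨hu₂, hq₂⟩ | ⟨hne₂, hh₂, hq₂⟩
    · have := inl_eq_root_iff.mp (hq₁.symm.trans hq₂); simp at this
    · exact absurd (hq₁.symm.trans hq₂) inl_ne_inr
  · exact absurd (hq₂.symm.trans hq₁) inl_ne_inr
  · -- tocode / tocode
    have hval : (w₁ : List V) = (w₂ : List V) := inr_inj.mp (hq₁.symm.trans hq₂)
    have hw : w₁ = w₂ := Subtype.ext hval
    subst hw
    have : p₁ = p₂ := by simpa using hc₁.trans hc₂.symm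
    subst this; rfl
  · -- tocode vs shrink : impossible by lengths
    exfalso
    rcases hq₂ with ⟨hu₂, hq₂⟩ | ⟨hne₂, hu₂, hq₂⟩
    · exact root_ne_inr (hq₂.symm.trans hq₁)
    · have hval : (w₁ : List V) = u₂ := inr_inj.mp (hq₁.symm.trans hq₂)
      obtain ⟨w', hsw'⟩ := hsuf₂
      have hlen' : (a :: u₂).length ≤ (w' : List V).length := hsw'.length_le
      have hK : (w' : List V).length = K := hP _ w'.2
      have hK1 : (w₁ : List V).length = K := hP _ w₁.2
      rw [← hval] at hlen'
      simp only [List.length_cons, hK, hK1] at hlen'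
      omega
  · -- shrink vs grow
    exfalso
    rcases hq₁ with ⟨hu₁, hq₁⟩ | ⟨hne₁, hu₁, hq₁⟩
    · have := inl_eq_root_iff.mp (hq₂.symm.trans hq₁); simp at this
    · exact inl_ne_inr (hq₂.symm.trans hq₁)
  · -- shrink vs tocode
    exfalso
    rcases hq₁ with ⟨hu₁, hq₁⟩ | ⟨hne₁, hu₁, hq₁⟩
    · exact root_ne_inr (hq₁.symm.trans hq₂)
    · have hval : (w₂ : List V) = u₁ := inr_inj.mp (hq₂.symm.trans hq₁)
      obtain ⟨w', hsw'⟩ := hsuf₁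
      have hlen' : (a :: u₁).length ≤ (w' : List V).length := hsw'.length_le
      have hK : (w' : List V).length = K := hP _ w'.2
      have hK2 : (w₂ : List V).length = K := hP _ w₂.2
      rw [← hval] at hlen'
      simp only [List.length_cons, hK, hK2] at hlen'
      omega
  · -- shrink vs shrink
    rcases hq₁ with ⟨he₁, hq₁⟩ | ⟨hne₁, hu₁, hq₁⟩ <;>
      rcases hq₂ with ⟨he₂, hq₂⟩ | ⟨hne₂, hu₂, hq₂⟩
    · subst he₁; subst he₂; rfl
    · exact absurd (hq₂.symm.trans hq₁) (fun hh => root_ne_inr hh.symm)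
    · exact absurd (hq₁.symm.trans hq₂) (fun hh => root_ne_inr hh.symm)
    · have : u₁ = u₂ := inr_inj.mp (hq₁.symm.trans hq₂)
      subst this; rfl

noncomputable def tevalFrom (s : TT V (K + M)) (z : List V) : Option (TT V (K + M)) :=
  z.foldl (fun o a => o.bind fun t => tstep K M P e t a) (some s)

lemma foldl_none (z : List V) :
    z.foldl (fun o a => o.bind fun t => tstep K M P e t a) none = none := by
  induction z with
  | nil => rfl
  | cons a z ih => simpa using ih

@[simp] lemma tevalFrom_nil (s : TT V (K + M)) : tevalFrom K M P e s [] = some s := rfl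

lemma tevalFrom_cons (s : TT V (K + M)) (a : V) (z : List V) :
    tevalFrom K M P e s (a :: z) =
      (tstep K M P e s a).bind (fun t => tevalFrom K M P e t z) := by
  unfold tevalFrom
  rw [List.foldl_cons]
  cases h : tstep K M P e s a <;> simp [h, foldl_none]

lemma tevalFrom_append (s : TT V (K + M)) (u v : List V) :
    tevalFrom K M P e s (u ++ v) =
      (tevalFrom K M P e s u).bind (fun t => tevalFrom K M P e t v) := by
  unfold tevalFrom
  rw [List.foldl_append]
  cases h : List.foldl (fun o a => o.bind fun t => tstep K M P e t a) (some s) u <;>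
    simp [foldl_none]

lemma teval_code (w : ↥P) (hwK : (w : List V).length ≤ K + M) :
    ∀ (c : List V), c ≠ [] → ∀ (p : List V) (hpc : p ++ c = codeL M P e w)
      (hp : p.length ≤ K + M),
      tevalFrom K M P e (Sum.inl ⟨p, hp⟩) c = some (Sum.inr ⟨w, hwK⟩) := by
  intro c
  induction c with
  | nil => intro hc; exact absurd rfl hc
  | cons a c' ih =>
    intro _ p hpc hp
    rw [tevalFrom_cons]
    by_cases hc' : c' = []
    · subst hc'
      have hpa : p ++ [a] = codeL M P e w := hpc
      rw [tstep]
      have hnot : ¬ ((p ++ [a]).length < M ∧ ∃ w' : ↥P, (p ++ [a]) <+: codeL M P e w') := by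
        rintro ⟨hlt, -⟩
        rw [hpa, codeL_length] at hlt
        omega
      rw [dif_neg hnot]
      have hdec : dec M P e (p ++ [a]) = some w := (dec_eq_some M P e).mpr hpa.symm
      rw [hdec]
      simp [hwK]
    · have hlenc : (p ++ [a]).length + c'.length = M := by
        have := congrArg List.length hpc
        simp [codeL_length] at this ⊢
        omega
      have hcpos : 0 < c'.length := List.length_pos_iff.mpr hc'
      rw [tstep]
      have hcond : ((p ++ [a]).length < M ∧ ∃ w' : ↥P, (p ++ [a]) <+: codeL M P e w') := by
        constructor
        · omega
        · exact ⟨w, ⟨c', by rw [← hpc]; simp⟩⟩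
      rw [dif_pos hcond]
      rw [Option.bind_some]
      exact ih hc' (p ++ [a]) (by rw [← hpc]; simp) (by omega)

lemma teval_shrink :
    ∀ (u : List V), u ≠ [] → (∃ w' : ↥P, u <:+ (w' : List V)) →
      ∀ (h : u.length ≤ K + M),
      tevalFrom K M P e (Sum.inr ⟨u, h⟩) u = some (root (K + M)) := by
  intro u
  induction u with
  | nil => intro hu; exact absurd rfl hu
  | cons b u' ih =>
    intro _ hsuf h
    rw [tevalFrom_cons, tstep]
    have hcond : b = b ∧ ∃ w' : ↥P, (b :: u') <:+ (w' : List V) := ⟨rfl, hsuf⟩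
    rw [if_pos hcond, Option.bind_some]
    by_cases hu' : u' = []
    · subst hu'; rw [if_pos rfl]; rfl
    · rw [if_neg hu']
      refine ih hu' ?_ _
      obtain ⟨w', t, ht⟩ := hsuf
      exact ⟨w', t ++ [b], by rw [← ht]; simp⟩

/-- A full block word. -/
def block (w : ↥P) : List V := codeL M P e w ++ (w : List V)

lemma block_length (hP : ∀ w ∈ P, w.length = K) (w : ↥P) :
    (block M P e w).length = M + K := by
  simp [block, codeL_length, hP _ w.2]

lemma teval_block (hK : 1 ≤ K) (hM : 1 ≤ M) (hP : ∀ w ∈ P, w.length = K) (w : ↥P) :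
    tevalFrom K M P e (root (K + M)) (block M P e w) = some (root (K + M)) := by
  have hwK : (w : List V).length ≤ K + M := by rw [hP _ w.2]; omega
  rw [block, tevalFrom_append]
  have h1 : tevalFrom K M P e (root (K + M)) (codeL M P e w) = some (Sum.inr ⟨w, hwK⟩) := by
    apply teval_code K M P e w hwK (codeL M P e w)
      (by intro hnil; have := codeL_length M P e w; rw [hnil] at this; simp at this; omega)
      [] rfl
  rw [h1, Option.bind_some]
  apply teval_shrink
  · intro hnil
    have := hP _ w.2
    rw [hnil] at this
    simp at this
    omega
  · exact ⟨w, List.suffix_refl _⟩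

lemma keyB :
    ∀ (u : List V), u ≠ [] → ∀ (hu : u.length ≤ K + M) (z : List V),
      tevalFrom K M P e (Sum.inr ⟨u, hu⟩) z = some (root (K + M)) →
      ∃ z', z = u ++ z' ∧ tevalFrom K M P e (root (K + M)) z' = some (root (K + M)) := by
  intro u
  induction u with
  | nil => intro hu; exact absurd rfl hu
  | cons b u' ih =>
    intro _ hu z heval
    match z with
    | [] =>
      rw [tevalFrom_nil] at heval
      exact absurd (Option.some_inj.mp heval) (fun hh => root_ne_inr hh.symm)
    | a :: z₂ =>
      rw [tevalFrom_cons, tstep] at heval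
      by_cases hcond : b = a ∧ ∃ w' : ↥P, (b :: u') <:+ (w' : List V)
      swap
      · rw [if_neg hcond] at heval; simp at heval
      · rw [if_pos hcond] at heval
        obtain ⟨rfl, hsuf⟩ := hcond
        rw [Option.bind_some] at heval
        by_cases hu' : u' = []
        · subst hu'
          rw [if_pos rfl] at heval
          exact ⟨z₂, rfl, heval⟩
        · rw [if_neg hu'] at heval
          obtain ⟨z', hz, hev⟩ := ih hu' (by simp at hu; omega) z₂ heval
          exact ⟨z', by rw [hz]; rfl, hev⟩

lemma keyA (hK : 1 ≤ K) (hP : ∀ w ∈ P, w.length = K) :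
    ∀ (n : ℕ) (z : List V), z.length ≤ n → ∀ (p : List V) (hp : p.length ≤ K + M),
      tevalFrom K M P e (Sum.inl ⟨p, hp⟩) z = some (root (K + M)) →
      (z = [] ∧ p = []) ∨
      ∃ (w : ↥P) (z₂ : List V), p ++ z = block M P e w ++ z₂ ∧
        z₂.length < z.length ∧
        tevalFrom K M P e (root (K + M)) z₂ = some (root (K + M)) := by
  intro n
  induction n with
  | zero =>
    intro z hz p hp heval
    rw [List.length_eq_zero_iff.mp (Nat.le_zero.mp hz)] at heval ⊢
    rw [tevalFrom_nil] at heval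
    exact Or.inl ⟨rfl, inl_eq_root_iff.mp (Option.some_inj.mp heval)⟩
  | succ n ihn =>
    intro z hz p hp heval
    match z with
    | [] =>
      rw [tevalFrom_nil] at heval
      exact Or.inl ⟨rfl, inl_eq_root_iff.mp (Option.some_inj.mp heval)⟩
    | a :: z₁ =>
      right
      rw [tevalFrom_cons, tstep] at heval
      by_cases hcond : (p ++ [a]).length < M ∧ ∃ w' : ↥P, (p ++ [a]) <+: codeL M P e w'
      · rw [dif_pos hcond, Option.bind_some] at heval
        have hz₁ : z₁.length ≤ n := by simp at hz; omega
        rcases ihn z₁ hz₁ (p ++ [a]) (by omega) heval with ⟨hznil, habs⟩ | ⟨w, z₂, hdec, hlt, hev⟩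
        · exact absurd habs (by simp)
        · refine ⟨w, z₂, ?_, by simp; omega, hev⟩
          rw [List.append_cons, hdec]
      · rw [dif_neg hcond] at heval
        rcases hbind : dec M P e (p ++ [a]) with _ | w
        · rw [hbind] at heval; simp at heval
        · rw [hbind] at heval
          rw [Option.bind_some] at heval
          have hwK : (w : List V).length ≤ K + M := by rw [hP _ w.2]; omega
          rw [dif_pos hwK, Option.bind_some] at heval
          have hwne : (w : List V) ≠ [] := by
            intro hnil
            have := hP _ w.2
            rw [hnil] at this; simp at this; omega
          obtain ⟨z₂, hz₂, hev⟩ := keyB K M P e (w : List V) hwne hwK z₁ heval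
          refine ⟨w, z₂, ?_, ?_, hev⟩
          · rw [List.append_cons, ← (dec_eq_some M P e).mp hbind, block, hz₂]
            simp
          · have : z₁.length = (w : List V).length + z₂.length := by rw [hz₂]; simp
            have hwpos : 0 < (w : List V).length := List.length_pos_iff.mpr hwne
            simp only [List.length_cons]
            omega

lemma teval_root_iff (hK : 1 ≤ K) (hM : 1 ≤ M) (hP : ∀ w ∈ P, w.length = K) (z : List V) :
    tevalFrom K M P e (root (K + M)) z = some (root (K + M)) ↔
      ∃ L : List ↥P, z = (L.map (block M P e)).flatten := by
  constructor
  · have main : ∀ (n : ℕ) (z : List V), z.length ≤ n →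
        tevalFrom K M P e (root (K + M)) z = some (root (K + M)) →
        ∃ L : List ↥P, z = (L.map (block M P e)).flatten := by
      intro n
      induction n with
      | zero =>
        intro z hz _
        exact ⟨[], by rw [List.length_eq_zero_iff.mp (Nat.le_zero.mp hz)]; rfl⟩
      | succ n ihn =>
        intro z hz heval
        rcases keyA K M P e hK hP (n + 1) z hz [] (by simp) heval with ⟨rfl, -⟩ |
          ⟨w, z₂, hdec, hlt, hev⟩
        · exact ⟨[], rfl⟩
        · simp only [List.nil_append] at hdec
          obtain ⟨L₂, hL₂⟩ := ihn z₂ (by omega) hev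
          exact ⟨w :: L₂, by rw [hdec, hL₂]; simp⟩
    exact fun h => main z.length z le_rfl h
  · rintro ⟨L, rfl⟩
    induction L with
    | nil => rfl
    | cons w L ihL =>
      simp only [List.map_cons, List.flatten_cons]
      rw [tevalFrom_append, teval_block K M P e hK hM hP w, Option.bind_some]
      exact ihL

end Machine

section Mach
variable [Fintype V] (K M : ℕ)

noncomputable def eqv : TT V (K + M) ≃ Fin (Fintype.card (TT V (K + M))) :=
  Fintype.equivFin _

variable (P : Finset (List V)) (e : ↥P ↪ (Fin M → V))

noncomputable def mach (hP : ∀ w ∈ P, w.length = K) : RevPartialDFA V where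
  σ := Fin (Fintype.card (TT V (K + M)))
  fintype := inferInstance
  step x a := (tstep K M P e ((eqv K M).symm x) a).map (eqv K M)
  start := eqv K M (root (K + M))
  accept := {eqv K M (root (K + M))}
  reversible := by
    intro a x y q hx hy
    rcases Option.map_eq_some_iff.mp hx with ⟨t₁, ht₁, hq₁⟩
    rcases Option.map_eq_some_iff.mp hy with ⟨t₂, ht₂, hq₂⟩
    have ht : t₂ = t₁ := (eqv K M).injective (hq₂.trans hq₁.symm)
    subst ht
    have := tstep_rev K M P e hP a _ _ _ ht₁ ht₂
    have := congrArg (eqv K M) this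
    simpa using this

lemma foldl_map_eqv : ∀ (z : List V) (o : Option (TT V (K + M))),
    z.foldl (fun o' a => o'.bind fun s =>
        (tstep K M P e ((eqv K M).symm s) a).map (eqv K M))
      (o.map (eqv K M)) =
      (z.foldl (fun o' a => o'.bind fun t => tstep K M P e t a) o).map (eqv K M) := by
  intro z
  induction z with
  | nil => intro o; rfl
  | cons a z ih =>
    intro o
    rw [List.foldl_cons, List.foldl_cons]
    have h : (o.map (eqv K M)).bind (fun s =>
        (tstep K M P e ((eqv K M).symm s) a).map (eqv K M)) =
        (o.bind fun t => tstep K M P e t a).map (eqv K M) := by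
      cases o <;> simp
    rw [h]
    exact ih _

lemma mach_eval (hP : ∀ w ∈ P, w.length = K) (z : List V) :
    (mach K M P e hP).eval z =
      (tevalFrom K M P e (root (K + M)) z).map (eqv K M) := by
  have h0 : (some ((mach K M P e hP).start) : Option (mach K M P e hP).σ) =
      (some (root (K + M))).map (eqv K M) := rfl
  unfold RevPartialDFA.eval
  rw [h0]
  exact foldl_map_eqv K M P e z (some (root (K + M)))

lemma mach_accepts_iff (hK : 1 ≤ K) (hM : 1 ≤ M) (hP : ∀ w ∈ P, w.length = K)
    (z : List V) :
    z ∈ (mach K M P e hP).accepts ↔ ∃ L : List ↥P, z = (L.map (block M P e)).flatten := by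
  rw [← teval_root_iff K M P e hK hM hP]
  constructor
  · rintro ⟨s, hs, hev⟩
    have hs' : s = eqv K M (root (K + M)) := hs
    rw [hs', mach_eval] at hev
    rcases Option.map_eq_some_iff.mp hev with ⟨t, ht, hq⟩
    have ht' : t = root (K + M) := (eqv K M).injective hq
    rw [ht'] at ht; exact ht
  · intro h
    refine ⟨eqv K M (root (K + M)), rfl, ?_⟩
    rw [mach_eval, h]
    rfl

end Mach


section Tools
variable {V : Type*}

lemma join_length {B : ℕ} : ∀ (L : List (List V)), (∀ b ∈ L, b.length = B) →
    L.flatten.length = B * L.length := by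
  intro L
  induction L with
  | nil => simp
  | cons b L ih =>
    intro h
    have hb := h b (List.mem_cons_self)
    have ihL := ih (fun x hx => h x (List.mem_cons_of_mem _ hx))
    simp only [List.flatten_cons, List.length_append, ihL, hb, List.length_cons]
    ring

lemma join_getElem {B : ℕ} :
    ∀ (L : List (List V)) (_hB : ∀ b ∈ L, b.length = B) (j i : ℕ) (hj : j < L.length)
      (_hi : i < B) (h1 : j * B + i < L.flatten.length) (h2 : i < (L[j]'hj).length),
      L.flatten[j * B + i]'h1 = (L[j]'hj)[i]'h2 := by
  intro L
  induction L with
  | nil => intro _ j i hj; exact absurd hj (by simp)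
  | cons b L ih =>
    intro hB j i hj hi h1 h2
    have hb := hB b (List.mem_cons_self)
    match j with
    | 0 =>
      simp only [Nat.zero_mul, Nat.zero_add] at h1 ⊢
      exact List.getElem_append_left (by rw [hb]; omega)
    | j + 1 =>
      have hsm : (j + 1) * B = j * B + B := by ring
      have hidx : b.length ≤ (j + 1) * B + i := by rw [hb]; omega
      have hj' : j < L.length := by simpa using hj
      have h1' : j * B + i < L.flatten.length := by
        have hh := h1
        simp only [List.flatten_cons, List.length_append] at hh
        omega
      have h2' : i < (L[j]'hj').length := by simpa using h2
      have key := ih (fun x hx => hB x (List.mem_cons_of_mem _ hx)) j i hj' hi h1' h2'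
      have harith : (j + 1) * B + i - b.length = j * B + i := by rw [hb, hsm]; omega
      have hcast : (b :: L).flatten[(j + 1) * B + i]'h1 =
          L.flatten[(j + 1) * B + i - b.length]'(by rw [hb, hsm]; omega) :=
        List.getElem_append_right hidx
      rw [hcast]
      simp only [harith]
      rw [key]
      simp

lemma join_inj {B : ℕ} (hB : 1 ≤ B) :
    ∀ (L₁ L₂ : List (List V)), (∀ b ∈ L₁, b.length = B) → (∀ b ∈ L₂, b.length = B) →
      L₁.length = L₂.length → L₁.flatten = L₂.flatten → L₁ = L₂ := by
  intro L₁
  induction L₁ with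
  | nil =>
    intro L₂ _ _ hlen _
    exact (List.length_eq_zero_iff.mp hlen.symm).symm ▸ rfl
  | cons b₁ T₁ ih =>
    intro L₂ h₁ h₂ hlen hjoin
    match L₂ with
    | [] => exact absurd hlen (by simp)
    | b₂ :: T₂ =>
      simp only [List.flatten_cons] at hjoin
      have hb : b₁.length = b₂.length := by
        rw [h₁ b₁ (List.mem_cons_self), h₂ b₂ (List.mem_cons_self)]
      obtain ⟨hbe, hte⟩ := List.append_inj hjoin hb
      have := ih T₂ (fun x hx => h₁ x (List.mem_cons_of_mem _ hx))
        (fun x hx => h₂ x (List.mem_cons_of_mem _ hx)) (by simpa using hlen) hte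
      rw [hbe, this]

end Tools

section Rate

variable {V : Type*} [Fintype V]

lemma ncard_length_eq (n : ℕ) :
    {l : List V | l.length = n}.ncard = Fintype.card V ^ n := by
  rw [← Nat.card_coe_set_eq]
  have h1 : Nat.card ↥{l : List V | l.length = n} = Nat.card (List.Vector V n) :=
    Nat.card_congr (Equiv.subtypeEquivRight (fun _ => Iff.rfl))
  rw [h1, Nat.card_eq_fintype_card, card_vector]

lemma term_le_card (L : Set (List V)) (hq : 1 ≤ Fintype.card V) (n : ℕ) :
    ((Set.ncard {w ∈ L | w.length = n} : ℕ) : ℝ) ^ (1 / (n : ℝ)) ≤ (Fintype.card V : ℝ) := by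
  rcases Nat.eq_zero_or_pos n with rfl | hn
  · simp only [Nat.cast_zero, div_zero, Real.rpow_zero]
    exact_mod_cast hq
  · have hsub : {w ∈ L | w.length = n} ⊆ {l : List V | l.length = n} :=
      fun w hw => hw.2
    have hcount : Set.ncard {w ∈ L | w.length = n} ≤ Fintype.card V ^ n := by
      rw [← ncard_length_eq n]
      exact Set.ncard_le_ncard hsub (List.finite_length_eq V n)
    have hnn : (0 : ℝ) ≤ ((Set.ncard {w ∈ L | w.length = n} : ℕ) : ℝ) := Nat.cast_nonneg _
    have h1 : ((Set.ncard {w ∈ L | w.length = n} : ℕ) : ℝ) ^ (1 / (n : ℝ)) ≤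
        (((Fintype.card V ^ n : ℕ) : ℝ)) ^ (1 / (n : ℝ)) :=
      Real.rpow_le_rpow hnn (by exact_mod_cast hcount) (by positivity)
    refine h1.trans_eq ?_
    push_cast
    rw [← Real.rpow_natCast (Fintype.card V : ℝ) n, ← Real.rpow_mul (by positivity)]
    rw [mul_one_div, div_self (by exact_mod_cast hn.ne')]
    exact Real.rpow_one _

lemma growthRate_le_card (L : Set (List V)) (hq : 1 ≤ Fintype.card V) :
    growthRate L ≤ (Fintype.card V : ℝ) := by
  apply Filter.limsup_le_of_le
  · apply Filter.IsBoundedUnder.isCoboundedUnder_le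
    apply Filter.isBoundedUnder_of
    exact ⟨0, fun n => Real.rpow_nonneg (Nat.cast_nonneg _) _⟩
  · exact Filter.Eventually.of_forall (term_le_card L hq)

lemma bddAbove_revSet (G : SimpleGraph V) (hq : 1 ≤ Fintype.card V) :
    BddAbove {r : ℝ | ∃ M : RevPartialDFA V,
      Distinguishable G M.accepts ∧ growthRate M.accepts = r} := by
  refine ⟨(Fintype.card V : ℝ), ?_⟩
  rintro r ⟨M, -, rfl⟩
  exact growthRate_le_card _ hq

end Rate


section MachineFacts
variable {V : Type*} [Fintype V]
variable (K M : ℕ) (P : Finset (List V)) (e : ↥P ↪ (Fin M → V))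

lemma blocks_len (hP : ∀ w ∈ P, w.length = K) (L : List ↥P) :
    ∀ b ∈ L.map (block M P e), b.length = M + K := by
  rintro b hb
  obtain ⟨w, -, rfl⟩ := List.mem_map.mp hb
  exact block_length K M P e hP w

lemma count_lower (hK : 1 ≤ K) (hM : 1 ≤ M) (hP : ∀ w ∈ P, w.length = K) (t : ℕ) :
    P.card ^ t ≤ Set.ncard {w ∈ (mach K M P e hP).accepts | w.length = (M + K) * t} := by
  classical
  set Φ : (Fin t → ↥P) → List V :=
    fun f => ((List.ofFn f).map (block M P e)).flatten with hΦ
  have hblock_inj : Function.Injective (block M P e) := by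
    intro w₁ w₂ h
    unfold block at h
    obtain ⟨h1, h2⟩ := List.append_inj h (by rw [codeL_length, codeL_length])
    exact Subtype.ext h2
  have hΦinj : Function.Injective Φ := by
    intro f g h
    have hlen : ((List.ofFn f).map (block M P e)).length =
        ((List.ofFn g).map (block M P e)).length := by simp
    have hj := join_inj (B := M + K) (by omega) _ _
      (blocks_len K M P e hP _) (blocks_len K M P e hP _) hlen h
    have := List.map_injective_iff.mpr hblock_inj hj
    exact List.ofFn_injective this
  have hsub : Set.range Φ ⊆ {w ∈ (mach K M P e hP).accepts | w.length = (M + K) * t} := by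
    rintro _ ⟨f, rfl⟩
    constructor
    · exact (mach_accepts_iff K M P e hK hM hP _).mpr ⟨List.ofFn f, rfl⟩
    · rw [join_length _ (blocks_len K M P e hP (List.ofFn f))]
      simp
  have hfin : {w ∈ (mach K M P e hP).accepts | w.length = (M + K) * t}.Finite :=
    (List.finite_length_eq V ((M + K) * t)).subset (fun w hw => hw.2)
  have h1 : (Set.range Φ).ncard = P.card ^ t := by
    rw [← Set.image_univ, Set.ncard_image_of_injective _ hΦinj, Set.ncard_univ,
      Nat.card_eq_fintype_card]
    rw [Fintype.card_fun]
    simp [Fintype.card_coe]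
  calc P.card ^ t = (Set.range Φ).ncard := h1.symm
    _ ≤ _ := Set.ncard_le_ncard hsub hfin

lemma join_block_get (hP : ∀ w ∈ P, w.length = K) (L : List ↥P) (j i : ℕ)
    (hj : j < L.length) (hiK : i < K)
    (hidx : j * (M + K) + (M + i) < ((L.map (block M P e)).flatten).length)
    (hival : i < ((L[j]'hj : ↥P) : List V).length) :
    ((L.map (block M P e)).flatten)[j * (M + K) + (M + i)]'hidx =
      ((L[j]'hj : ↥P) : List V)[i]'hival := by
  have hB := blocks_len K M P e hP L
  have hj' : j < (L.map (block M P e)).length := by simpa using hj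
  have h2 : M + i < (((L.map (block M P e)))[j]'hj').length := by
    rw [hB _ (List.getElem_mem _)]; omega
  rw [join_getElem (L.map (block M P e)) hB j (M + i) hj' (by omega) hidx h2]
  simp only [List.getElem_map]
  have hred : block M P e (L[j]'hj) =
      codeL M P e (L[j]'hj) ++ ((L[j]'hj : ↥P) : List V) := rfl
  simp only [hred]
  rw [List.getElem_append_right (by rw [codeL_length]; omega)]
  simp [codeL_length]

lemma mach_distinguishable (G : SimpleGraph V) (hK : 1 ≤ K) (hM : 1 ≤ M)
    (hP : ∀ w ∈ P, w.length = K)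
    (hgood : ∀ x ∈ P, ∀ y ∈ P, x ≠ y → ∃ i, ∃ (hx : i < x.length) (hy : i < y.length),
        x.get ⟨i, hx⟩ ≠ y.get ⟨i, hy⟩ ∧ ¬ G.Adj (x.get ⟨i, hx⟩) (y.get ⟨i, hy⟩)) :
    Distinguishable G (mach K M P e hP).accepts := by
  intro x hx y hy hlen hne
  obtain ⟨Lx, rfl⟩ := (mach_accepts_iff K M P e hK hM hP x).mp hx
  obtain ⟨Ly, rfl⟩ := (mach_accepts_iff K M P e hK hM hP y).mp hy
  have hlx := join_length _ (blocks_len K M P e hP Lx)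
  have hly := join_length _ (blocks_len K M P e hP Ly)
  have hLlen : Lx.length = Ly.length := by
    rw [hlx, hly] at hlen
    simp only [List.length_map] at hlen
    exact Nat.eq_of_mul_eq_mul_left (by omega) hlen
  have hLne : Lx ≠ Ly := fun h => hne (by rw [h])
  have hdiff : ¬ (∀ (j : ℕ) (h1 : j < Lx.length) (h2 : j < Ly.length),
      Lx[j]'h1 = Ly[j]'h2) := by
    intro hall
    exact hLne (List.ext_getElem hLlen hall)
  push_neg at hdiff
  obtain ⟨j, hj1, hj2, hjne⟩ := hdiff
  have hvne : ((Lx[j]'hj1 : ↥P) : List V) ≠ ((Ly[j]'hj2 : ↥P) : List V) :=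
    fun h => hjne (Subtype.ext h)
  obtain ⟨i, hi1, hi2, hget, hnadj⟩ :=
    hgood _ (Lx[j]'hj1).2 _ (Ly[j]'hj2).2 hvne
  have hiK : i < K := by rw [← hP _ (Lx[j]'hj1).2]; exact hi1
  have hxlen : ((Lx.map (block M P e)).flatten).length = (M + K) * Lx.length := by
    rw [hlx]; simp
  have hylen : ((Ly.map (block M P e)).flatten).length = (M + K) * Ly.length := by
    rw [hly]; simp
  have hmul : (j + 1) * (M + K) ≤ Lx.length * (M + K) :=
    Nat.mul_le_mul_right _ hj1
  have hsm : (j + 1) * (M + K) = j * (M + K) + (M + K) := by ring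
  have hcomm : Lx.length * (M + K) = (M + K) * Lx.length := Nat.mul_comm _ _
  have hidxx : j * (M + K) + (M + i) < ((Lx.map (block M P e)).flatten).length := by
    rw [hxlen]; omega
  have hidxy : j * (M + K) + (M + i) < ((Ly.map (block M P e)).flatten).length := by
    rw [hylen, ← hLlen]; omega
  refine ⟨j * (M + K) + (M + i), hidxx, hidxy, ?_, ?_⟩
  · simp only [List.get_eq_getElem]
    rw [join_block_get K M P e hP Lx j i hj1 hiK hidxx hi1,
      join_block_get K M P e hP Ly j i hj2 hiK hidxy hi2]
    simpa only [List.get_eq_getElem] using hget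
  · simp only [List.get_eq_getElem]
    rw [join_block_get K M P e hP Lx j i hj1 hiK hidxx hi1,
      join_block_get K M P e hP Ly j i hj2 hiK hidxy hi2]
    simpa only [List.get_eq_getElem] using hnadj

end MachineFacts

section RateLemma
variable {V : Type*} [Fintype V]

lemma rate_le_revCapacity (G : SimpleGraph V) (hq2 : 2 ≤ Fintype.card V)
    (K M : ℕ) (hK : 1 ≤ K) (hM : 1 ≤ M) (P : Finset (List V)) (hN : 1 ≤ P.card)
    (hP : ∀ w ∈ P, w.length = K)
    (hgood : ∀ x ∈ P, ∀ y ∈ P, x ≠ y → ∃ i, ∃ (hx : i < x.length) (hy : i < y.length),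
        x.get ⟨i, hx⟩ ≠ y.get ⟨i, hy⟩ ∧ ¬ G.Adj (x.get ⟨i, hx⟩) (y.get ⟨i, hy⟩))
    (e : ↥P ↪ (Fin M → V)) :
    ((P.card : ℝ)) ^ (1 / ((M : ℝ) + (K : ℝ))) ≤ revCapacity G := by
  have hq1 : 1 ≤ Fintype.card V := by omega
  have hrate : ((P.card : ℝ)) ^ (1 / ((M : ℝ) + (K : ℝ))) ≤
      growthRate (mach K M P e hP).accepts := by
    apply Filter.le_limsup_of_frequently_le
    · rw [Filter.frequently_atTop]
      intro a
      refine ⟨(M + K) * max a 1, ?_, ?_⟩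
      · calc a ≤ max a 1 := le_max_left a 1
          _ ≤ (M + K) * max a 1 := Nat.le_mul_of_pos_left _ (by omega)
      · set t := max a 1 with ht_def
        have ht : 1 ≤ t := le_max_right a 1
        have hcount := count_lower K M P e hK hM hP t
        have step1 : ((P.card : ℝ)) ^ (1 / ((M : ℝ) + (K : ℝ))) =
            (((P.card ^ t : ℕ)) : ℝ) ^ (1 / ((((M + K) * t : ℕ)) : ℝ)) := by
          push_cast
          rw [← Real.rpow_natCast (P.card : ℝ) t, ← Real.rpow_mul (Nat.cast_nonneg _)]
          congr 1
          have htR : (t : ℝ) ≠ 0 := by positivity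
          have hMKR : (M : ℝ) + (K : ℝ) ≠ 0 := by positivity
          field_simp
          try ring
        rw [step1]
        exact Real.rpow_le_rpow (Nat.cast_nonneg _) (by exact_mod_cast hcount)
          (by positivity)
    · exact Filter.isBoundedUnder_of
        ⟨(Fintype.card V : ℝ), fun n => term_le_card _ hq1 n⟩
  refine hrate.trans ?_
  exact le_csSup (bddAbove_revSet G hq1)
    ⟨mach K M P e hP, mach_distinguishable K M P e G hK hM hP hgood, rfl⟩

end RateLemma


section GoodSets
variable {V : Type*}

/-- A good finite set of words: fixed length and pairwise "distinguishable". -/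
def GoodF (G : SimpleGraph V) (F : Finset (List V)) (K : ℕ) : Prop :=
  (∀ w ∈ F, w.length = K) ∧
  ∀ x ∈ F, ∀ y ∈ F, x ≠ y → ∃ i, ∃ (hx : i < x.length) (hy : i < y.length),
    x.get ⟨i, hx⟩ ≠ y.get ⟨i, hy⟩ ∧ ¬ G.Adj (x.get ⟨i, hx⟩) (y.get ⟨i, hy⟩)

open Classical in
/-- The `j`-fold concatenation power of a finite set of words. -/
noncomputable def powF (F : Finset (List V)) (j : ℕ) : Finset (List V) :=
  (Finset.univ : Finset (Fin j → ↥F)).image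
    (fun f => (List.ofFn (fun i => ((f i : List V)))).flatten)

lemma powF_blocks_len {F : Finset (List V)} {K : ℕ} (hlen : ∀ w ∈ F, w.length = K)
    {j : ℕ} (f : Fin j → ↥F) :
    ∀ b ∈ List.ofFn (fun i => ((f i : List V))), b.length = K := by
  intro b hb
  rw [List.mem_ofFn] at hb
  obtain ⟨i, rfl⟩ := hb
  exact hlen _ (f i).2

lemma powF_card {K : ℕ} (hK : 1 ≤ K) (F : Finset (List V))
    (hlen : ∀ w ∈ F, w.length = K) (j : ℕ) :
    (powF F j).card = F.card ^ j := by
  classical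
  rw [powF, Finset.card_image_of_injective _ ?_, Finset.card_univ, Fintype.card_fun]
  · simp [Fintype.card_coe]
  · intro f g h
    have hLlen : (List.ofFn (fun i => ((f i : List V)))).length =
        (List.ofFn (fun i => ((g i : List V)))).length := by simp
    have := join_inj (B := K) hK _ _ (powF_blocks_len hlen f) (powF_blocks_len hlen g)
      hLlen h
    have hfg := List.ofFn_injective this
    funext i
    exact Subtype.ext (congrFun hfg i)

lemma powF_good {K : ℕ} (hK : 1 ≤ K) {G : SimpleGraph V} {F : Finset (List V)}
    (hgood : GoodF G F K) (j : ℕ) : GoodF G (powF F j) (K * j) := by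
  classical
  constructor
  · intro w hw
    rw [powF, Finset.mem_image] at hw
    obtain ⟨f, -, rfl⟩ := hw
    rw [join_length _ (powF_blocks_len hgood.1 f)]
    simp
  · intro x hx y hy hne
    rw [powF, Finset.mem_image] at hx hy
    obtain ⟨f, -, rfl⟩ := hx
    obtain ⟨g, -, rfl⟩ := hy
    set Lf := List.ofFn (fun i => ((f i : List V))) with hLf
    set Lg := List.ofFn (fun i => ((g i : List V))) with hLg
    have hfg : f ≠ g := by rintro rfl; exact hne rfl
    have : ∃ jd : Fin j, f jd ≠ g jd := by
      by_contra hall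
      push_neg at hall
      exact hfg (funext hall)
    obtain ⟨jd, hjd⟩ := this
    have hvne : ((f jd : List V)) ≠ ((g jd : List V)) := fun h => hjd (Subtype.ext h)
    obtain ⟨i, hi1, hi2, hget, hnadj⟩ := hgood.2 _ (f jd).2 _ (g jd).2 hvne
    have hiK : i < K := by rw [← hgood.1 _ (f jd).2]; exact hi1
    have hLflen : Lf.flatten.length = K * j := by
      rw [join_length _ (powF_blocks_len hgood.1 f)]; simp [Lf]
    have hLglen : Lg.flatten.length = K * j := by
      rw [join_length _ (powF_blocks_len hgood.1 g)]; simp [Lg]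
    have hsm : ((jd : ℕ) + 1) * K = (jd : ℕ) * K + K := by ring
    have hmul : ((jd : ℕ) + 1) * K ≤ j * K := Nat.mul_le_mul_right _ jd.2
    have hcj : j * K = K * j := Nat.mul_comm _ _
    have hidxf : (jd : ℕ) * K + i < Lf.flatten.length := by rw [hLflen]; omega
    have hidxg : (jd : ℕ) * K + i < Lg.flatten.length := by rw [hLglen]; omega
    refine ⟨(jd : ℕ) * K + i, hidxf, hidxg, ?_⟩
    have hjf : (jd : ℕ) < Lf.length := by simp [Lf]
    have hjg : (jd : ℕ) < Lg.length := by simp [Lg]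
    have h2f : i < (Lf[(jd : ℕ)]'hjf).length := by
      have : Lf[(jd : ℕ)]'hjf = ((f jd : List V)) := by simp [Lf]
      rw [this]; exact hi1
    have h2g : i < (Lg[(jd : ℕ)]'hjg).length := by
      have : Lg[(jd : ℕ)]'hjg = ((g jd : List V)) := by simp [Lg]
      rw [this]; exact hi2
    have keyf := join_getElem Lf (powF_blocks_len hgood.1 f) (jd : ℕ) i hjf hiK hidxf h2f
    have keyg := join_getElem Lg (powF_blocks_len hgood.1 g) (jd : ℕ) i hjg hiK hidxg h2g
    have hvf : Lf[(jd : ℕ)]'hjf = ((f jd : List V)) := by simp [Lf]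
    have hvg : Lg[(jd : ℕ)]'hjg = ((g jd : List V)) := by simp [Lg]
    simp only [List.get_eq_getElem]
    rw [keyf, keyg]
    simp only [hvf, hvg]
    constructor
    · simpa only [List.get_eq_getElem] using hget
    · simpa only [List.get_eq_getElem] using hnadj

end GoodSets

section Shannon
variable {V : Type*} [Fintype V]

lemma exists_good (G : SimpleGraph V) {θ : ℝ} (hθ0 : 0 < θ)
    (hθ : θ < shannonCapacity G) :
    ∃ (K : ℕ) (F : Finset (List V)), 1 ≤ K ∧ GoodF G F K ∧ θ ^ K < (F.card : ℝ) := by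
  classical
  rw [shannonCapacity] at hθ
  obtain ⟨n, hn⟩ := exists_lt_of_lt_ciSup hθ
  set K := n + 1 with hKdef
  set α := indepNum (strongPow G K) with hα
  have hθK : θ ^ K < (α : ℝ) := by
    have h1 : θ ^ K < ((α : ℝ) ^ (1 / ((n : ℝ) + 1))) ^ K :=
      pow_lt_pow_left₀ hn hθ0.le (by omega)
    refine h1.trans_le ?_
    rw [← Real.rpow_natCast ((α : ℝ) ^ (1 / ((n : ℝ) + 1))) K,
      ← Real.rpow_mul (Nat.cast_nonneg _)]
    have : 1 / ((n : ℝ) + 1) * (K : ℝ) = 1 := by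
      rw [hKdef]
      push_cast
      field_simp
    rw [this, Real.rpow_one]
  -- extract an independent set of size α
  have hmem : α ∈ {k | ∃ s : Set (Fin K → V),
      (s.Pairwise fun a b => ¬ (strongPow G K).Adj a b) ∧ s.ncard = k} := by
    rw [hα, indepNum]
    apply Nat.sSup_mem
    · exact ⟨0, ∅, Set.pairwise_empty _, by simp⟩
    · refine ⟨Fintype.card (Fin K → V), ?_⟩
      rintro k ⟨s, -, rfl⟩
      calc s.ncard ≤ (Set.univ : Set (Fin K → V)).ncard :=
            Set.ncard_le_ncard (Set.subset_univ s) Set.finite_univ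
        _ = Fintype.card (Fin K → V) := by
            rw [Set.ncard_univ, Nat.card_eq_fintype_card]
  obtain ⟨s, hpair, hncard⟩ := hmem
  set F : Finset (List V) := (s.toFinite.toFinset).image (fun v => List.ofFn v) with hF
  have hFcard : F.card = α := by
    rw [hF, Finset.card_image_of_injective _ List.ofFn_injective,
      ← Set.ncard_eq_toFinset_card _ s.toFinite, hncard]
  refine ⟨K, F, by omega, ⟨?_, ?_⟩, by rw [hFcard]; exact hθK⟩
  · intro w hw
    rw [hF, Finset.mem_image] at hw
    obtain ⟨v, -, rfl⟩ := hw
    simp [hKdef]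
  · intro x hx y hy hne
    rw [hF, Finset.mem_image] at hx hy
    obtain ⟨u, hu, rfl⟩ := hx
    obtain ⟨v, hv, rfl⟩ := hy
    rw [Set.Finite.mem_toFinset] at hu hv
    have huv : u ≠ v := fun h => hne (by rw [h])
    have hnadj : ¬ (strongPow G K).Adj u v := hpair hu hv huv
    have : ¬ ∀ i, u i = v i ∨ G.Adj (u i) (v i) := by
      intro hall
      exact hnadj ⟨huv, hall⟩
    push_neg at this
    obtain ⟨i, hi1', hi2'⟩ := this
    refine ⟨(i : ℕ), (by simp only [List.length_ofFn]; exact i.2), (by simp only [List.length_ofFn]; exact i.2), ?_⟩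
    have hgu : (List.ofFn u).get ⟨(i : ℕ), (by simp only [List.length_ofFn]; exact i.2)⟩ = u i := by
      rw [List.get_ofFn]
      exact congrArg u (Fin.ext (by simp))
    have hgv : (List.ofFn v).get ⟨(i : ℕ), (by simp only [List.length_ofFn]; exact i.2)⟩ = v i := by
      rw [List.get_ofFn]
      exact congrArg v (Fin.ext (by simp))
    rw [hgu, hgv]
    exact ⟨hi1', hi2'⟩

lemma exists_embed (P : Finset (List V)) (M : ℕ)
    (h : P.card ≤ Fintype.card V ^ M) : Nonempty (↥P ↪ (Fin M → V)) := by
  apply Function.Embedding.nonempty_of_card_le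
  rw [Fintype.card_coe, Fintype.card_fun]
  simpa using h

end Shannon


section Endgame
variable {V : Type*} [Fintype V]

lemma stepA (G : SimpleGraph V) (hcard : 2 ≤ Fintype.card V) {θ : ℝ}
    (hθ1 : 1 < θ) (hθΘ : θ < shannonCapacity G) :
    1 ≤ revCapacity G ∧
    Real.log θ * Real.log (Fintype.card V) / (Real.log (Fintype.card V) + Real.log θ)
      ≤ Real.log (revCapacity G) := by
  classical
  have hlq : 0 < Real.log (Fintype.card V) := Real.log_pos (by exact_mod_cast hcard)
  have hlθ : 0 < Real.log θ := Real.log_pos hθ1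
  obtain ⟨K, F, hK, hgood, hcard_gt⟩ := exists_good G (by linarith) hθΘ
  set N₀ := F.card with hN₀
  have hθKpos : (0:ℝ) < θ ^ K := pow_pos (by linarith) K
  have hθK1 : (1:ℝ) < θ ^ K := by
    calc (1:ℝ) = 1 ^ K := (one_pow K).symm
      _ < θ ^ K := pow_lt_pow_left₀ hθ1 zero_le_one (by omega)
  have hN₀R1 : (1:ℝ) < (N₀ : ℝ) := hθK1.trans hcard_gt
  have hN₀1 : 1 ≤ N₀ := by exact_mod_cast hN₀R1.le
  set L := Real.log (N₀ : ℝ) with hLdef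
  have hL0 : 0 < L := Real.log_pos hN₀R1
  have hLK : (K : ℝ) * Real.log θ ≤ L := by
    have hlog := (Real.log_le_log_iff hθKpos (by linarith)).mpr hcard_gt.le
    rwa [Real.log_pow] at hlog
  set lq := Real.log (Fintype.card V) with hlqdef
  have perj : ∀ j : ℕ, 1 ≤ j →
      L / ((K : ℝ) + L / lq + 1 / (j : ℝ)) ≤ Real.log (revCapacity G) ∧
      1 ≤ revCapacity G := by
    intro j hj
    have hjR : (0:ℝ) < (j : ℝ) := by exact_mod_cast hj
    set Mj := max 1 (Nat.ceil ((j : ℝ) * L / lq)) with hMjdef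
    have hMj1 : 1 ≤ Mj := le_max_left _ _
    have hMjge : (j : ℝ) * L / lq ≤ (Mj : ℝ) := by
      calc (j : ℝ) * L / lq ≤ (Nat.ceil ((j : ℝ) * L / lq) : ℝ) := Nat.le_ceil _
        _ ≤ (Mj : ℝ) := by exact_mod_cast Nat.le_max_right 1 _
    have hMjle : (Mj : ℝ) ≤ (j : ℝ) * L / lq + 1 := by
      have h0 : (0:ℝ) ≤ (j : ℝ) * L / lq := by positivity
      have h1 : ((Nat.ceil ((j : ℝ) * L / lq)) : ℝ) < (j : ℝ) * L / lq + 1 :=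
        Nat.ceil_lt_add_one h0
      rcases max_choice 1 (Nat.ceil ((j : ℝ) * L / lq)) with h | h
      · rw [hMjdef, h]; push_cast; linarith
      · rw [hMjdef, h]; linarith
    have hcard_le : (powF F j).card ≤ Fintype.card V ^ Mj := by
      rw [powF_card hK F hgood.1 j]
      have hreal : ((N₀ : ℝ)) ^ j ≤ ((Fintype.card V : ℝ)) ^ Mj := by
        have hlog : Real.log ((N₀:ℝ) ^ j) ≤ Real.log (((Fintype.card V : ℝ)) ^ Mj) := by
          rw [Real.log_pow, Real.log_pow]
          have hjL : (j : ℝ) * L ≤ (Mj : ℝ) * lq := by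
            rw [div_le_iff₀ hlq] at hMjge
            linarith
          exact hjL
        have hp1 : (0:ℝ) < (N₀:ℝ) ^ j := by positivity
        have hp2 : (0:ℝ) < ((Fintype.card V : ℝ)) ^ Mj := by positivity
        exact (Real.log_le_log_iff hp1 hp2).mp hlog
      exact_mod_cast hreal
    obtain ⟨e⟩ := exists_embed (powF F j) Mj hcard_le
    have hgoodP := powF_good hK hgood j
    have hNp : 1 ≤ (powF F j).card := by
      rw [powF_card hK F hgood.1 j]
      exact Nat.one_le_pow _ _ (by omega : 0 < N₀)
    have hKj : 1 ≤ K * j := Nat.mul_pos (by omega) (by omega)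
    have hrate := rate_le_revCapacity G hcard (K * j) Mj hKj hMj1
      (powF F j) hNp hgoodP.1 hgoodP.2 e
    set c := ((powF F j).card : ℝ) ^ (1 / ((Mj : ℝ) + ((K * j : ℕ) : ℝ))) with hcdef
    have hNpj : (0:ℝ) < ((powF F j).card : ℝ) := by exact_mod_cast hNp
    have hcpos : 0 < c := Real.rpow_pos_of_pos hNpj _
    have hlogc : Real.log c =
        (1 / ((Mj : ℝ) + ((K * j : ℕ) : ℝ))) * Real.log ((powF F j).card : ℝ) :=
      Real.log_rpow hNpj _
    have hlogcard : Real.log ((powF F j).card : ℝ) = (j : ℝ) * L := by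
      rw [powF_card hK F hgood.1 j]
      push_cast
      rw [Real.log_pow]
    have hc1 : 1 ≤ c := by
      rw [← Real.exp_log hcpos, ← Real.exp_zero]
      apply Real.exp_le_exp.mpr
      rw [hlogc, hlogcard]
      positivity
    have h1rev : 1 ≤ revCapacity G := hc1.trans hrate
    have hrevpos : 0 < revCapacity G := lt_of_lt_of_le one_pos h1rev
    have hlogrev : Real.log c ≤ Real.log (revCapacity G) :=
      (Real.log_le_log_iff hcpos hrevpos).mpr hrate
    have hD1 : (0:ℝ) < (K : ℝ) + L / lq + 1 / (j : ℝ) := by positivity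
    have hD2 : (0:ℝ) < (Mj : ℝ) + ((K * j : ℕ) : ℝ) := by positivity
    have hjD1 : (Mj : ℝ) + ((K * j : ℕ) : ℝ) ≤
        (j : ℝ) * ((K : ℝ) + L / lq + 1 / (j : ℝ)) := by
      have hexp : (j : ℝ) * ((K : ℝ) + L / lq + 1 / (j : ℝ)) =
          (K : ℝ) * (j : ℝ) + (j : ℝ) * L / lq + 1 := by
        field_simp
      rw [hexp]
      push_cast
      linarith
    have harith : L / ((K : ℝ) + L / lq + 1 / (j : ℝ)) ≤
        ((j : ℝ) * L) / ((Mj : ℝ) + ((K * j : ℕ) : ℝ)) := by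
      rw [div_le_div_iff₀ hD1 hD2]
      calc L * ((Mj : ℝ) + ((K * j : ℕ) : ℝ)) ≤
          L * ((j : ℝ) * ((K : ℝ) + L / lq + 1 / (j : ℝ))) :=
            mul_le_mul_of_nonneg_left hjD1 hL0.le
        _ = (j : ℝ) * L * ((K : ℝ) + L / lq + 1 / (j : ℝ)) := by ring
    refine ⟨?_, h1rev⟩
    calc L / ((K : ℝ) + L / lq + 1 / (j : ℝ)) ≤
        ((j : ℝ) * L) / ((Mj : ℝ) + ((K * j : ℕ) : ℝ)) := harith
      _ = Real.log c := by rw [hlogc, hlogcard]; ring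
      _ ≤ Real.log (revCapacity G) := hlogrev
  have hlim : Filter.Tendsto (fun j : ℕ => L / ((K : ℝ) + L / lq + 1 / (j : ℝ)))
      Filter.atTop (nhds (L / ((K : ℝ) + L / lq))) := by
    have hden : Filter.Tendsto (fun j : ℕ => (K : ℝ) + L / lq + 1 / (j : ℝ))
        Filter.atTop (nhds ((K : ℝ) + L / lq + 0)) :=
      Filter.Tendsto.add tendsto_const_nhds tendsto_one_div_atTop_nhds_zero_nat
    rw [add_zero] at hden
    exact Filter.Tendsto.div tendsto_const_nhds hden (by positivity)
  have hlimle : L / ((K : ℝ) + L / lq) ≤ Real.log (revCapacity G) :=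
    le_of_tendsto hlim (Filter.eventually_atTop.mpr ⟨1, fun j hj => (perj j hj).1⟩)
  refine ⟨(perj 1 le_rfl).2, ?_⟩
  have hK1R : (1:ℝ) ≤ (K : ℝ) := by exact_mod_cast hK
  have hA : L / ((K : ℝ) + L / lq) = L * lq / ((K : ℝ) * lq + L) := by
    rw [div_eq_div_iff (by positivity) (by positivity)]
    field_simp
  have hfinal : Real.log θ * lq / (lq + Real.log θ) ≤ L * lq / ((K : ℝ) * lq + L) := by
    rw [div_le_div_iff₀ (by positivity) (by positivity)]
    nlinarith [mul_le_mul_of_nonneg_right hLK (mul_pos hlq hlq).le, hlθ, hlq, hL0, hK1R]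
  calc Real.log θ * lq / (lq + Real.log θ) ≤ L * lq / ((K : ℝ) * lq + L) := hfinal
    _ = L / ((K : ℝ) + L / lq) := hA.symm
    _ ≤ Real.log (revCapacity G) := hlimle

end Endgame

end RevCapProof

/-- lower bound for the reversible capacity in terms of the Shannon
capacity: `log Θ_REV ≥ log|G| log Θ / (log|G| + log Θ)`, equivalently
`Θ_REV ≥ Θ^{log|G|/(log|G| + log Θ)}`. -/
theorem revCapacity_lower_bound {V : Type*} [Fintype V] (G : SimpleGraph V)
    (hcard : 2 ≤ Fintype.card V) (hΘ : 1 < shannonCapacity G) :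
    Real.log (revCapacity G) ≥
      Real.log (Fintype.card V) * Real.log (shannonCapacity G) /
        (Real.log (Fintype.card V) + Real.log (shannonCapacity G)) ∧
    revCapacity G ≥
      shannonCapacity G ^
        (Real.log (Fintype.card V) /
          (Real.log (Fintype.card V) + Real.log (shannonCapacity G))) := by
  classical
  have hlq : 0 < Real.log (Fintype.card V) := Real.log_pos (by exact_mod_cast hcard)
  have hΘ0 : 0 < shannonCapacity G := lt_trans one_pos hΘ
  have hlΘ : 0 < Real.log (shannonCapacity G) := Real.log_pos hΘ
  have hmain : Real.log (Fintype.card V) * Real.log (shannonCapacity G) /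
      (Real.log (Fintype.card V) + Real.log (shannonCapacity G)) ≤
      Real.log (revCapacity G) := by
    have hcont : ContinuousAt (fun θ : ℝ =>
        Real.log θ * Real.log (Fintype.card V) /
          (Real.log (Fintype.card V) + Real.log θ)) (shannonCapacity G) := by
      have hlog : ContinuousAt Real.log (shannonCapacity G) :=
        Real.continuousAt_log hΘ0.ne'
      exact (hlog.mul continuousAt_const).div (continuousAt_const.add hlog)
        (by positivity)
    have htend := hcont.continuousWithinAt (s := Set.Iio (shannonCapacity G))
    have hev : ∀ᶠ θ in nhdsWithin (shannonCapacity G) (Set.Iio (shannonCapacity G)),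
        Real.log θ * Real.log (Fintype.card V) /
          (Real.log (Fintype.card V) + Real.log θ) ≤ Real.log (revCapacity G) := by
      have h1 : ∀ᶠ θ in nhdsWithin (shannonCapacity G) (Set.Iio (shannonCapacity G)),
          1 < θ := (eventually_gt_nhds hΘ).filter_mono nhdsWithin_le_nhds
      have h2 : ∀ᶠ θ in nhdsWithin (shannonCapacity G) (Set.Iio (shannonCapacity G)),
          θ ∈ Set.Iio (shannonCapacity G) := eventually_mem_nhdsWithin
      filter_upwards [h1, h2] with θ h1' h2'
      exact (RevCapProof.stepA G hcard h1' h2').2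
    have hle := le_of_tendsto htend hev
    calc Real.log (Fintype.card V) * Real.log (shannonCapacity G) /
        (Real.log (Fintype.card V) + Real.log (shannonCapacity G)) =
        Real.log (shannonCapacity G) * Real.log (Fintype.card V) /
        (Real.log (Fintype.card V) + Real.log (shannonCapacity G)) := by ring
      _ ≤ Real.log (revCapacity G) := hle
  refine ⟨hmain, ?_⟩
  have h1rev : 1 ≤ revCapacity G := by
    have hθ1 : 1 < (1 + shannonCapacity G) / 2 := by linarith
    have hθ2 : (1 + shannonCapacity G) / 2 < shannonCapacity G := by linarith
    exact (RevCapProof.stepA G hcard hθ1 hθ2).1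
  have hrpos : 0 < revCapacity G := lt_of_lt_of_le one_pos h1rev
  have hΘt_pos : 0 < shannonCapacity G ^
      (Real.log (Fintype.card V) /
        (Real.log (Fintype.card V) + Real.log (shannonCapacity G))) :=
    Real.rpow_pos_of_pos hΘ0 _
  have hlogle : Real.log (shannonCapacity G ^
      (Real.log (Fintype.card V) /
        (Real.log (Fintype.card V) + Real.log (shannonCapacity G)))) ≤
      Real.log (revCapacity G) := by
    rw [Real.log_rpow hΘ0]
    calc Real.log (Fintype.card V) /
          (Real.log (Fintype.card V) + Real.log (shannonCapacity G)) *
          Real.log (shannonCapacity G) =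
        Real.log (Fintype.card V) * Real.log (shannonCapacity G) /
          (Real.log (Fintype.card V) + Real.log (shannonCapacity G)) := by ring
      _ ≤ Real.log (revCapacity G) := hmain
  exact (Real.log_le_log_iff hΘt_pos hrpos).mp hlogle
end
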